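/- arXiv:math/0409257 — 6 statements merged into one kernel-verified Lean document; each statement's English description precedes it below -/
import Mathlib

section
/- Let f ∈ R₁ be an irreducible polynomial which is nonhyperbolic (f has a root of absolute value 1) and not cyclotomic (no root of f is a root of unity). Let α = α_{R₁/(f)} be the corresponding automorphism of the compact connected abelian group X = X_{R₁/(f)}. Then the homoclinic group of α is trivial: if x ∈ X satisfies α^n x → 0 in X as |n| → ∞, then x = 0. -/
open Filter Topology Polynomial

noncomputable section
namespace HomoclinicAux

/-- The shift operator on two-sided complex sequences. -/
def shift : Module.End ℂ (ℤ → ℂ) where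
  toFun z := fun n => z (n + 1)
  map_add' _ _ := rfl
  map_smul' _ _ := rfl

lemma shift_apply (z : ℤ → ℂ) (n : ℤ) : shift z n = z (n + 1) := rfl

lemma shift_pow (k : ℕ) (z : ℤ → ℂ) (n : ℤ) : (shift ^ k) z n = z (n + k) := by
  induction k generalizing n with
  | zero => simp
  | succ k ih =>
    rw [pow_succ', Module.End.mul_apply, shift_apply, ih]
    congr 1
    push_cast
    ring

/-- `fac λ = τ - λ·id`. -/
def fac (l : ℂ) : Module.End ℂ (ℤ → ℂ) := shift - l • 1

lemma fac_apply (l : ℂ) (z : ℤ → ℂ) (n : ℤ) : fac l z n = z (n + 1) - l * z n := rfl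

lemma tendsto_shift {z : ℤ → ℂ} (hz : Tendsto z cofinite (𝓝 0)) :
    Tendsto (fun n => z (n + 1)) cofinite (𝓝 0) :=
  hz.comp (Function.Injective.tendsto_cofinite (add_left_injective 1))

lemma tendsto_fac (l : ℂ) {z : ℤ → ℂ} (hz : Tendsto z cofinite (𝓝 0)) :
    Tendsto (fac l z) cofinite (𝓝 0) := by
  have : (fac l z) = fun n => z (n + 1) - l * z n := rfl
  rw [this]
  simpa using (tendsto_shift hz).sub ((tendsto_const_nhds (x := l)).mul hz)

lemma tendsto_prod (L : List ℂ) {z : ℤ → ℂ} (hz : Tendsto z cofinite (𝓝 0)) :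
    Tendsto ((L.map fac).prod z) cofinite (𝓝 0) := by
  induction L with
  | nil => simpa using hz
  | cons a L ih =>
    rw [List.map_cons, List.prod_cons, Module.End.mul_apply]
    exact tendsto_fac a ih

lemma geom_zero {l : ℂ} {v : ℤ → ℂ} (hrec : ∀ n, v (n + 1) = l * v n)
    (hv : Tendsto v cofinite (𝓝 0)) : v = 0 := by
  rcases eq_or_ne l 0 with rfl | hl
  · funext n
    have := hrec (n - 1)
    simpa using this
  · have hzp : ∀ n : ℤ, v n = l ^ n * v 0 := by
      intro n
      induction n using Int.induction_on with
      | zero => simp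
      | succ k ih => rw [hrec, ih]; rw [zpow_add_one₀ hl]; ring
      | pred k ih =>
        have h1 := hrec (-(k:ℤ) - 1)
        rw [sub_add_cancel, ih] at h1
        have h2 : v (-(k:ℤ) - 1) = l⁻¹ * (l ^ (-(k:ℤ)) * v 0) := by
          rw [h1, inv_mul_cancel_left₀ hl]
        have h3 : v (-(k:ℤ) - 1) = l ^ (-(k:ℤ) - 1) * v 0 := by
          rw [h2, zpow_sub_one₀ hl]; ring
        simpa [show -((k:ℤ)+1) = -(k:ℤ)-1 by ring] using h3
    have h0 : v 0 = 0 := by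
      have h1 : Tendsto (fun k : ℕ => v k) atTop (𝓝 0) := by
        rw [← Nat.cofinite_eq_atTop]
        exact hv.comp (Function.Injective.tendsto_cofinite (fun a b h => by exact_mod_cast h))
      have h2 : Tendsto (fun k : ℕ => v (-(k:ℤ))) atTop (𝓝 0) := by
        rw [← Nat.cofinite_eq_atTop]
        refine hv.comp (Function.Injective.tendsto_cofinite ?_)
        intro a b h
        simpa using h
      have h3 : Tendsto (fun k : ℕ => v k * v (-(k:ℤ))) atTop (𝓝 0) := by
        simpa using h1.mul h2
      have h4 : ∀ k : ℕ, v k * v (-(k:ℤ)) = v 0 * v 0 := by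
        intro k
        rw [hzp k, hzp (-(k:ℤ)), zpow_neg]
        field_simp
      have h5 : Tendsto (fun _ : ℕ => v 0 * v 0) atTop (𝓝 0) := by
        rwa [show (fun k : ℕ => v k * v (-(k:ℤ))) = fun _ : ℕ => v 0 * v 0 from funext h4] at h3
      have := tendsto_nhds_unique h5 tendsto_const_nhds
      exact mul_self_eq_zero.mp this.symm
    funext n
    rw [hzp n, h0, mul_zero]
    rfl

lemma peel (L : List ℂ) : ∀ z : ℤ → ℂ, Tendsto z cofinite (𝓝 0) →
    (L.map fac).prod z = 0 → z = 0 := by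
  induction L with
  | nil => intro z _ h; simpa using h
  | cons a L ih =>
    intro z hz h
    rw [List.map_cons, List.prod_cons, Module.End.mul_apply] at h
    set v := (L.map fac).prod z with hv
    have hvt : Tendsto v cofinite (𝓝 0) := tendsto_prod L hz
    have hrec : ∀ n, v (n + 1) = a * v n := by
      intro n
      have h1 := congrFun h n
      rw [fac_apply] at h1
      simp only [Pi.zero_apply] at h1
      linear_combination h1
    exact ih z hz (geom_zero hrec hvt)

/-- Evaluation of a polynomial in the shift operator. -/
lemma aeval_shift_apply (p : Polynomial ℂ) (z : ℤ → ℂ) (n : ℤ) :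
    (Polynomial.aeval shift p) z n =
      ∑ k ∈ Finset.range (p.natDegree + 1), p.coeff k * z (n + k) := by
  rw [Polynomial.aeval_eq_sum_range]
  have h : ((∑ i ∈ Finset.range (p.natDegree + 1), p.coeff i • shift ^ i) z) n
      = ∑ i ∈ Finset.range (p.natDegree + 1), (p.coeff i • (shift ^ i) z) n := by
    rw [LinearMap.sum_apply]
    simp
  rw [h]
  refine Finset.sum_congr rfl fun k _ => ?_
  rw [Pi.smul_apply, shift_pow, smul_eq_mul]

/-- Key vanishing lemma: a null solution of the homogeneous recurrence is zero. -/
lemma null_solution_eq_zero (p : Polynomial ℂ) (hp : p ≠ 0) (z : ℤ → ℂ)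
    (hz : Tendsto z cofinite (𝓝 0))
    (hrec : ∀ j : ℤ, ∑ k ∈ Finset.range (p.natDegree + 1), p.coeff k * z (j + k) = 0) :
    z = 0 := by
  have hcard : Multiset.card p.roots = p.natDegree :=
    Polynomial.splits_iff_card_roots.mp (IsAlgClosed.splits p)
  set L := p.roots.toList with hL
  have hfac : Polynomial.C p.leadingCoeff * (L.map (fun a => X - C a)).prod = p := by
    have h1 := Polynomial.C_leadingCoeff_mul_prod_multiset_X_sub_C hcard
    have h2 : (Multiset.map (fun a => X - C a) p.roots).prod
        = (L.map (fun a => X - C a)).prod := by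
      conv_lhs => rw [← Multiset.coe_toList p.roots]
      rw [Multiset.map_coe, Multiset.prod_coe]
    rw [h2] at h1
    exact h1
  have happ : (Polynomial.aeval shift p) z = 0 := by
    funext n
    rw [aeval_shift_apply]
    exact hrec n
  have hfacEnd : Polynomial.aeval shift p
      = (algebraMap ℂ (Module.End ℂ (ℤ → ℂ)) p.leadingCoeff) * ((L.map fac)).prod := by
    conv_lhs => rw [← hfac]
    rw [map_mul, Polynomial.aeval_C, map_list_prod, List.map_map]
    have hmapeq : List.map (⇑(Polynomial.aeval shift) ∘ fun a => X - C a) L = List.map fac L :=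
      List.map_congr_left fun a _ => by
        show (Polynomial.aeval shift) (X - C a) = fac a
        rw [map_sub, Polynomial.aeval_X, Polynomial.aeval_C, fac,
          Module.algebraMap_end_eq_smul_id]
        rfl
    rw [hmapeq]
  have hlc : p.leadingCoeff ≠ 0 := Polynomial.leadingCoeff_ne_zero.mpr hp
  have hprod : (L.map fac).prod z = 0 := by
    have h3 := happ
    rw [hfacEnd] at h3
    have h2 : (algebraMap ℂ (Module.End ℂ (ℤ → ℂ)) p.leadingCoeff) (((L.map fac)).prod z) = 0 := by
      rw [← Module.End.mul_apply, h3]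
    rw [Module.algebraMap_end_eq_smul_id] at h2
    have h4 : p.leadingCoeff • (((L.map fac)).prod z) = 0 := h2
    rcases smul_eq_zero.mp h4 with h | h
    · exact absurd h hlc
    · exact h
  exact peel L z hz hprod

end HomoclinicAux

namespace HomoclinicAux

lemma tele (φ : ℤ → ℂ) (a : ℤ) : ∀ b : ℤ, a - 1 ≤ b →
    ∑ j ∈ Finset.Icc a b, (φ (j + 1) - φ j) = φ (b + 1) - φ a := by
  refine Int.le_induction ?_ ?_
  · rw [Finset.Icc_eq_empty (by omega)]
    simp [show a - 1 + 1 = a by ring]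
  · intro b hb ih
    have hins : Finset.Icc a (b + 1) = insert (b + 1) (Finset.Icc a b) := by
      ext j
      simp only [Finset.mem_Icc, Finset.mem_insert]
      omega
    rw [hins, Finset.sum_insert (by simp [Finset.mem_Icc]), ih]
    ring

lemma shift_sum (φ : ℤ → ℂ) (a b : ℤ) (hab : a - 1 ≤ b) (k : ℕ) :
    ∑ j ∈ Finset.Icc a b, φ (j + k)
      = ∑ j ∈ Finset.Icc a b, φ j + ∑ t ∈ Finset.range k, (φ (b + 1 + t) - φ (a + t)) := by
  set G : ℕ → ℂ := fun t => ∑ j ∈ Finset.Icc a b, φ (j + t) with hG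
  have hdiff : ∀ t : ℕ, G (t + 1) - G t = φ (b + 1 + t) - φ (a + t) := by
    intro t
    have h1 : G (t + 1) - G t = ∑ j ∈ Finset.Icc a b, (φ (j + t + 1) - φ (j + t)) := by
      rw [hG]
      simp only
      rw [← Finset.sum_sub_distrib]
      refine Finset.sum_congr rfl fun j _ => ?_
      congr 2
      push_cast
      ring
    have h2 := tele (fun i => φ (i + t)) a b hab
    rw [h1]
    calc ∑ j ∈ Finset.Icc a b, (φ (j + t + 1) - φ (j + t))
        = ∑ j ∈ Finset.Icc a b, (φ (j + 1 + t) - φ (j + t)) := by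
          refine Finset.sum_congr rfl fun j _ => ?_
          congr 2
          ring
      _ = φ (b + 1 + t) - φ (a + t) := h2
  have h3 : ∑ t ∈ Finset.range k, (G (t + 1) - G t) = G k - G 0 := Finset.sum_range_sub G k
  have h4 : ∑ t ∈ Finset.range k, (φ (b + 1 + t) - φ (a + t)) = G k - G 0 := by
    rw [← h3]
    exact Finset.sum_congr rfl fun t _ => (hdiff t).symm
  have hG0 : G 0 = ∑ j ∈ Finset.Icc a b, φ j := by
    rw [hG]
    refine Finset.sum_congr rfl fun j _ => ?_
    norm_num
  rw [h4, hG0]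
  show G k = _
  ring

lemma cesaro (m : ℕ) (fc : ℕ → ℂ) (ζ : ℂ) (hζ : ‖ζ‖ = 1)
    (hfζ : ∑ k ∈ Finset.range (m + 1), fc k * ζ ^ k = 0)
    (w : ℤ → ℂ) (hw : Tendsto w cofinite (𝓝 0))
    (g : ℤ → ℂ) (hg : ∀ j, g j = ∑ k ∈ Finset.range (m + 1), fc k * w (j + k))
    (A : ℕ) (hA : ∀ j : ℤ, (A : ℤ) < |j| → g j = 0) :
    ∑ j ∈ Finset.Icc (-(A : ℤ)) A, g j * ζ ^ (-j) = 0 := by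
  have hζ0 : ζ ≠ 0 := by
    intro h; rw [h] at hζ; simp at hζ
  set φ : ℤ → ℂ := fun i => w i * ζ ^ (-i) with hφ
  set T := ∑ j ∈ Finset.Icc (-(A : ℤ)) A, g j * ζ ^ (-j) with hT
  set S : ℕ → ℂ := fun N => ∑ j ∈ Finset.Icc (-(A : ℤ) - N) ((A : ℤ) + N), g j * ζ ^ (-j)
    with hS
  have hS_eq : ∀ N, S N = T := by
    intro N
    rw [hS, hT]
    refine (Finset.sum_subset ?_ ?_).symm
    · intro j hj
      simp only [Finset.mem_Icc] at *
      omega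
    · intro j hj hj2
      simp only [Finset.mem_Icc] at hj hj2
      have : (A : ℤ) < |j| := by
        rcases abs_cases j with ⟨h, _⟩ | ⟨h, _⟩ <;> omega
      rw [hA j this, zero_mul]
  have key : ∀ N : ℕ, S N = ∑ k ∈ Finset.range (m + 1), fc k * ζ ^ k *
      (∑ t ∈ Finset.range k, (φ ((A : ℤ) + N + 1 + t) - φ (-(A : ℤ) - N + t))) := by
    intro N
    set a : ℤ := -(A : ℤ) - N with ha
    set b : ℤ := (A : ℤ) + N with hb
    have hab : a - 1 ≤ b := by rw [ha, hb]; omega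
    have step1 : S N = ∑ k ∈ Finset.range (m + 1), fc k * ζ ^ k *
        (∑ j ∈ Finset.Icc a b, φ (j + k)) := by
      rw [hS]
      simp only
      have h1 : ∀ j : ℤ, g j * ζ ^ (-j)
          = ∑ k ∈ Finset.range (m + 1), fc k * ζ ^ k * φ (j + k) := by
        intro j
        rw [hg j, Finset.sum_mul]
        refine Finset.sum_congr rfl fun k _ => ?_
        rw [hφ]
        simp only
        have h2 : (ζ ^ (k : ℕ) : ℂ) * ζ ^ (-(j + (k:ℤ))) = ζ ^ (-j) := by
          rw [← zpow_natCast ζ k, ← zpow_add₀ hζ0]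
          congr 1
          ring
        rw [← h2]
        ring
      calc ∑ j ∈ Finset.Icc a b, g j * ζ ^ (-j)
          = ∑ j ∈ Finset.Icc a b, ∑ k ∈ Finset.range (m + 1), fc k * ζ ^ k * φ (j + k) :=
            Finset.sum_congr rfl fun j _ => h1 j
        _ = ∑ k ∈ Finset.range (m + 1), ∑ j ∈ Finset.Icc a b, fc k * ζ ^ k * φ (j + k) :=
            Finset.sum_comm
        _ = ∑ k ∈ Finset.range (m + 1), fc k * ζ ^ k * ∑ j ∈ Finset.Icc a b, φ (j + k) := by
            refine Finset.sum_congr rfl fun k _ => ?_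
            rw [Finset.mul_sum]
    have step2 : S N = (∑ k ∈ Finset.range (m + 1), fc k * ζ ^ k) *
          (∑ j ∈ Finset.Icc a b, φ j)
        + ∑ k ∈ Finset.range (m + 1), fc k * ζ ^ k *
          (∑ t ∈ Finset.range k, (φ (b + 1 + t) - φ (a + t))) := by
      rw [step1]
      rw [Finset.sum_mul, ← Finset.sum_add_distrib]
      refine Finset.sum_congr rfl fun k _ => ?_
      rw [shift_sum φ a b hab k]
      ring
    rw [step2, hfζ, zero_mul, zero_add]
  have hφnull : ∀ e : ℕ → ℤ, Function.Injective e →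
      Tendsto (fun N => φ (e N)) atTop (𝓝 0) := by
    intro e he
    have h1 : Tendsto (fun N => w (e N)) atTop (𝓝 0) := by
      rw [← Nat.cofinite_eq_atTop]
      exact hw.comp he.tendsto_cofinite
    rw [tendsto_zero_iff_norm_tendsto_zero]
    have h2 : (fun N => ‖φ (e N)‖) = fun N => ‖w (e N)‖ := by
      funext N
      rw [hφ]
      simp only [norm_mul, norm_zpow, hζ, one_zpow, mul_one]
    rw [h2]
    exact tendsto_zero_iff_norm_tendsto_zero.mp h1
  have hStendsto : Tendsto S atTop (𝓝 0) := by
    have h0 : S = fun N : ℕ => ∑ k ∈ Finset.range (m + 1), fc k * ζ ^ k *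
        (∑ t ∈ Finset.range k, (φ ((A : ℤ) + N + 1 + t) - φ (-(A : ℤ) - N + t))) :=
      funext key
    rw [h0]
    have : (0 : ℂ) = ∑ k ∈ Finset.range (m + 1), fc k * ζ ^ k * (0 : ℂ) := by simp
    rw [this]
    refine tendsto_finset_sum _ fun k _ => ?_
    refine Tendsto.const_mul _ ?_
    have : (0 : ℂ) = ∑ t ∈ Finset.range k, ((0:ℂ) - 0) := by simp
    rw [this]
    refine tendsto_finset_sum _ fun t _ => ?_
    refine Tendsto.sub ?_ ?_
    · exact hφnull (fun N => (A : ℤ) + N + 1 + t) (fun p q h => by dsimp only at h; omega)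
    · exact hφnull (fun N => -(A : ℤ) - N + t) (fun p q h => by dsimp only at h; omega)
  have hTconst : Tendsto S atTop (𝓝 T) := by
    rw [show S = fun _ => T from funext hS_eq]
    exact tendsto_const_nhds
  exact (tendsto_nhds_unique hTconst hStendsto)

end HomoclinicAux

end

set_option maxHeartbeats 1000000 in
/-- An irreducible, nonhyperbolic, noncyclotomic `f ∈ ℤ[u^{±1}]` (normalized as an
integer polynomial with nonzero constant term) gives rise to the automorphism
`α = α_{R₁/(f)}` of `X = X_{R₁/(f)} = ker f(τ) ⊆ 𝕋^ℤ` (restriction of the shift `τ`).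
Every `α`-homoclinic point of `X` is `0`. -/
theorem homoclinic_group_trivial
    (f : Polynomial ℤ) (m : ℕ) (hm : 0 < m) (hdeg : f.natDegree = m)
    (hlead : 0 < f.leadingCoeff) (hconst : f.coeff 0 ≠ 0) (hirr : Irreducible f)
    (hnonhyp : ∃ z : ℂ, Polynomial.aeval z f = 0 ∧ ‖z‖ = 1)
    (hnoncyc : ¬ ∃ z : ℂ, Polynomial.aeval z f = 0 ∧ ∃ n : ℕ, 0 < n ∧ z ^ n = 1)
    (x : ℤ → AddCircle (1 : ℝ))
    (hx : ∀ j : ℤ, ∑ k ∈ Finset.range (m + 1), f.coeff k • x (j + (k : ℤ)) = 0)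
    (hhom : Tendsto (fun n : ℤ => (fun j : ℤ => x (j + n)))
      cofinite (𝓝 (0 : ℤ → AddCircle (1 : ℝ)))) :
    x = 0 := by
  classical
  have hf0 : f ≠ 0 := fun h => by simp [h] at hlead
  haveI : Fact ((0:ℝ) < 1) := ⟨zero_lt_one⟩
  set e := AddCircle.equivIco (1:ℝ) (-(1/2)) with he
  have hesymm : ∀ y, e.symm y = (((y : ℝ)) : AddCircle (1:ℝ)) := fun _ => rfl
  set w : ℤ → ℝ := fun n => (e (x n) : ℝ) with hwdef
  have hw_mem : ∀ n, w n ∈ Set.Ico (-(1/2) : ℝ) (-(1/2) + 1) := fun n => (e (x n)).2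
  have hwx : ∀ n, ((w n : ℝ) : AddCircle (1:ℝ)) = x n := by
    intro n
    rw [← hesymm]
    exact e.symm_apply_apply _
  -- x tends to 0
  have hx0 : Tendsto x cofinite (𝓝 (0 : AddCircle (1:ℝ))) := by
    have h := ((continuous_apply (0:ℤ)).tendsto (0 : ℤ → AddCircle (1:ℝ))).comp hhom
    have heq : ((fun p : ℤ → AddCircle (1:ℝ) => p 0) ∘ (fun n : ℤ => fun j : ℤ => x (j + n)))
        = x := by
      funext n; simp [Function.comp]
    rwa [heq] at h
  -- -1/2 is not 0 in the circle
  have hne : (0 : AddCircle (1:ℝ)) ≠ ((-(1/2) : ℝ) : AddCircle (1:ℝ)) := by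
    intro h0
    have h1 : ((-(1/2) : ℝ) : AddCircle (1:ℝ)) = 0 := h0.symm
    rw [AddCircle.coe_eq_zero_iff] at h1
    obtain ⟨n, hn⟩ := h1
    rw [zsmul_eq_mul, mul_one] at hn
    have : (2 * n : ℤ) = (-1 : ℤ) := by
      have : ((2 * n : ℤ) : ℝ) = ((-1 : ℤ) : ℝ) := by push_cast; linarith
      exact_mod_cast this
    omega
  have hw0 : (e 0 : ℝ) = 0 := by
    have h1 : ((e 0 : ℝ) : AddCircle (1:ℝ)) = 0 := by
      rw [← hesymm]; exact e.symm_apply_apply _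
    rw [AddCircle.coe_eq_zero_iff] at h1
    obtain ⟨n, hn⟩ := h1
    rw [zsmul_eq_mul, mul_one] at hn
    have hmem := (e 0).2
    rw [← hn] at hmem
    obtain ⟨hl, hr⟩ := hmem
    have h2 : (-1 : ℤ) < n := by exact_mod_cast lt_of_lt_of_le (by norm_num : (-1:ℝ) < -(1/2)) hl
    have h3 : n < (1 : ℤ) := by exact_mod_cast lt_of_lt_of_le hr (by norm_num : (-(1/2):ℝ)+1 ≤ 1)
    have : n = 0 := by omega
    rw [this] at hn
    simpa using hn.symm
  have hwt : Tendsto w cofinite (𝓝 (0:ℝ)) := by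
    have hcont : ContinuousAt (fun q : AddCircle (1:ℝ) => (e q : ℝ)) 0 :=
      continuous_subtype_val.continuousAt.comp (AddCircle.continuousAt_equivIco 1 _ hne)
    have h := hcont.tendsto.comp hx0
    rw [hw0] at h
    exact h
  -- shifted tendsto
  have hsh : ∀ k : ℕ, Tendsto (fun j : ℤ => w (j + k)) cofinite (𝓝 (0:ℝ)) :=
    fun k => hwt.comp ((add_left_injective ((k:ℤ))).tendsto_cofinite)
  -- y and the integer sequence g
  set y : ℤ → ℝ := fun j => ∑ k ∈ Finset.range (m+1), (f.coeff k : ℝ) * w (j + k) with hydef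
  have hyzero : ∀ j, ((y j : ℝ) : AddCircle (1:ℝ)) = 0 := by
    intro j
    set π : ℝ →+ AddCircle (1:ℝ) := QuotientAddGroup.mk' _ with hπ
    have hπc : ∀ r : ℝ, π r = ((r : ℝ) : AddCircle (1:ℝ)) := fun r => rfl
    have h1 : ((y j : ℝ) : AddCircle (1:ℝ)) = π (y j) := rfl
    rw [h1, hydef]
    simp only
    rw [map_sum]
    have h2 : ∀ k ∈ Finset.range (m+1), π ((f.coeff k : ℝ) * w (j + k))
        = f.coeff k • x (j + (k:ℤ)) := by
      intro k _
      rw [← zsmul_eq_mul, map_zsmul, hπc, hwx]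
    rw [Finset.sum_congr rfl h2]
    exact hx j
  have hex : ∀ j, ∃ n : ℤ, (n : ℝ) = y j := by
    intro j
    have := (AddCircle.coe_eq_zero_iff (1:ℝ)).mp (hyzero j)
    obtain ⟨n, hn⟩ := this
    exact ⟨n, by rwa [zsmul_eq_mul, mul_one] at hn⟩
  choose g hg using hex
  have hyt : Tendsto y cofinite (𝓝 (0:ℝ)) := by
    rw [hydef]
    have h0 : (0:ℝ) = ∑ k ∈ Finset.range (m+1), (f.coeff k : ℝ) * 0 := by simp
    rw [h0]
    exact tendsto_finset_sum _ fun k _ => (hsh k).const_mul _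
  have hgev : ∀ᶠ j in (cofinite : Filter ℤ), g j = 0 := by
    have h1 : ∀ᶠ j in (cofinite : Filter ℤ), |y j| < 1 := by
      have hmem : {r : ℝ | |r| < 1} ∈ 𝓝 (0:ℝ) := by
        have := Metric.ball_mem_nhds (0:ℝ) one_pos
        simpa [Metric.ball, Real.dist_eq] using this
      exact hyt hmem
    filter_upwards [h1] with j hj
    have h2 : |(g j : ℝ)| < 1 := by rw [hg j]; exact hj
    have h3 : |g j| < 1 := by exact_mod_cast h2
    rcases abs_cases (g j) with ⟨h4, _⟩ | ⟨h4, _⟩ <;> omega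
  have hgfin : {j : ℤ | g j ≠ 0}.Finite := Filter.eventually_cofinite.mp hgev
  set A : ℕ := hgfin.toFinset.sup (fun j => j.natAbs) with hA_def
  have hA : ∀ j : ℤ, (A:ℤ) < |j| → g j = 0 := by
    intro j hj
    by_contra hne2
    have hjmem : j ∈ hgfin.toFinset := hgfin.mem_toFinset.mpr hne2
    have h1 : j.natAbs ≤ A := Finset.le_sup (f := fun j : ℤ => j.natAbs) hjmem
    have h2 : |j| ≤ (A:ℤ) := by
      rw [Int.abs_eq_natAbs]
      exact_mod_cast h1
    omega
  -- the unimodular root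
  obtain ⟨ζ, hζroot, hζabs⟩ := hnonhyp
  have hζ0 : ζ ≠ 0 := by intro h; rw [h] at hζabs; simp at hζabs
  have hfζ : ∑ k ∈ Finset.range (m + 1), ((f.coeff k : ℂ)) * ζ ^ k = 0 := by
    have h1 := Polynomial.aeval_eq_sum_range (R := ℤ) (p := f) ζ
    rw [hζroot, hdeg] at h1
    have h2 : ∀ k ∈ Finset.range (m+1), f.coeff k • ζ ^ k = ((f.coeff k : ℂ)) * ζ ^ k :=
      fun k _ => zsmul_eq_mul _ _
    rw [Finset.sum_congr rfl h2] at h1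
    exact h1.symm
  -- complexified data
  have hwc : Tendsto (fun n => ((w n : ℝ) : ℂ)) cofinite (𝓝 (0:ℂ)) := by
    have := Complex.continuous_ofReal.continuousAt.tendsto.comp hwt
    rw [Complex.ofReal_zero] at this; exact this
  have hgc : ∀ j : ℤ, ((g j : ℤ) : ℂ) = ∑ k ∈ Finset.range (m + 1),
      ((f.coeff k : ℂ)) * ((w (j + k) : ℝ) : ℂ) := by
    intro j
    have h1 : ((g j : ℤ) : ℝ) = ∑ k ∈ Finset.range (m+1), (f.coeff k : ℝ) * w (j + k) := hg j
    have h2 := congrArg (fun r : ℝ => (r : ℂ)) h1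
    push_cast at h2 ⊢
    exact h2
  have hT : ∑ j ∈ Finset.Icc (-(A : ℤ)) A, ((g j : ℤ) : ℂ) * ζ ^ (-j) = 0 := by
    refine HomoclinicAux.cesaro m (fun k => ((f.coeff k : ℂ))) ζ hζabs hfζ
      (fun n => ((w n : ℝ) : ℂ)) hwc (fun j => ((g j : ℤ) : ℂ)) hgc A ?_
    intro j hj
    show ((g j : ℤ) : ℂ) = 0
    rw [hA j hj]
    simp
  -- the integer polynomial P
  set P : Polynomial ℤ := ∑ i ∈ Finset.range (2*A+1), Polynomial.monomial i (g ((A:ℤ) - i))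
    with hPdef
  have hPcoeff : ∀ n : ℕ, P.coeff n = g ((A:ℤ) - n) := by
    intro n
    rw [hPdef, Polynomial.finset_sum_coeff]
    have h1 : ∀ i ∈ Finset.range (2*A+1),
        (Polynomial.monomial i (g ((A:ℤ) - i))).coeff n
          = if i = n then g ((A:ℤ) - i) else 0 :=
      fun i _ => Polynomial.coeff_monomial
    rw [Finset.sum_congr rfl h1, Finset.sum_ite_eq' (Finset.range (2*A+1)) n _]
    by_cases hn : n ∈ Finset.range (2*A+1)
    · rw [if_pos hn]
    · rw [if_neg hn]
      rw [Finset.mem_range] at hn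
      have : (A:ℤ) < |(A:ℤ) - n| := by
        rcases abs_cases ((A:ℤ) - n) with ⟨h, _⟩ | ⟨h, _⟩ <;> omega
      rw [hA _ this]
  have hPaeval : Polynomial.aeval ζ P = 0 := by
    rw [hPdef, map_sum]
    have h1 : ∀ i ∈ Finset.range (2*A+1),
        Polynomial.aeval ζ (Polynomial.monomial i (g ((A:ℤ) - i)))
          = ((g ((A:ℤ) - i) : ℤ) : ℂ) * ζ ^ i := by
      intro i _
      rw [Polynomial.aeval_monomial]
      norm_num
    rw [Finset.sum_congr rfl h1]
    have h2 : ∑ i ∈ Finset.range (2*A+1), ((g ((A:ℤ) - i) : ℤ) : ℂ) * ζ ^ i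
        = ∑ j ∈ Finset.Icc (-(A:ℤ)) A, ((g j : ℤ) : ℂ) * (ζ ^ ((A:ℤ)) * ζ ^ (-j)) := by
      refine Finset.sum_nbij' (fun i => (A:ℤ) - i) (fun j => ((A:ℤ) - j).toNat)
        ?_ ?_ ?_ ?_ ?_
      · intro i hi
        rw [Finset.mem_range] at hi
        rw [Finset.mem_Icc]
        omega
      · intro j hj
        rw [Finset.mem_Icc] at hj
        rw [Finset.mem_range]
        omega
      · intro i hi
        rw [Finset.mem_range] at hi
        omega
      · intro j hj
        rw [Finset.mem_Icc] at hj
        omega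
      · intro i hi
        rw [Finset.mem_range] at hi
        have hz2 : (ζ : ℂ) ^ (i:ℕ) = ζ ^ ((A:ℤ)) * ζ ^ (-((A:ℤ) - i)) := by
          rw [← zpow_natCast ζ i, ← zpow_add₀ hζ0]
          congr 1
          ring
        rw [hz2]
    rw [h2]
    have h3 : ∑ j ∈ Finset.Icc (-(A:ℤ)) A, ((g j : ℤ) : ℂ) * (ζ ^ ((A:ℤ)) * ζ ^ (-j))
        = ζ ^ ((A:ℤ)) * ∑ j ∈ Finset.Icc (-(A:ℤ)) A, ((g j : ℤ) : ℂ) * ζ ^ (-j) := by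
      rw [Finset.mul_sum]
      exact Finset.sum_congr rfl fun j _ => by ring
    rw [h3, hT, mul_zero]
  -- f is primitive
  have hfprim : f.IsPrimitive := by
    rcases hirr.isUnit_or_isUnit (Polynomial.eq_C_content_mul_primPart f) with hu | hu
    · rw [Polynomial.isPrimitive_iff_content_eq_one]
      have hcu : IsUnit f.content := Polynomial.isUnit_C.mp hu
      rcases Int.isUnit_iff.mp hcu with h | h
      · exact h
      · exfalso
        have hnorm := Polynomial.normalize_content (p := f)
        rw [h] at hnorm
        have : normalize (-1 : ℤ) = 1 := by decide
        rw [this] at hnorm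
        norm_num at hnorm
    · exfalso
      have h1 : f.primPart.natDegree = 0 := Polynomial.natDegree_eq_zero_of_isUnit hu
      rw [Polynomial.natDegree_primPart, hdeg] at h1
      omega
  -- divisibility over ℚ
  set fQ := f.map (Int.castRingHom ℚ) with hfQ
  set PQ := P.map (Int.castRingHom ℚ) with hPQ
  have hfQirr : Irreducible fQ :=
    (Polynomial.IsPrimitive.Int.irreducible_iff_irreducible_map_cast hfprim).mp hirr
  have haevalfQ : Polynomial.aeval ζ fQ = 0 := by
    rw [hfQ, ← algebraMap_int_eq, Polynomial.aeval_map_algebraMap]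
    exact hζroot
  have haevalPQ : Polynomial.aeval ζ PQ = 0 := by
    rw [hPQ, ← algebraMap_int_eq, Polynomial.aeval_map_algebraMap]
    exact hPaeval
  have hdvdQ : fQ ∣ PQ := by
    by_contra hnd
    have hcop : IsCoprime fQ PQ := (hfQirr.coprime_iff_not_dvd).mpr hnd
    obtain ⟨a, b, hab⟩ := hcop
    have h1 := congrArg (Polynomial.aeval ζ) hab
    rw [map_add, map_mul, map_mul, haevalfQ, haevalPQ, mul_zero, mul_zero, add_zero,
      map_one] at h1
    exact zero_ne_one h1
  have hdvdZ : f ∣ P := by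
    rcases eq_or_ne P 0 with hP0 | hP0
    · rw [hP0]; exact dvd_zero f
    · have hcne : (P.content : ℚ) ≠ 0 := by
        intro h
        have : P.content = 0 := by exact_mod_cast h
        exact hP0 (Polynomial.content_eq_zero_iff.mp this)
      have hPfac : PQ = Polynomial.C ((P.content : ℚ)) * P.primPart.map (Int.castRingHom ℚ) := by
        rw [hPQ]
        conv_lhs => rw [Polynomial.eq_C_content_mul_primPart P]
        rw [Polynomial.map_mul, Polynomial.map_C]
        rfl
      have hCunit : IsUnit (Polynomial.C ((P.content : ℚ))) :=
        Polynomial.isUnit_C.mpr (isUnit_iff_ne_zero.mpr hcne)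
      have hdvdPP : fQ ∣ P.primPart.map (Int.castRingHom ℚ) := by
        have := hdvdQ
        rw [hPfac] at this
        exact (IsUnit.dvd_mul_left hCunit).mp this
      have h2 : f ∣ P.primPart := by
        refine Polynomial.IsPrimitive.dvd_of_fraction_map_dvd_fraction_map (K := ℚ)
          hfprim ?_
        rw [algebraMap_int_eq]
        exact hdvdPP
      exact h2.trans (Polynomial.primPart_dvd P)
  obtain ⟨H, hH⟩ := hdvdZ
  -- the integer sequence h
  set Hc : ℤ → ℤ := fun i => if h : 0 ≤ i then H.coeff i.toNat else 0 with hHc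
  have hHcneg : ∀ i : ℤ, i < 0 → Hc i = 0 := by
    intro i hi
    rw [hHc]
    simp only
    rw [dif_neg (by omega)]
  have hHcnn : ∀ i : ℤ, 0 ≤ i → Hc i = H.coeff i.toNat := by
    intro i hi
    rw [hHc]
    simp only
    rw [dif_pos hi]
  -- key coefficient identity
  have hkey : ∀ j : ℤ, g j = ∑ k ∈ Finset.range (m+1), f.coeff k * Hc ((A:ℤ) - j - k) := by
    intro j
    rcases le_or_gt j (A:ℤ) with hj | hj
    · set n : ℕ := ((A:ℤ) - j).toNat with hn
      have hnz : ((n:ℤ)) = (A:ℤ) - j := Int.toNat_of_nonneg (by omega)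
      have h1 : g j = P.coeff n := by
        rw [hPcoeff n]
        congr 1
        omega
      have h2 : P.coeff n = ∑ k ∈ Finset.range (n+1), f.coeff k * H.coeff (n - k) := by
        rw [hH, Polynomial.coeff_mul, Finset.Nat.sum_antidiagonal_eq_sum_range_succ_mk]
      have h3 : ∑ k ∈ Finset.range (n+1), f.coeff k * H.coeff (n - k)
          = ∑ k ∈ Finset.range (m + n + 1), f.coeff k * Hc ((n:ℤ) - k) := by
        have h3a : ∑ k ∈ Finset.range (n+1), f.coeff k * H.coeff (n - k)
            = ∑ k ∈ Finset.range (n+1), f.coeff k * Hc ((n:ℤ) - k) := by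
          refine Finset.sum_congr rfl fun k hk => ?_
          rw [Finset.mem_range] at hk
          have hk' : k ≤ n := by omega
          rw [hHcnn _ (by omega)]
          congr 1
          have : ((n:ℤ) - k) = ((n - k : ℕ) : ℤ) := by
            push_cast [Nat.cast_sub hk']
            ring
          rw [this, Int.toNat_natCast]
        rw [h3a]
        refine Finset.sum_subset ?_ ?_
        · intro k hk
          rw [Finset.mem_range] at *
          omega
        · intro k hk1 hk2
          rw [Finset.mem_range] at hk1 hk2
          rw [hHcneg _ (by omega), mul_zero]
      have h4 : ∑ k ∈ Finset.range (m+1), f.coeff k * Hc ((A:ℤ) - j - k)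
          = ∑ k ∈ Finset.range (m + n + 1), f.coeff k * Hc ((n:ℤ) - k) := by
        have h4a : ∀ k : ℕ, ((A:ℤ) - j - k) = ((n:ℤ) - k) := by
          intro k
          omega
        have h4b : ∑ k ∈ Finset.range (m+1), f.coeff k * Hc ((A:ℤ) - j - k)
            = ∑ k ∈ Finset.range (m+1), f.coeff k * Hc ((n:ℤ) - k) := by
          refine Finset.sum_congr rfl fun k _ => ?_
          rw [h4a k]
        rw [h4b]
        refine Finset.sum_subset ?_ ?_
        · intro k hk
          rw [Finset.mem_range] at *
          omega
        · intro k hk1 hk2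
          rw [Finset.mem_range] at hk1 hk2
          have : f.coeff k = 0 := Polynomial.coeff_eq_zero_of_natDegree_lt (by omega)
          rw [this, zero_mul]
      rw [h1, h2, h3, h4]
    · rw [hA j (by rcases abs_cases j with ⟨h, _⟩ | ⟨h, _⟩ <;> omega)]
      symm
      refine Finset.sum_eq_zero fun k _ => ?_
      rw [hHcneg _ (by omega), mul_zero]
  -- the homogeneous null solution
  set hs : ℤ → ℤ := fun n => Hc ((A:ℤ) - n) with hhs
  set fC := f.map (Int.castRingHom ℂ) with hfC
  have hfC0 : fC ≠ 0 := (Polynomial.map_ne_zero_iff (Int.cast_injective)).mpr hf0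
  have hfCdeg : fC.natDegree = m := by
    rw [hfC, Polynomial.natDegree_map_eq_of_injective Int.cast_injective, hdeg]
  set z : ℤ → ℂ := fun n => ((w n : ℝ) : ℂ) - ((hs n : ℤ) : ℂ) with hzdef
  have hhs_fin : {n : ℤ | hs n ≠ 0}.Finite := by
    refine Set.Finite.subset (Set.finite_Icc ((A:ℤ) - H.natDegree) A) ?_
    intro n hn
    simp only [Set.mem_setOf_eq] at hn
    rw [Set.mem_Icc]
    constructor
    · by_contra hlt
      push_neg at hlt
      apply hn
      show Hc ((A:ℤ) - n) = 0
      rw [hHcnn _ (by omega)]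
      refine Polynomial.coeff_eq_zero_of_natDegree_lt ?_
      rw [Int.lt_toNat]
      omega
    · by_contra hlt
      push_neg at hlt
      refine hn ?_
      show Hc ((A:ℤ) - n) = 0
      exact hHcneg _ (by omega)
  have hhst : Tendsto (fun n : ℤ => ((hs n : ℤ) : ℂ)) cofinite (𝓝 (0:ℂ)) := by
    have hev : (fun n : ℤ => ((hs n : ℤ) : ℂ)) =ᶠ[cofinite] (fun _ => (0:ℂ)) := by
      rw [Filter.eventuallyEq_iff_exists_mem]
      refine ⟨{n : ℤ | hs n = 0}, ?_, fun n hn => by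
        have h9 : hs n = 0 := hn
        show ((hs n : ℤ) : ℂ) = 0
        rw [h9]; simp⟩
      rw [Filter.mem_cofinite]
      have : {n : ℤ | hs n = 0}ᶜ = {n : ℤ | hs n ≠ 0} := by ext n; simp
      rw [this]
      exact hhs_fin
    exact Tendsto.congr' hev.symm tendsto_const_nhds
  have hz_t : Tendsto z cofinite (𝓝 (0:ℂ)) := by
    rw [hzdef]
    have := hwc.sub hhst
    simpa using this
  have hz_rec : ∀ j : ℤ, ∑ k ∈ Finset.range (fC.natDegree + 1), fC.coeff k * z (j + k) = 0 := by
    intro j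
    rw [hfCdeg]
    have hterm : ∀ k ∈ Finset.range (m+1), fC.coeff k * z (j + k)
        = ((f.coeff k : ℂ)) * ((w (j + k) : ℝ) : ℂ) - ((f.coeff k : ℂ)) * ((hs (j + k) : ℤ) : ℂ) := by
      intro k _
      rw [hfC, Polynomial.coeff_map, hzdef]
      simp only [Int.coe_castRingHom]
      push_cast
      ring
    rw [Finset.sum_congr rfl hterm, Finset.sum_sub_distrib]
    have hpart1 : ∑ k ∈ Finset.range (m+1), ((f.coeff k : ℂ)) * ((w (j + k) : ℝ) : ℂ)
        = ((g j : ℤ) : ℂ) := (hgc j).symm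
    have hpart2 : ∑ k ∈ Finset.range (m+1), ((f.coeff k : ℂ)) * ((hs (j + k) : ℤ) : ℂ)
        = ((g j : ℤ) : ℂ) := by
      have h1 := hkey j
      have h2 : ∀ k ∈ Finset.range (m+1), ((f.coeff k : ℂ)) * ((hs (j + k) : ℤ) : ℂ)
          = (((f.coeff k * Hc ((A:ℤ) - j - k) : ℤ)) : ℂ) := by
        intro k _
        rw [hhs]
        simp only
        have : (A:ℤ) - (j + k) = (A:ℤ) - j - k := by ring
        rw [this]
        push_cast
        ring
      rw [Finset.sum_congr rfl h2, ← Int.cast_sum]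
      exact_mod_cast congrArg (fun t : ℤ => ((t : ℤ) : ℂ)) h1.symm
    rw [hpart1, hpart2, sub_self]
  have hz0 : z = 0 := HomoclinicAux.null_solution_eq_zero fC hfC0 z hz_t hz_rec
  -- finish
  funext n
  have h2 := congrFun hz0 n
  rw [hzdef] at h2
  simp only [Pi.zero_apply] at h2
  have h5 : w n = ((hs n : ℤ) : ℝ) := by exact_mod_cast sub_eq_zero.mp h2
  obtain ⟨hl, hr⟩ := hw_mem n
  rw [h5] at hl hr
  have h6 : hs n = 0 := by
    have hlo : (-1 : ℤ) < hs n := by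
      exact_mod_cast lt_of_lt_of_le (by norm_num : (-1:ℝ) < -(1/2)) hl
    have hhi : hs n < (1 : ℤ) := by
      exact_mod_cast lt_of_lt_of_le hr (by norm_num : (-(1/2):ℝ)+1 ≤ 1)
    omega
  have h7 : w n = 0 := by rw [h5, h6]; simp
  show x n = 0
  rw [← hwx n, h7]
  simp
end

section
/- Let f = f₀ + f₁u + ⋯ + f_m u^m ∈ R₁ be an irreducible polynomial with m > 0, f_m > 0, f₀ ≠ 0, which is not cyclotomic (no root of f is a root of unity). Then there exist unique elements w^{Δ+} and w^{Δ−} of ℓ^∞(ℤ,ℝ) such that f(σ̄)w^{Δ+} = δ₀ and w^{Δ+}_n → 0 as n → +∞, and f(σ̄)w^{Δ−} = δ₀ and w^{Δ−}_n → 0 as n → −∞. Moreover w^{Δ−} − w^{Δ+} ∈ ker f(σ̄), and the decay is exponential: there exist C > 0 and 0 < θ < 1 with |w^{Δ+}_n| ≤ Cθ^n and |w^{Δ−}_{−n}| ≤ Cθ^n for every n ≥ 1. -/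
open Filter Topology

/-- The action of `f(σ̄)` on two-sided real sequences, where `σ̄` is the shift
`(σ̄ w) n = w (n+1)`:  `(f(σ̄) w) n = ∑ₖ fₖ w (n+k)`. -/
noncomputable def fAct (f : Polynomial ℤ) (w : ℤ → ℝ) : ℤ → ℝ :=
  fun n => ∑ k ∈ Finset.range (f.natDegree + 1), (f.coeff k : ℝ) * w (n + (k : ℤ))

/-- The sequence `δ₀` with `0`-th coordinate `1` and all other coordinates `0`. -/
noncomputable def delta0 : ℤ → ℝ := fun n => if n = 0 then 1 else 0

open Polynomial

noncomputable section

def Complex.abs : AbsoluteValue ℂ ℝ := NormedField.toAbsoluteValue ℂ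

lemma Complex.abs_ofReal' (r : ℝ) : Complex.abs (r : ℂ) = |r| := Complex.norm_real r

lemma Complex.continuous_abs : Continuous Complex.abs := continuous_norm

lemma Complex.abs_re_le_abs (z : ℂ) : |z.re| ≤ Complex.abs z := Complex.abs_re_le_norm z

/-- shift as a linear endomorphism of ℤ → ℂ -/
def sh : Module.End ℂ (ℤ → ℂ) where
  toFun v := fun n => v (n + 1)
  map_add' _ _ := rfl
  map_smul' _ _ := rfl

lemma sh_pow_apply (k : ℕ) (v : ℤ → ℂ) (n : ℤ) : (sh ^ k) v n = v (n + k) := by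
  induction k generalizing v n with
  | zero => simp
  | succ k ih =>
    rw [pow_succ]
    show (sh ^ k) (sh v) n = _
    rw [ih]
    show v (n + k + 1) = _
    push_cast
    ring_nf

lemma aeval_sh_apply (p : ℂ[X]) (v : ℤ → ℂ) (n : ℤ) :
    (aeval sh p) v n = ∑ k ∈ Finset.range (p.natDegree + 1), p.coeff k * v (n + k) := by
  rw [aeval_eq_sum_range]
  rw [LinearMap.coe_sum, Finset.sum_apply, Finset.sum_apply]
  refine Finset.sum_congr rfl fun k _ => ?_
  rw [LinearMap.smul_apply, Pi.smul_apply, sh_pow_apply, smul_eq_mul]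



def eP (l : ℂ) : ℤ → ℂ := fun n => if 1 ≤ n then l ^ (n - 1) else 0
def eM (l : ℂ) : ℤ → ℂ := fun n => if n ≤ 0 then -l ^ (n - 1) else 0

def deltaC : ℤ → ℂ := fun n => if n = 0 then 1 else 0

lemma eP_rec {l : ℂ} (hl : l ≠ 0) (n : ℤ) : eP l (n + 1) - l * eP l n = deltaC n := by
  unfold eP deltaC
  rcases lt_trichotomy n 0 with h | h | h
  · rw [if_neg (by omega), if_neg (by omega), if_neg (by omega)]; ring
  · subst h; norm_num
  · rw [if_pos (by omega), if_pos (by omega), if_neg (by omega)]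
    have : l ^ (n + 1 - 1) = l * l ^ (n - 1) := by
      rw [← zpow_one_add₀ hl]; ring_nf
    rw [this]; ring
lemma eM_rec {l : ℂ} (hl : l ≠ 0) (n : ℤ) : eM l (n + 1) - l * eM l n = deltaC n := by
  unfold eM deltaC
  rcases lt_trichotomy n 0 with h | h | h
  · rw [if_pos (by omega), if_pos (by omega), if_neg (by omega)]
    have : l ^ (n + 1 - 1) = l * l ^ (n - 1) := by
      rw [← zpow_one_add₀ hl]; ring_nf
    rw [this]; ring
  · subst h
    rw [if_neg (by omega), if_pos (by omega), if_pos rfl]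
    simp [zpow_neg, hl]
  · rw [if_neg (by omega), if_neg (by omega), if_neg (by omega)]; ring

lemma geom_zero_of_tendsto {l : ℂ} (hl : 1 ≤ Complex.abs l) {e : ℤ → ℂ} {c : ℂ}
    (he : ∀ n : ℤ, e n = l ^ n * c) (h0 : Tendsto e atTop (𝓝 0)) : c = 0 := by
  by_contra hc
  have habs : ∀ n : ℕ, Complex.abs c ≤ Complex.abs (e n) := by
    intro n
    rw [he, map_mul]
    have h1 : (1:ℝ) ≤ Complex.abs (l ^ (n:ℤ)) := by
      rw [zpow_natCast, map_pow]; exact one_le_pow₀ hl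
    nlinarith [Complex.abs.nonneg c, Complex.abs.nonneg (l ^ (n:ℤ))]
  have : Tendsto (fun n : ℕ => Complex.abs (e n)) atTop (𝓝 0) := by
    have := (Complex.continuous_abs.tendsto 0).comp
      (h0.comp (tendsto_natCast_atTop_atTop (R := ℤ)))
    simpa [Function.comp_def] using this
  have hle : Complex.abs c ≤ 0 := le_of_tendsto_of_tendsto' tendsto_const_nhds this habs
  exact hc (by simpa using le_antisymm hle (Complex.abs.nonneg c))

lemma geom_zero_of_bounded {l : ℂ} (hl0 : l ≠ 0) (hl : Complex.abs l < 1) {e : ℤ → ℂ} {c : ℂ}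
    (he : ∀ n : ℤ, e n = l ^ n * c) {B : ℝ} (hB : ∀ n : ℤ, Complex.abs (e n) ≤ B) : c = 0 := by
  by_contra hc
  have key : ∀ n : ℕ, Complex.abs c ≤ B * Complex.abs l ^ n := by
    intro n
    have := hB (-(n:ℤ))
    rw [he, map_mul] at this
    have hpos : Complex.abs (l ^ (-(n:ℤ))) = (Complex.abs l ^ n)⁻¹ := by
      rw [map_zpow₀]
      rw [zpow_neg, zpow_natCast]
    rw [hpos] at this
    have hlpos : 0 < Complex.abs l ^ n := pow_pos (Complex.abs.pos hl0) n
    calc Complex.abs c = ((Complex.abs l ^ n)⁻¹ * Complex.abs c) * Complex.abs l ^ n := by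
          field_simp
      _ ≤ B * Complex.abs l ^ n := by
          apply mul_le_mul_of_nonneg_right this hlpos.le
  have : Tendsto (fun n : ℕ => B * Complex.abs l ^ n) atTop (𝓝 0) := by
    simpa using (tendsto_pow_atTop_nhds_zero_of_lt_one (by positivity) hl).const_mul B
  have hle : Complex.abs c ≤ 0 := le_of_tendsto_of_tendsto' tendsto_const_nhds this (key ·)
  exact hc (by simpa using le_antisymm hle (Complex.abs.nonneg c))

lemma geom_form {l : ℂ} (hl : l ≠ 0) {e : ℤ → ℂ} (h : ∀ n : ℤ, e (n + 1) = l * e n) :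
    ∀ n : ℤ, e n = l ^ n * e 0 := by
  intro n
  induction n using Int.induction_on with
  | zero => simp
  | succ k ih => rw [h, ih, ← mul_assoc, ← zpow_one_add₀ hl]; ring_nf
  | pred k ih =>
    have h1 : e (-(k:ℤ) - 1 + 1) = l * e (-(k:ℤ) - 1) := h _
    rw [sub_add_cancel, ih] at h1
    have h2 : e (-(k:ℤ) - 1) = l⁻¹ * (l ^ (-(k:ℤ)) * e 0) := by
      rw [h1, inv_mul_cancel_left₀ hl]
    rw [h2, ← mul_assoc, ← zpow_neg_one, ← zpow_add₀ hl]
    have h3 : (-1 : ℤ) + (-(k:ℤ)) = -(k:ℤ) - 1 := by ring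
    rw [h3]



lemma aeval_factor_apply (l : ℂ) (v : ℤ → ℂ) :
    (Polynomial.aeval sh (X - C l)) v = fun n => v (n + 1) - l * v n := by
  rw [map_sub, aeval_X, aeval_C]
  funext n
  rw [LinearMap.sub_apply, Pi.sub_apply, Module.algebraMap_end_apply]
  rfl

-- Lagrange: sum of A l * g l = 1
lemma lagrange_identity (s : Finset ℂ) (hs : s.Nonempty) (c : ℂ) (hc : c ≠ 0) :
    ∑ l ∈ s, (Polynomial.C (c⁻¹ * ∏ μ ∈ s.erase l, (l - μ)⁻¹) *
      (Polynomial.C c * ∏ μ ∈ s.erase l, (X - Polynomial.C μ))) = 1 := by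
  rw [← Lagrange.sum_basis (Function.injective_id.injOn) hs]
  refine Finset.sum_congr rfl fun l hl => ?_
  unfold Lagrange.basis Lagrange.basisDivisor
  simp only [id]
  rw [Finset.prod_mul_distrib, map_mul, map_prod]
  have h1 : (Polynomial.C c⁻¹ : ℂ[X]) * Polynomial.C c = 1 := by
    rw [← map_mul, inv_mul_cancel₀ hc, map_one]
  calc Polynomial.C c⁻¹ * (∏ μ ∈ s.erase l, Polynomial.C (l - μ)⁻¹) *
        (Polynomial.C c * ∏ μ ∈ s.erase l, (X - Polynomial.C μ))
      = (Polynomial.C c⁻¹ * Polynomial.C c) *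
        ((∏ μ ∈ s.erase l, Polynomial.C (l - μ)⁻¹) * ∏ μ ∈ s.erase l, (X - Polynomial.C μ)) := by
        ring
    _ = _ := by rw [h1, one_mul]

lemma exists_sol (s : Finset ℂ) (hs : s.Nonempty) (c : ℂ) (hc : c ≠ 0)
    (F : ℂ[X]) (hfact : F = Polynomial.C c * ∏ l ∈ s, (X - Polynomial.C l)) (e : ℂ → ℤ → ℂ)
    (he : ∀ l ∈ s, Polynomial.aeval sh (X - Polynomial.C l) (e l) = deltaC) :
    Polynomial.aeval sh F
      (fun n => ∑ l ∈ s, (c⁻¹ * ∏ μ ∈ s.erase l, (l - μ)⁻¹) * e l n) = deltaC := by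
  set A : ℂ → ℂ := fun l => c⁻¹ * ∏ μ ∈ s.erase l, (l - μ)⁻¹ with hA
  set g : ℂ → ℂ[X] := fun l => Polynomial.C c * ∏ μ ∈ s.erase l, (X - Polynomial.C μ) with hg
  have hfun : (fun n => ∑ l ∈ s, A l * e l n) = ∑ l ∈ s, A l • e l := by
    funext n; rw [Finset.sum_apply]; rfl
  rw [hfun, map_sum]
  have hterm : ∀ l ∈ s, (Polynomial.aeval sh F) (A l • e l) =
      A l • (Polynomial.aeval sh (g l)) deltaC := by
    intro l hl
    rw [map_smul]
    congr 1
    have hFg : F = g l * (X - Polynomial.C l) := by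
      rw [hfact, hg, ← Finset.prod_erase_mul s _ hl]; ring
    rw [hFg, map_mul]
    show (Polynomial.aeval sh (g l)) ((Polynomial.aeval sh (X - Polynomial.C l)) (e l)) = _
    rw [he l hl]
  rw [Finset.sum_congr rfl hterm]
  have : ∀ l ∈ s, A l • (Polynomial.aeval sh (g l)) deltaC
      = (Polynomial.aeval sh (Polynomial.C (A l) * g l)) deltaC := by
    intro l _
    conv_rhs => rw [map_mul, aeval_C]
    rw [Module.End.mul_apply, Module.algebraMap_end_apply]
  rw [Finset.sum_congr rfl this, ← LinearMap.sum_apply, ← map_sum, lagrange_identity s hs c hc,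
    map_one]
  rfl

lemma aeval_bound (p : Polynomial ℂ) (v : ℤ → ℂ) (B : ℝ) (hv : ∀ n, Complex.abs (v n) ≤ B)
    (n : ℤ) : Complex.abs ((Polynomial.aeval sh p) v n) ≤
      (∑ k ∈ Finset.range (p.natDegree + 1), Complex.abs (p.coeff k)) * B := by
  rw [aeval_sh_apply, Finset.sum_mul]
  refine le_trans (Complex.abs.sum_le _ _) (Finset.sum_le_sum fun k _ => ?_)
  rw [map_mul]
  exact mul_le_mul_of_nonneg_left (hv _) (Complex.abs.nonneg _)

lemma aeval_tendsto (p : Polynomial ℂ) (v : ℤ → ℂ) {L : Filter ℤ}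
    (hL : ∀ k : ℕ, Tendsto (fun n : ℤ => n + (k : ℤ)) L L) (hv : Tendsto v L (𝓝 0)) :
    Tendsto ((Polynomial.aeval sh p) v) L (𝓝 0) := by
  have hfun : (Polynomial.aeval sh p) v
      = fun n => ∑ k ∈ Finset.range (p.natDegree + 1), p.coeff k * v (n + k) :=
    funext (aeval_sh_apply p v)
  rw [hfun]
  have := tendsto_finset_sum (Finset.range (p.natDegree + 1))
    (fun k _ => ((hv.comp (hL k)).const_mul (p.coeff k) :
      Tendsto (fun n : ℤ => p.coeff k * v (n + k)) L (𝓝 (p.coeff k * 0))))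
  simpa using this

lemma kernel_zero_top (s : Finset ℂ) (hs : s.Nonempty) (hs0 : ∀ l ∈ s, l ≠ 0) (c : ℂ)
    (hc : c ≠ 0) (F : Polynomial ℂ) (hfact : F = Polynomial.C c * ∏ l ∈ s, (X - Polynomial.C l))
    (v : ℤ → ℂ) (B : ℝ) (hbd : ∀ n, Complex.abs (v n) ≤ B)
    (hker : Polynomial.aeval sh F v = 0) (hv : Tendsto v atTop (𝓝 0)) : v = 0 := by
  set g : ℂ → Polynomial ℂ := fun l => Polynomial.C c * ∏ μ ∈ s.erase l, (X - Polynomial.C μ)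
    with hg
  have hkill : ∀ l ∈ s, (Polynomial.aeval sh (g l)) v = 0 := by
    intro l hl
    set h : ℤ → ℂ := (Polynomial.aeval sh (g l)) v with hh
    have hFg : F = (X - Polynomial.C l) * g l := by
      rw [hfact, hg, ← Finset.prod_erase_mul s _ hl]; ring
    have hz : (Polynomial.aeval sh (X - Polynomial.C l)) h = 0 := by
      rw [hh, ← Module.End.mul_apply, ← map_mul, ← hFg, hker]
    have hrec : ∀ n : ℤ, h (n + 1) = l * h n := by
      intro n
      have := congrFun hz n
      rw [aeval_factor_apply] at this
      have : h (n + 1) - l * h n = 0 := this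
      linear_combination this
    have hform := geom_form (hs0 l hl) hrec
    have hBh : ∀ n : ℤ, Complex.abs (h n) ≤
        (∑ k ∈ Finset.range ((g l).natDegree + 1), Complex.abs ((g l).coeff k)) * B :=
      fun n => aeval_bound (g l) v B hbd n
    have htend : Tendsto h atTop (𝓝 0) :=
      aeval_tendsto (g l) v (fun k => tendsto_atTop_add_const_right atTop _ tendsto_id) hv
    have h0 : h 0 = 0 := by
      rcases lt_or_ge (Complex.abs l) 1 with hlt | hge
      · exact geom_zero_of_bounded (hs0 l hl) hlt hform hBh
      · exact geom_zero_of_tendsto hge hform htend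
    funext n
    show h n = 0
    rw [hform n, h0, mul_zero]
  have hv1 : v = (Polynomial.aeval sh (1 : Polynomial ℂ)) v := by rw [map_one]; rfl
  rw [hv1, ← lagrange_identity s hs c hc, map_sum, LinearMap.sum_apply]
  refine Finset.sum_eq_zero fun l hl => ?_
  rw [map_mul, Module.End.mul_apply, hkill l hl, map_zero]

lemma kernel_zero_bot (s : Finset ℂ) (hs : s.Nonempty) (hs0 : ∀ l ∈ s, l ≠ 0) (c : ℂ)
    (hc : c ≠ 0) (F : Polynomial ℂ) (hfact : F = Polynomial.C c * ∏ l ∈ s, (X - Polynomial.C l))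
    (v : ℤ → ℂ) (B : ℝ) (hbd : ∀ n, Complex.abs (v n) ≤ B)
    (hker : Polynomial.aeval sh F v = 0) (hv : Tendsto v atBot (𝓝 0)) : v = 0 := by
  set g : ℂ → Polynomial ℂ := fun l => Polynomial.C c * ∏ μ ∈ s.erase l, (X - Polynomial.C μ)
    with hg
  have hkill : ∀ l ∈ s, (Polynomial.aeval sh (g l)) v = 0 := by
    intro l hl
    have hl0 := hs0 l hl
    set h : ℤ → ℂ := (Polynomial.aeval sh (g l)) v with hh
    have hFg : F = (X - Polynomial.C l) * g l := by
      rw [hfact, hg, ← Finset.prod_erase_mul s _ hl]; ring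
    have hz : (Polynomial.aeval sh (X - Polynomial.C l)) h = 0 := by
      rw [hh, ← Module.End.mul_apply, ← map_mul, ← hFg, hker]
    have hrec : ∀ n : ℤ, h (n + 1) = l * h n := by
      intro n
      have := congrFun hz n
      rw [aeval_factor_apply] at this
      have : h (n + 1) - l * h n = 0 := this
      linear_combination this
    have hform := geom_form hl0 hrec
    set h' : ℤ → ℂ := fun n => h (-n) with hh'
    have hrec' : ∀ n : ℤ, h' (n + 1) = l⁻¹ * h' n := by
      intro n
      have h1 : h (-n - 1 + 1) = l * h (-n - 1) := hrec _
      rw [sub_add_cancel] at h1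
      have : h' (n + 1) = h (-n - 1) := by rw [hh']; ring_nf
      rw [this, hh']
      field_simp
      linear_combination -h1
    have hform' := geom_form (inv_ne_zero hl0) hrec'
    have hBh : ∀ n : ℤ, Complex.abs (h' n) ≤
        (∑ k ∈ Finset.range ((g l).natDegree + 1), Complex.abs ((g l).coeff k)) * B :=
      fun n => aeval_bound (g l) v B hbd (-n)
    have htend : Tendsto h' atTop (𝓝 0) := by
      have h2 : Tendsto h atBot (𝓝 0) :=
        aeval_tendsto (g l) v (fun k => tendsto_atBot_add_const_right atBot _ tendsto_id) hv
      exact h2.comp tendsto_neg_atTop_atBot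
    have h'0 : h' 0 = 0 := by
      rcases le_or_gt (Complex.abs l) 1 with hle | hgt
      · have hge : 1 ≤ Complex.abs l⁻¹ := by
          rw [map_inv₀]
          exact (one_le_inv₀ (Complex.abs.pos hl0)).mpr hle
        exact geom_zero_of_tendsto hge hform' htend
      · have hlt : Complex.abs l⁻¹ < 1 := by
          rw [map_inv₀]
          exact inv_lt_one_of_one_lt₀ hgt
        exact geom_zero_of_bounded (inv_ne_zero hl0) hlt hform' hBh
    have h0 : h 0 = 0 := by
      have : h' 0 = h 0 := by rw [hh']; norm_num
      rw [← this, h'0]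
    funext n
    show h n = 0
    rw [hform n, h0, mul_zero]
  have hv1 : v = (Polynomial.aeval sh (1 : Polynomial ℂ)) v := by rw [map_one]; rfl
  rw [hv1, ← lagrange_identity s hs c hc, map_sum, LinearMap.sum_apply]
  refine Finset.sum_eq_zero fun l hl => ?_
  rw [map_mul, Module.End.mul_apply, hkill l hl, map_zero]
lemma tendsto_of_exp_bound (u : ℤ → ℝ) (C θ : ℝ) (hθ0 : 0 < θ) (hθ1 : θ < 1)
    (h : ∀ n : ℕ, 1 ≤ n → |u (n : ℤ)| ≤ C * θ ^ n) : Tendsto u atTop (𝓝 0) := by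
  rw [Metric.tendsto_atTop]
  intro ε hε
  have hpow : Tendsto (fun k : ℕ => C * θ ^ k) atTop (𝓝 0) := by
    simpa using (tendsto_pow_atTop_nhds_zero_of_lt_one hθ0.le hθ1).const_mul C
  rw [Metric.tendsto_atTop] at hpow
  obtain ⟨K, hK⟩ := hpow ε hε
  refine ⟨max (K : ℤ) 1, fun n hn => ?_⟩
  have hn1 : 1 ≤ n := le_trans (le_max_right _ _) hn
  have hnK : (K : ℤ) ≤ n := le_trans (le_max_left _ _) hn
  have hton : ((n.toNat : ℤ)) = n := Int.toNat_of_nonneg (by omega)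
  have hKn : K ≤ n.toNat := by omega
  have := hK n.toNat hKn
  rw [Real.dist_eq, sub_zero] at this ⊢
  calc |u n| = |u ((n.toNat : ℤ))| := by rw [hton]
    _ ≤ C * θ ^ n.toNat := h n.toNat (by omega)
    _ ≤ |C * θ ^ n.toNat| := le_abs_self _
    _ < ε := this

lemma natDegree_F (f : Polynomial ℤ) :
    (f.map (Int.castRingHom ℂ)).natDegree = f.natDegree :=
  Polynomial.natDegree_map_eq_of_injective (fun a b hab => by simpa using hab) f

lemma bridge_re (f : Polynomial ℤ) (v : ℤ → ℂ) (n : ℤ) :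
    fAct f (fun j => (v j).re) n = ((Polynomial.aeval sh (f.map (Int.castRingHom ℂ))) v n).re := by
  rw [aeval_sh_apply, natDegree_F]
  unfold fAct
  rw [Complex.re_sum]
  refine Finset.sum_congr rfl fun k _ => ?_
  rw [Polynomial.coeff_map]
  simp [Complex.mul_re]

lemma bridge_cast (f : Polynomial ℤ) (w : ℤ → ℝ) (n : ℤ) :
    (Polynomial.aeval sh (f.map (Int.castRingHom ℂ))) (fun j => ((w j : ℝ) : ℂ)) n
      = ((fAct f w n : ℝ) : ℂ) := by
  rw [aeval_sh_apply, natDegree_F]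
  unfold fAct
  push_cast
  refine Finset.sum_congr rfl fun k _ => ?_
  rw [Polynomial.coeff_map, eq_intCast]
lemma aeval_eP {l : ℂ} (hl : l ≠ 0) : Polynomial.aeval sh (X - Polynomial.C l) (eP l) = deltaC := by
  rw [aeval_factor_apply]; funext n; exact eP_rec hl n

lemma aeval_eM {l : ℂ} (hl : l ≠ 0) : Polynomial.aeval sh (X - Polynomial.C l) (eM l) = deltaC := by
  rw [aeval_factor_apply]; funext n; exact eM_rec hl n

lemma abs_eP_le_one {l : ℂ} (h1 : Complex.abs l ≤ 1) (n : ℤ) : Complex.abs (eP l n) ≤ 1 := by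
  unfold eP
  split
  · rename_i hn
    obtain ⟨k, hk⟩ : ∃ k : ℕ, n - 1 = (k : ℤ) := ⟨(n - 1).toNat, by omega⟩
    rw [hk, zpow_natCast, map_pow]
    exact pow_le_one₀ (Complex.abs.nonneg _) h1
  · simp

lemma abs_eM_le_one {l : ℂ} (hl : l ≠ 0) (h1 : 1 ≤ Complex.abs l) (n : ℤ) :
    Complex.abs (eM l n) ≤ 1 := by
  unfold eM
  split
  · rename_i hn
    rw [map_neg_eq_map, map_zpow₀]
    obtain ⟨k, hk⟩ : ∃ k : ℕ, n - 1 = -(k : ℤ) := ⟨(1 - n).toNat, by omega⟩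
    rw [hk, zpow_neg, zpow_natCast]
    have h2 : (1:ℝ) ≤ Complex.abs l ^ k := one_le_pow₀ h1
    rw [inv_le_one₀ (by positivity)]
    exact h2
  · simp

lemma abs_eP_decay {l : ℂ} (hl : l ≠ 0) (n : ℕ) (hn : 1 ≤ n) :
    Complex.abs (eP l (n : ℤ)) = (Complex.abs l)⁻¹ * Complex.abs l ^ n := by
  unfold eP
  rw [if_pos (by exact_mod_cast hn)]
  have h1 : ((n : ℤ) - 1) = ((n - 1 : ℕ) : ℤ) := by omega
  rw [h1, zpow_natCast, map_pow]
  have ha : Complex.abs l ≠ 0 := Complex.abs.ne_zero hl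
  have h2 : Complex.abs l * Complex.abs l ^ (n - 1) = Complex.abs l ^ n := by
    rw [← pow_succ']
    congr 1
    omega
  rw [← h2, ← mul_assoc, inv_mul_cancel₀ ha, one_mul]

lemma abs_eM_decay {l : ℂ} (hl : l ≠ 0) (n : ℕ) (hn : 1 ≤ n) :
    Complex.abs (eM l (-(n : ℤ))) = (Complex.abs l)⁻¹ * ((Complex.abs l)⁻¹) ^ n := by
  unfold eM
  rw [if_pos (by omega)]
  rw [map_neg_eq_map, map_zpow₀]
  have h1 : (-(n : ℤ) - 1) = -((n + 1 : ℕ) : ℤ) := by omega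
  rw [h1, zpow_neg, zpow_natCast, ← inv_pow, pow_succ']

lemma eM_zero {l : ℂ} (n : ℤ) (hn : 1 ≤ n) : eM l n = 0 := by
  unfold eM; rw [if_neg (by omega)]

lemma eP_zero {l : ℂ} (n : ℤ) (hn : n ≤ 0) : eP l n = 0 := by
  unfold eP; rw [if_neg (by omega)]

lemma deltaC_re (n : ℤ) : (deltaC n).re = delta0 n := by
  unfold deltaC delta0; split <;> simp
lemma poly_setup (f : Polynomial ℤ) (m : ℕ) (hm : 0 < m) (hdeg : f.natDegree = m)
    (hlead : 0 < f.leadingCoeff) (hconst : f.coeff 0 ≠ 0) (hirr : Irreducible f) :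
    (f.map (Int.castRingHom ℂ)).leadingCoeff ≠ 0 ∧
    (f.map (Int.castRingHom ℂ)).roots.toFinset.Nonempty ∧
    (∀ l ∈ (f.map (Int.castRingHom ℂ)).roots.toFinset, l ≠ 0) ∧
    f.map (Int.castRingHom ℂ) = Polynomial.C (f.map (Int.castRingHom ℂ)).leadingCoeff *
      ∏ l ∈ (f.map (Int.castRingHom ℂ)).roots.toFinset, (X - Polynomial.C l) := by
  set F := f.map (Int.castRingHom ℂ) with hFdef
  have hFdeg : F.natDegree = f.natDegree := natDegree_F f
  have hcF : F.leadingCoeff = ((f.leadingCoeff : ℤ) : ℂ) := by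
    rw [Polynomial.leadingCoeff, hFdeg, Polynomial.coeff_map, eq_intCast]
    rfl
  have hc : F.leadingCoeff ≠ 0 := by
    rw [hcF]
    exact_mod_cast hlead.ne'
  have hF0 : F ≠ 0 := Polynomial.leadingCoeff_ne_zero.mp hc
  have hprim : f.IsPrimitive := by
    intro r hr
    rcases hr with ⟨q, hq⟩
    rcases hirr.isUnit_or_isUnit hq with h | h
    · exact Polynomial.isUnit_C.mp h
    · exfalso
      have h1 : q.natDegree = 0 := Polynomial.natDegree_eq_zero_of_isUnit h
      have h2 : f.natDegree ≤ (Polynomial.C r).natDegree + q.natDegree := by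
        rw [hq]; exact Polynomial.natDegree_mul_le
      rw [Polynomial.natDegree_C, h1] at h2
      omega
  have hsep : F.Separable := by
    have h1 : Irreducible (f.map (Int.castRingHom ℚ)) :=
      (Polynomial.IsPrimitive.Int.irreducible_iff_irreducible_map_cast hprim).mp hirr
    have h2 : (f.map (Int.castRingHom ℚ)).Separable := h1.separable
    have h3 : F = (f.map (Int.castRingHom ℚ)).map (algebraMap ℚ ℂ) := by
      rw [Polynomial.map_map]
      congr 1
    rw [h3]
    exact h2.map
  have hnodup : F.roots.Nodup := Polynomial.nodup_roots hsep
  have hcard : Multiset.card F.roots = F.natDegree :=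
    Polynomial.splits_iff_card_roots.mp (IsAlgClosed.splits F)
  have hsval : F.roots.toFinset.val = F.roots := Multiset.dedup_eq_self.mpr hnodup
  have hscard : F.roots.toFinset.card = m := by
    rw [Finset.card, hsval, hcard, hFdeg, hdeg]
  refine ⟨hc, Finset.card_pos.mp (by omega), ?_, ?_⟩
  · intro l hl hl0
    have h4 : l ∈ F.roots := Multiset.mem_toFinset.mp hl
    have h5 := (Polynomial.mem_roots hF0).mp h4
    rw [hl0] at h5
    have h6 : F.coeff 0 = 0 := by rw [Polynomial.coeff_zero_eq_eval_zero]; exact h5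
    rw [Polynomial.coeff_map, eq_intCast] at h6
    exact hconst (by exact_mod_cast h6)
  · have := Polynomial.C_leadingCoeff_mul_prod_multiset_X_sub_C (p := F) hcard
    have hprodeq : ∏ l ∈ F.roots.toFinset, (X - Polynomial.C l)
        = (Multiset.map (fun a => X - Polynomial.C a) F.roots).prod := by
      rw [Finset.prod_eq_multiset_prod, hsval]
    rw [hprodeq]
    exact this.symm
end

/-- For an irreducible noncyclotomic `f`, there exist unique bounded sequences
`w^{Δ+}`, `w^{Δ−}` with `f(σ̄)w^{Δ±} = δ₀` and `w^{Δ+}ₙ → 0` as `n → +∞`,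
`w^{Δ−}ₙ → 0` as `n → −∞`.  Moreover `w^{Δ−} − w^{Δ+} ∈ ker f(σ̄)`, and the decay is
exponential. -/
theorem exists_unique_one_sided_homoclinic
    (f : Polynomial ℤ) (m : ℕ) (hm : 0 < m) (hdeg : f.natDegree = m)
    (hlead : 0 < f.leadingCoeff) (hconst : f.coeff 0 ≠ 0) (hirr : Irreducible f)
    (hnoncyc : ¬ ∃ z : ℂ, Polynomial.aeval z f = 0 ∧ ∃ n : ℕ, 0 < n ∧ z ^ n = 1) :
    ∃ wp wm : ℤ → ℝ,
      ((∃ C : ℝ, ∀ n : ℤ, |wp n| ≤ C) ∧ fAct f wp = delta0 ∧ Tendsto wp atTop (𝓝 0)) ∧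
      (∀ w : ℤ → ℝ, (∃ C : ℝ, ∀ n : ℤ, |w n| ≤ C) → fAct f w = delta0 →
        Tendsto w atTop (𝓝 0) → w = wp) ∧
      ((∃ C : ℝ, ∀ n : ℤ, |wm n| ≤ C) ∧ fAct f wm = delta0 ∧ Tendsto wm atBot (𝓝 0)) ∧
      (∀ w : ℤ → ℝ, (∃ C : ℝ, ∀ n : ℤ, |w n| ≤ C) → fAct f w = delta0 →
        Tendsto w atBot (𝓝 0) → w = wm) ∧
      fAct f (fun n => wm n - wp n) = 0 ∧
      (∃ C > (0 : ℝ), ∃ θ ∈ Set.Ioo (0 : ℝ) 1, ∀ n : ℕ, 1 ≤ n →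
        |wp (n : ℤ)| ≤ C * θ ^ n ∧ |wm (-(n : ℤ))| ≤ C * θ ^ n) := by
  obtain ⟨hc, hsne, hroots0, hfact⟩ := poly_setup f m hm hdeg hlead hconst hirr
  set F := f.map (Int.castRingHom ℂ) with hFdef
  set s := F.roots.toFinset with hsdef
  set c := F.leadingCoeff with hcdef
  set A : ℂ → ℂ := fun l => c⁻¹ * ∏ μ ∈ s.erase l, (l - μ)⁻¹ with hA
  -- the two families of elementary solutions
  set ep : ℂ → ℤ → ℂ := fun l => if Complex.abs l < 1 then eP l else eM l with hep
  set em : ℂ → ℤ → ℂ := fun l => if Complex.abs l ≤ 1 then eP l else eM l with hem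
  have hepd : ∀ l ∈ s, Polynomial.aeval sh (X - Polynomial.C l) (ep l) = deltaC := by
    intro l hl
    rw [hep]; dsimp only; split
    · exact aeval_eP (hroots0 l hl)
    · exact aeval_eM (hroots0 l hl)
  have hemd : ∀ l ∈ s, Polynomial.aeval sh (X - Polynomial.C l) (em l) = deltaC := by
    intro l hl
    rw [hem]; dsimp only; split
    · exact aeval_eP (hroots0 l hl)
    · exact aeval_eM (hroots0 l hl)
  set wpc : ℤ → ℂ := fun n => ∑ l ∈ s, A l * ep l n with hwpc
  set wmc : ℤ → ℂ := fun n => ∑ l ∈ s, A l * em l n with hwmc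
  have hwpcsol : Polynomial.aeval sh F wpc = deltaC := exists_sol s hsne c hc F hfact ep hepd
  have hwmcsol : Polynomial.aeval sh F wmc = deltaC := exists_sol s hsne c hc F hfact em hemd
  set wp : ℤ → ℝ := fun n => (wpc n).re with hwp
  set wm : ℤ → ℝ := fun n => (wmc n).re with hwm
  have hfwp : fAct f wp = delta0 := by
    funext n
    have h1 := bridge_re f wpc n
    rw [hwpcsol] at h1
    rw [← deltaC_re n, ← h1]
  have hfwm : fAct f wm = delta0 := by
    funext n
    have h1 := bridge_re f wmc n
    rw [hwmcsol] at h1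
    rw [← deltaC_re n, ← h1]
  -- bounds on the elementary solutions
  have hb1p : ∀ l ∈ s, ∀ n : ℤ, Complex.abs (ep l n) ≤ 1 := by
    intro l hl n
    rw [hep]; dsimp only; split
    · rename_i h; exact abs_eP_le_one h.le n
    · rename_i h; exact abs_eM_le_one (hroots0 l hl) (not_lt.mp h) n
  have hb1m : ∀ l ∈ s, ∀ n : ℤ, Complex.abs (em l n) ≤ 1 := by
    intro l hl n
    rw [hem]; dsimp only; split
    · rename_i h; exact abs_eP_le_one h n
    · rename_i h; exact abs_eM_le_one (hroots0 l hl) (not_le.mp h).le n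
  -- the decay rate θ
  set tf : ℂ → ℝ := fun l => if Complex.abs l < 1 then Complex.abs l
    else if 1 < Complex.abs l then (Complex.abs l)⁻¹ else 1/2 with htf
  set θ : ℝ := s.sup' hsne tf with hθdef
  have htf01 : ∀ l ∈ s, 0 < tf l ∧ tf l < 1 := by
    intro l hl
    rw [htf]; dsimp only
    split
    · rename_i h; exact ⟨Complex.abs.pos (hroots0 l hl), h⟩
    · split
      · rename_i h; exact ⟨by positivity, inv_lt_one_of_one_lt₀ h⟩
      · norm_num
  have hθ1 : θ < 1 := (Finset.sup'_lt_iff hsne).mpr fun l hl => (htf01 l hl).2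
  obtain ⟨l0, hl0⟩ := hsne
  have hθ0 : 0 < θ := lt_of_lt_of_le (htf01 l0 hl0).1 (Finset.le_sup' tf hl0)
  -- decay of elementary solutions
  have hdecayP : ∀ l ∈ s, ∀ n : ℕ, 1 ≤ n →
      Complex.abs (ep l (n : ℤ)) ≤ (Complex.abs l)⁻¹ * θ ^ n := by
    intro l hl n hn
    rw [hep]; dsimp only; split
    · rename_i h
      rw [abs_eP_decay (hroots0 l hl) n hn]
      have h1 : Complex.abs l ≤ θ := by
        have h2 : tf l = Complex.abs l := by rw [htf]; dsimp only; rw [if_pos h]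
        rw [← h2]; exact Finset.le_sup' tf hl
      have h3 := pow_le_pow_left₀ (Complex.abs.nonneg l) h1 n
      have h4 : (0:ℝ) ≤ (Complex.abs l)⁻¹ := by positivity
      exact mul_le_mul_of_nonneg_left h3 h4
    · rw [eM_zero _ (by exact_mod_cast hn), map_zero]
      have := Complex.abs.pos (hroots0 l hl)
      positivity
  have hdecayM : ∀ l ∈ s, ∀ n : ℕ, 1 ≤ n →
      Complex.abs (em l (-(n : ℤ))) ≤ (Complex.abs l)⁻¹ * θ ^ n := by
    intro l hl n hn
    rw [hem]; dsimp only; split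
    · rw [eP_zero _ (by omega), map_zero]
      have := Complex.abs.pos (hroots0 l hl)
      positivity
    · rename_i h
      push_neg at h
      rw [abs_eM_decay (hroots0 l hl) n hn]
      have h1 : (Complex.abs l)⁻¹ ≤ θ := by
        have h2 : tf l = (Complex.abs l)⁻¹ := by
          rw [htf]; dsimp only; rw [if_neg (by push_neg; exact h.le), if_pos h]
        rw [← h2]; exact Finset.le_sup' tf hl
      have h3 := pow_le_pow_left₀ (by positivity) h1 n
      have h4 : (0:ℝ) ≤ (Complex.abs l)⁻¹ := by positivity
      exact mul_le_mul_of_nonneg_left h3 h4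
  -- constants
  set C0 : ℝ := ∑ l ∈ s, Complex.abs (A l) * (Complex.abs l)⁻¹ with hC0
  set C1 : ℝ := ∑ l ∈ s, Complex.abs (A l) with hC1
  set CC : ℝ := C0 + C1 + 1 with hCC
  have hC0n : 0 ≤ C0 := Finset.sum_nonneg fun l _ => by positivity
  have hC1n : 0 ≤ C1 := Finset.sum_nonneg fun l _ => by positivity
  have hCCpos : 0 < CC := by rw [hCC]; linarith
  -- global bounds
  have hwpb : ∀ n : ℤ, |wp n| ≤ CC := by
    intro n
    have h1 : |wp n| ≤ Complex.abs (wpc n) := Complex.abs_re_le_abs _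
    have h2 : Complex.abs (wpc n) ≤ ∑ l ∈ s, Complex.abs (A l) * Complex.abs (ep l n) :=
      le_trans (Complex.abs.sum_le _ _) (le_of_eq (Finset.sum_congr rfl fun l _ => map_mul _ _ _))
    have h3 : ∑ l ∈ s, Complex.abs (A l) * Complex.abs (ep l n) ≤ C1 := by
      rw [hC1]
      refine Finset.sum_le_sum fun l hl => ?_
      have := mul_le_mul_of_nonneg_left (hb1p l hl n) (Complex.abs.nonneg (A l))
      simpa using this
    rw [hCC]; linarith
  have hwmb : ∀ n : ℤ, |wm n| ≤ CC := by
    intro n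
    have h1 : |wm n| ≤ Complex.abs (wmc n) := Complex.abs_re_le_abs _
    have h2 : Complex.abs (wmc n) ≤ ∑ l ∈ s, Complex.abs (A l) * Complex.abs (em l n) :=
      le_trans (Complex.abs.sum_le _ _) (le_of_eq (Finset.sum_congr rfl fun l _ => map_mul _ _ _))
    have h3 : ∑ l ∈ s, Complex.abs (A l) * Complex.abs (em l n) ≤ C1 := by
      rw [hC1]
      refine Finset.sum_le_sum fun l hl => ?_
      have := mul_le_mul_of_nonneg_left (hb1m l hl n) (Complex.abs.nonneg (A l))
      simpa using this
    rw [hCC]; linarith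
  -- decay bounds
  have hwpd : ∀ n : ℕ, 1 ≤ n → |wp (n : ℤ)| ≤ CC * θ ^ n := by
    intro n hn
    have h1 : |wp (n:ℤ)| ≤ Complex.abs (wpc (n:ℤ)) := Complex.abs_re_le_abs _
    have h2 : Complex.abs (wpc (n:ℤ)) ≤ ∑ l ∈ s, Complex.abs (A l) * Complex.abs (ep l (n:ℤ)) :=
      le_trans (Complex.abs.sum_le _ _) (le_of_eq (Finset.sum_congr rfl fun l _ => map_mul _ _ _))
    have h3 : ∑ l ∈ s, Complex.abs (A l) * Complex.abs (ep l (n:ℤ))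
        ≤ ∑ l ∈ s, Complex.abs (A l) * ((Complex.abs l)⁻¹ * θ ^ n) :=
      Finset.sum_le_sum fun l hl =>
        mul_le_mul_of_nonneg_left (hdecayP l hl n hn) (Complex.abs.nonneg (A l))
    have h4 : ∑ l ∈ s, Complex.abs (A l) * ((Complex.abs l)⁻¹ * θ ^ n) = C0 * θ ^ n := by
      rw [hC0, Finset.sum_mul]
      exact Finset.sum_congr rfl fun l _ => by ring
    have h5 : C0 * θ ^ n ≤ CC * θ ^ n := by
      have : (0:ℝ) ≤ θ ^ n := by positivity
      have h6 : C0 ≤ CC := by rw [hCC]; linarith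
      exact mul_le_mul_of_nonneg_right h6 this
    linarith
  have hwmd : ∀ n : ℕ, 1 ≤ n → |wm (-(n : ℤ))| ≤ CC * θ ^ n := by
    intro n hn
    have h1 : |wm (-(n:ℤ))| ≤ Complex.abs (wmc (-(n:ℤ)))  := Complex.abs_re_le_abs _
    have h2 : Complex.abs (wmc (-(n:ℤ))) ≤
        ∑ l ∈ s, Complex.abs (A l) * Complex.abs (em l (-(n:ℤ))) :=
      le_trans (Complex.abs.sum_le _ _) (le_of_eq (Finset.sum_congr rfl fun l _ => map_mul _ _ _))
    have h3 : ∑ l ∈ s, Complex.abs (A l) * Complex.abs (em l (-(n:ℤ)))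
        ≤ ∑ l ∈ s, Complex.abs (A l) * ((Complex.abs l)⁻¹ * θ ^ n) :=
      Finset.sum_le_sum fun l hl =>
        mul_le_mul_of_nonneg_left (hdecayM l hl n hn) (Complex.abs.nonneg (A l))
    have h4 : ∑ l ∈ s, Complex.abs (A l) * ((Complex.abs l)⁻¹ * θ ^ n) = C0 * θ ^ n := by
      rw [hC0, Finset.sum_mul]
      exact Finset.sum_congr rfl fun l _ => by ring
    have h5 : C0 * θ ^ n ≤ CC * θ ^ n := by
      have : (0:ℝ) ≤ θ ^ n := by positivity
      have h6 : C0 ≤ CC := by rw [hCC]; linarith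
      exact mul_le_mul_of_nonneg_right h6 this
    linarith
  -- limits
  have hwptop : Tendsto wp atTop (𝓝 0) := tendsto_of_exp_bound wp CC θ hθ0 hθ1 hwpd
  have hwmbot : Tendsto wm atBot (𝓝 0) := by
    have hu : Tendsto (fun n : ℤ => wm (-n)) atTop (𝓝 0) := by
      refine tendsto_of_exp_bound (fun n : ℤ => wm (-n)) CC θ hθ0 hθ1 ?_
      intro n hn
      exact hwmd n hn
    have hcomp : ((fun n : ℤ => wm (-n)) ∘ fun n : ℤ => -n) = wm := by
      funext n; simp
    have := hu.comp ((tendsto_neg_atBot_atTop : Tendsto (fun n : ℤ => -n) atBot atTop))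
    rwa [hcomp] at this
  -- uniqueness (plus side)
  have huniqp : ∀ w : ℤ → ℝ, (∃ C : ℝ, ∀ n : ℤ, |w n| ≤ C) → fAct f w = delta0 →
      Tendsto w atTop (𝓝 0) → w = wp := by
    intro w hBex hfw htw
    obtain ⟨B, hB⟩ := hBex
    have hsplit : (fun n : ℤ => ((w n - wp n : ℝ) : ℂ))
        = (fun j : ℤ => ((w j : ℝ) : ℂ)) - (fun j : ℤ => ((wp j : ℝ) : ℂ)) := by
      funext j
      show ((w j - wp j : ℝ) : ℂ) = ((w j : ℝ) : ℂ) - ((wp j : ℝ) : ℂ)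
      push_cast
      ring
    have hker : Polynomial.aeval sh F (fun n : ℤ => ((w n - wp n : ℝ) : ℂ)) = 0 := by
      rw [hsplit, map_sub]
      funext n
      have b1 := bridge_cast f w n
      have b2 := bridge_cast f wp n
      simp only [Pi.sub_apply, Pi.zero_apply, LinearMap.sub_apply]
      rw [b1, b2, congrFun hfw n, congrFun hfwp n, sub_self]
    have hbd : ∀ n : ℤ, Complex.abs ((fun n : ℤ => ((w n - wp n : ℝ) : ℂ)) n) ≤ B + CC := by
      intro n
      show Complex.abs ((w n - wp n : ℝ) : ℂ) ≤ B + CC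
      rw [Complex.abs_ofReal']
      calc |w n - wp n| ≤ |w n| + |wp n| := abs_sub _ _
        _ ≤ B + CC := add_le_add (hB n) (hwpb n)
    have htend : Tendsto (fun n : ℤ => ((w n - wp n : ℝ) : ℂ)) atTop (𝓝 0) := by
      have h1 : Tendsto (fun n => w n - wp n) atTop (𝓝 0) := by
        simpa using htw.sub hwptop
      have h2 := (Complex.continuous_ofReal.tendsto 0).comp h1
      simpa [Function.comp_def, Complex.ofReal_sub] using h2
    have hv0 := kernel_zero_top s ⟨l0, hl0⟩ hroots0 c hc F hfact
      (fun n : ℤ => ((w n - wp n : ℝ) : ℂ)) (B + CC) hbd hker htend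
    funext n
    have h2 : ((w n - wp n : ℝ) : ℂ) = 0 := by simpa using congrFun hv0 n
    have h3 : (w n - wp n : ℝ) = 0 := by exact_mod_cast h2
    linarith
  -- uniqueness (minus side)
  have huniqm : ∀ w : ℤ → ℝ, (∃ C : ℝ, ∀ n : ℤ, |w n| ≤ C) → fAct f w = delta0 →
      Tendsto w atBot (𝓝 0) → w = wm := by
    intro w hBex hfw htw
    obtain ⟨B, hB⟩ := hBex
    have hsplit : (fun n : ℤ => ((w n - wm n : ℝ) : ℂ))
        = (fun j : ℤ => ((w j : ℝ) : ℂ)) - (fun j : ℤ => ((wm j : ℝ) : ℂ)) := by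
      funext j
      show ((w j - wm j : ℝ) : ℂ) = ((w j : ℝ) : ℂ) - ((wm j : ℝ) : ℂ)
      push_cast
      ring
    have hker : Polynomial.aeval sh F (fun n : ℤ => ((w n - wm n : ℝ) : ℂ)) = 0 := by
      rw [hsplit, map_sub]
      funext n
      have b1 := bridge_cast f w n
      have b2 := bridge_cast f wm n
      simp only [Pi.sub_apply, Pi.zero_apply, LinearMap.sub_apply]
      rw [b1, b2, congrFun hfw n, congrFun hfwm n, sub_self]
    have hbd : ∀ n : ℤ, Complex.abs ((fun n : ℤ => ((w n - wm n : ℝ) : ℂ)) n) ≤ B + CC := by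
      intro n
      show Complex.abs ((w n - wm n : ℝ) : ℂ) ≤ B + CC
      rw [Complex.abs_ofReal']
      calc |w n - wm n| ≤ |w n| + |wm n| := abs_sub _ _
        _ ≤ B + CC := add_le_add (hB n) (hwmb n)
    have htend : Tendsto (fun n : ℤ => ((w n - wm n : ℝ) : ℂ)) atBot (𝓝 0) := by
      have h1 : Tendsto (fun n => w n - wm n) atBot (𝓝 0) := by
        simpa using htw.sub hwmbot
      have h2 := (Complex.continuous_ofReal.tendsto 0).comp h1
      simpa [Function.comp_def, Complex.ofReal_sub] using h2
    have hv0 := kernel_zero_bot s ⟨l0, hl0⟩ hroots0 c hc F hfact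
      (fun n : ℤ => ((w n - wm n : ℝ) : ℂ)) (B + CC) hbd hker htend
    funext n
    have h2 : ((w n - wm n : ℝ) : ℂ) = 0 := by simpa using congrFun hv0 n
    have h3 : (w n - wm n : ℝ) = 0 := by exact_mod_cast h2
    linarith
  -- kernel statement
  have hkerdiff : fAct f (fun n => wm n - wp n) = 0 := by
    funext n
    have h1 := congrFun hfwm n
    have h2 := congrFun hfwp n
    unfold fAct at h1 h2 ⊢
    rw [Pi.zero_apply]
    simp only [mul_sub, Finset.sum_sub_distrib]
    rw [h1, h2, sub_self]
  exact ⟨wp, wm, ⟨⟨CC, hwpb⟩, hfwp, hwptop⟩, huniqp, ⟨⟨CC, hwmb⟩, hfwm, hwmbot⟩, huniqm,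
    hkerdiff, ⟨CC, hCCpos, θ, ⟨hθ0, hθ1⟩, fun n hn => ⟨hwpd n hn, hwmd n hn⟩⟩⟩
end

section
/- Let f = f₀ + f₁u + ⋯ + f_m u^m ∈ R₁ be an irreducible polynomial with m > 0, f_m > 0, f₀ ≠ 0. Then the kernel of f(σ̄) acting on ℓ^∞(ℤ,ℝ) equals the real linear span of the sequences (Re(ω^n))_{n∈ℤ} and (Im(ω^n))_{n∈ℤ}, where ω ranges over the roots of f of absolute value 1. In particular, f(σ̄) is injective on ℓ^∞(ℤ,ℝ) if and only if f has no root of absolute value 1. -/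
open Filter Topology
open Matrix

private lemma fAct_add (f : Polynomial ℤ) (x y : ℤ → ℝ) :
    fAct f (x + y) = fAct f x + fAct f y := by
  funext n
  simp only [fAct, Pi.add_apply, mul_add, Finset.sum_add_distrib]

private lemma fAct_smul (f : Polynomial ℤ) (r : ℝ) (x : ℤ → ℝ) :
    fAct f (r • x) = r • fAct f x := by
  funext n
  simp only [fAct, Pi.smul_apply, smul_eq_mul, Finset.mul_sum]
  exact Finset.sum_congr rfl fun k _ => by ring

private lemma fAct_sub (f : Polynomial ℤ) (x y : ℤ → ℝ) :
    fAct f (x - y) = fAct f x - fAct f y := by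
  funext n
  simp only [fAct, Pi.sub_apply, mul_sub, Finset.sum_sub_distrib]

private lemma rec_unique (m : ℕ) (a : ℕ → ℂ) (h0 : a 0 ≠ 0) (hm' : a m ≠ 0)
    (W : ℤ → ℂ) (hrec : ∀ n : ℤ, ∑ k ∈ Finset.range (m+1), a k * W (n + k) = 0)
    (hinit : ∀ i : ℕ, i < m → W i = 0) : ∀ n : ℤ, W n = 0 := by
  have fwd : ∀ N : ℕ, W N = 0 := by
    intro N
    induction N using Nat.strong_induction_on with
    | _ N IH =>
      by_cases hN : N < m
      · exact hinit N hN
      push_neg at hN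
      have h := hrec ((N : ℤ) - m)
      rw [Finset.sum_range_succ] at h
      have key : ∀ k ∈ Finset.range m, a k * W ((N : ℤ) - m + k) = 0 := by
        intro k hk
        rw [Finset.mem_range] at hk
        have : (N : ℤ) - m + k = ((N - m + k : ℕ) : ℤ) := by
          push_cast [Nat.cast_sub hN]; ring
        rw [this, IH _ (by omega), mul_zero]
      rw [Finset.sum_eq_zero key, zero_add] at h
      have : (N : ℤ) - m + m = N := by ring
      rw [this] at h
      exact (mul_eq_zero.mp h).resolve_left hm'
  have bwd : ∀ N : ℕ, ∀ n : ℤ, -(N : ℤ) ≤ n → W n = 0 := by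
    intro N
    induction N with
    | zero =>
      intro n hn
      have : n = ((n.toNat : ℕ) : ℤ) := (Int.toNat_of_nonneg (by exact_mod_cast hn)).symm
      rw [this]; exact fwd _
    | succ N IH =>
      intro n hn
      by_cases h' : -(N : ℤ) ≤ n
      · exact IH n h'
      push_neg at h'
      have h := hrec n
      rw [Finset.sum_range_succ'] at h
      have key : ∀ k ∈ Finset.range m, a (k + 1) * W (n + ((k : ℕ) + 1 : ℕ)) = 0 := by
        intro k hk
        rw [IH _ (by push_cast; omega), mul_zero]
      rw [Finset.sum_eq_zero key, zero_add] at h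
      simp only [Nat.cast_zero, add_zero] at h
      exact (mul_eq_zero.mp h).resolve_left h0
  intro n
  rcases le_or_gt 0 n with h | h
  · exact bwd 0 n (by omega)
  · exact bwd n.natAbs n (by omega)

private lemma roots_setup (f : Polynomial ℤ) (m : ℕ) (hm : 0 < m) (hdeg : f.natDegree = m)
    (hirr : Irreducible f) :
    ∃ ω : Fin m → ℂ, Function.Injective ω ∧
      ∀ j, (f.map (Int.castRingHom ℂ)).IsRoot (ω j) := by
  set F := f.map (Int.castRingHom ℂ) with hF
  have hfne : f ≠ 0 := fun h => by simp [h] at hdeg; omega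
  have hFdeg : F.natDegree = m := by
    rw [hF, Polynomial.natDegree_map_eq_of_injective (fun a b h => by simpa using h)]
    exact hdeg
  have hprim : f.IsPrimitive := by
    intro r hr
    obtain ⟨q, hq⟩ := hr
    rcases hirr.isUnit_or_isUnit hq with h | h
    · exact Polynomial.isUnit_C.mp h
    · exfalso
      have : f.natDegree = 0 := by
        rw [hq, Polynomial.natDegree_mul (fun h0 => by simp [h0] at hq; exact hfne hq)
          h.ne_zero]
        simp [Polynomial.natDegree_eq_zero_of_isUnit h]
      omega
  have hQirr : Irreducible (f.map (Int.castRingHom ℚ)) :=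
    (Polynomial.IsPrimitive.Int.irreducible_iff_irreducible_map_cast hprim).mp hirr
  have hsep : (f.map (Int.castRingHom ℚ)).Separable := hQirr.separable
  have hFsep : F.Separable := by
    have : F = (f.map (Int.castRingHom ℚ)).map (algebraMap ℚ ℂ) := by
      rw [hF, Polynomial.map_map]; rfl
    rw [this]; exact hsep.map
  have hFne : F ≠ 0 := fun h => by rw [h] at hFdeg; simp at hFdeg; omega
  have hnodup : F.roots.Nodup := Polynomial.nodup_roots hFsep
  have hcard : F.roots.card = m := by
    rw [← hFdeg]
    exact (Polynomial.splits_iff_card_roots.mp (IsAlgClosed.splits F)).symm ▸ rfl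
  have hcard' : F.roots.toFinset.card = m := by
    rw [Multiset.toFinset_card_of_nodup hnodup, hcard]
  obtain e := Finset.equivFinOfCardEq hcard'
  refine ⟨fun j => (e.symm j : ℂ), fun j k h => ?_, fun j => ?_⟩
  · exact e.symm.injective (Subtype.ext h)
  · exact (Polynomial.mem_roots hFne).mp (Multiset.mem_toFinset.mp (e.symm j).2)

private lemma exists_rep (m : ℕ) (a : ℕ → ℂ) (h0 : a 0 ≠ 0) (hm' : a m ≠ 0)
    (ω : Fin m → ℂ) (hinj : Function.Injective ω) (hω0 : ∀ j, ω j ≠ 0)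
    (hroot : ∀ j, ∑ k ∈ Finset.range (m+1), a k * ω j ^ k = 0)
    (W : ℤ → ℂ) (hrec : ∀ n : ℤ, ∑ k ∈ Finset.range (m+1), a k * W (n + k) = 0) :
    ∃ c : Fin m → ℂ, ∀ n : ℤ, W n = ∑ j, c j * ω j ^ n := by
  set M : Matrix (Fin m) (Fin m) ℂ := (Matrix.vandermonde ω)ᵀ with hM
  have hdet : M.det ≠ 0 := by
    rw [hM, Matrix.det_transpose, Matrix.det_vandermonde]
    refine Finset.prod_ne_zero_iff.mpr fun i _ => Finset.prod_ne_zero_iff.mpr fun j hj => ?_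
    exact sub_ne_zero_of_ne fun h => absurd (hinj h) (ne_of_gt (Finset.mem_Ioi.mp hj))
  set c : Fin m → ℂ := M⁻¹ *ᵥ (fun i : Fin m => W (i : ℕ)) with hc
  have hMc : M *ᵥ c = fun i : Fin m => W (i : ℕ) := by
    rw [hc, Matrix.mulVec_mulVec, Matrix.mul_nonsing_inv M (isUnit_iff_ne_zero.mpr hdet),
      Matrix.one_mulVec]
  set V : ℤ → ℂ := fun n => ∑ j, c j * ω j ^ n with hV
  have hVrec : ∀ n : ℤ, ∑ k ∈ Finset.range (m+1), a k * V (n + k) = 0 := by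
    intro n
    have step : ∀ k ∈ Finset.range (m+1),
        a k * V (n + k) = ∑ j, (c j * ω j ^ n) * (a k * ω j ^ k) := by
      intro k _
      rw [hV]
      simp only
      rw [Finset.mul_sum]
      refine Finset.sum_congr rfl fun j _ => ?_
      rw [zpow_add₀ (hω0 j), zpow_natCast]; ring
    rw [Finset.sum_congr rfl step, Finset.sum_comm]
    refine Finset.sum_eq_zero fun j _ => ?_
    rw [← Finset.mul_sum, hroot j, mul_zero]
  have hVinit : ∀ i : ℕ, i < m → V i = W i := by
    intro i hi
    have h1 := congrFun hMc ⟨i, hi⟩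
    simp only [Matrix.mulVec, dotProduct, hM, Matrix.transpose_apply,
      Matrix.vandermonde] at h1
    rw [hV]
    simp only
    rw [← h1]
    refine Finset.sum_congr rfl fun j _ => ?_
    simp only [Matrix.of_apply]
    rw [zpow_natCast]; ring
  have key := rec_unique m a h0 hm' (fun n => W n - V n)
    (fun n => by
      have : ∑ k ∈ Finset.range (m+1), a k * (W (n + k) - V (n + k))
          = ∑ k ∈ Finset.range (m+1), (a k * W (n + k) - a k * V (n + k)) :=
        Finset.sum_congr rfl fun k _ => by ring
      rw [this, Finset.sum_sub_distrib, hrec n, hVrec n, sub_zero])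
    (fun i hi => by show W i - V i = 0; rw [hVinit i hi, sub_self])
  exact ⟨c, fun n => sub_eq_zero.mp (key n)⟩

private lemma bounded_kill (m : ℕ) (ω : Fin m → ℂ) (hinj : Function.Injective ω)
    (hω0 : ∀ j, ω j ≠ 0) (c : Fin m → ℂ) (W : ℤ → ℂ)
    (hW : ∀ n : ℤ, W n = ∑ j, c j * ω j ^ n)
    (C : ℝ) (hbd : ∀ n : ℤ, ‖W n‖ ≤ C) :
    ∀ j, c j ≠ 0 → ‖ω j‖ = 1 := by
  set M : Matrix (Fin m) (Fin m) ℂ := (Matrix.vandermonde ω)ᵀ with hM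
  have hdet : M.det ≠ 0 := by
    rw [hM, Matrix.det_transpose, Matrix.det_vandermonde]
    refine Finset.prod_ne_zero_iff.mpr fun i _ => Finset.prod_ne_zero_iff.mpr fun j hj => ?_
    exact sub_ne_zero_of_ne fun h => absurd (hinj h) (ne_of_gt (Finset.mem_Ioi.mp hj))
  have main : ∀ (j : Fin m) (n : ℤ),
      ‖c j * ω j ^ n‖ ≤ ∑ i, ‖M⁻¹ j i‖ * C := by
    intro j n
    set d : Fin m → ℂ := fun j => c j * ω j ^ n with hd
    have hMd : M *ᵥ d = fun i : Fin m => W (n + (i : ℕ)) := by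
      funext i
      simp only [Matrix.mulVec, dotProduct, hM, Matrix.transpose_apply,
        Matrix.vandermonde, Matrix.of_apply, hd]
      rw [hW (n + (i : ℕ))]
      refine Finset.sum_congr rfl fun k _ => ?_
      rw [zpow_add₀ (hω0 k), zpow_natCast]; ring
    have hdj : d = M⁻¹ *ᵥ fun i : Fin m => W (n + (i : ℕ)) := by
      rw [← hMd, Matrix.mulVec_mulVec,
        Matrix.nonsing_inv_mul M (isUnit_iff_ne_zero.mpr hdet), Matrix.one_mulVec]
    have : ‖d j‖ ≤ ∑ i, ‖M⁻¹ j i‖ * C := by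
      rw [hdj]
      simp only [Matrix.mulVec, dotProduct]
      refine le_trans (norm_sum_le _ _) (Finset.sum_le_sum fun i _ => ?_)
      rw [norm_mul]
      exact mul_le_mul_of_nonneg_left (hbd _) (norm_nonneg _)
    exact this
  intro j hcj
  set K : ℝ := ∑ i, ‖M⁻¹ j i‖ * C with hK
  set r : ℝ := ‖ω j‖ with hr
  have hr0 : 0 < r := by rw [hr]; exact norm_pos_iff.mpr (hω0 j)
  have hc0 : 0 < ‖c j‖ := norm_pos_iff.mpr hcj
  have bound : ∀ n : ℤ, ‖c j‖ * r ^ n ≤ K := by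
    intro n
    have := main j n
    rwa [norm_mul, norm_zpow] at this
  by_contra hne
  rcases lt_or_gt_of_ne hne with hlt | hgt
  · have h1 : 1 < r⁻¹ := (one_lt_inv_iff₀).mpr ⟨hr0, hlt⟩
    obtain ⟨N, hN⟩ := pow_unbounded_of_one_lt (K / ‖c j‖) h1
    have hb := bound (-(N : ℤ))
    rw [_root_.zpow_neg, ← _root_.inv_zpow, zpow_natCast] at hb
    have : K < ‖c j‖ * r⁻¹ ^ N := by
      rw [div_lt_iff₀ hc0] at hN; linarith [hN]
    linarith
  · obtain ⟨N, hN⟩ := pow_unbounded_of_one_lt (K / ‖c j‖) hgt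
    have hb := bound (N : ℤ)
    rw [zpow_natCast] at hb
    have : K < ‖c j‖ * r ^ N := by
      rw [div_lt_iff₀ hc0] at hN; linarith [hN]
    linarith

/-- The kernel of `f(σ̄)` acting on `ℓ^∞(ℤ,ℝ)` equals the real linear span of the
sequences `(Re(ω^n))ₙ` and `(Im(ω^n))ₙ`, with `ω` ranging over the roots of `f` of absolute
value 1.  In particular, `f(σ̄)` is injective on `ℓ^∞(ℤ,ℝ)` iff `f` has no root of absolute
value 1. -/
theorem kernel_of_fAct_eq_span
    (f : Polynomial ℤ) (m : ℕ) (hm : 0 < m) (hdeg : f.natDegree = m)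
    (hlead : 0 < f.leadingCoeff) (hconst : f.coeff 0 ≠ 0) (hirr : Irreducible f) :
    ({w : ℤ → ℝ | (∃ C : ℝ, ∀ n : ℤ, |w n| ≤ C) ∧ fAct f w = 0}
      = ↑(Submodule.span ℝ {w : ℤ → ℝ | ∃ ω : ℂ, Polynomial.aeval ω f = 0 ∧
          ‖ω‖ = 1 ∧
          (w = (fun n : ℤ => (ω ^ n).re) ∨ w = (fun n : ℤ => (ω ^ n).im))})) ∧
    (Set.InjOn (fAct f) {w : ℤ → ℝ | ∃ C : ℝ, ∀ n : ℤ, |w n| ≤ C} ↔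
      ¬ ∃ ω : ℂ, Polynomial.aeval ω f = 0 ∧ ‖ω‖ = 1) := by
  -- setup
  set a : ℕ → ℂ := fun k => (f.coeff k : ℂ) with ha
  have h0 : a 0 ≠ 0 := by simpa [ha] using hconst
  have hm' : a m ≠ 0 := by
    have : f.coeff m ≠ 0 := by
      rw [← hdeg]; rw [← Polynomial.leadingCoeff]; exact ne_of_gt hlead
    simpa [ha] using this
  set F := f.map (Int.castRingHom ℂ) with hF
  have hFdeg : F.natDegree = m := by
    rw [hF, Polynomial.natDegree_map_eq_of_injective (fun a b h => by simpa using h)]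
    exact hdeg
  have hFcoeff : ∀ k, F.coeff k = a k := fun k => by
    rw [hF, Polynomial.coeff_map]; rfl
  -- aeval ↔ sum
  have aeval_eq : ∀ z : ℂ, Polynomial.aeval z f
      = ∑ k ∈ Finset.range (m+1), a k * z ^ k := by
    intro z
    rw [Polynomial.aeval_def, ← Polynomial.eval_map]
    have : f.map (algebraMap ℤ ℂ) = F := by rw [hF, algebraMap_int_eq]
    rw [this, Polynomial.eval_eq_sum_range, hFdeg]
    exact Finset.sum_congr rfl fun k _ => by rw [hFcoeff]
  -- geometric solutions
  have geom : ∀ z : ℂ, z ≠ 0 → (∑ k ∈ Finset.range (m+1), a k * z ^ k = 0) →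
      ∀ n : ℤ, ∑ k ∈ Finset.range (m+1), a k * z ^ (n + (k : ℤ)) = 0 := by
    intro z hz hsum n
    have : ∀ k ∈ Finset.range (m+1), a k * z ^ (n + (k : ℤ)) = z ^ n * (a k * z ^ k) := by
      intro k _
      rw [zpow_add₀ hz, zpow_natCast]; ring
    rw [Finset.sum_congr rfl this, ← Finset.mul_sum, hsum, mul_zero]
  -- fAct in terms of a
  have fAct_eq : ∀ (w : ℤ → ℝ) (n : ℤ), ((fAct f w n : ℝ) : ℂ)
      = ∑ k ∈ Finset.range (m+1), a k * ((w (n + (k : ℤ)) : ℝ) : ℂ) := by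
    intro w n
    rw [fAct, hdeg]
    push_cast
    rfl
  -- generator sequences lie in the kernel set
  have gen_mem : ∀ w : ℤ → ℝ, (∃ ω : ℂ, Polynomial.aeval ω f = 0 ∧ ‖ω‖ = 1 ∧
      (w = (fun n : ℤ => (ω ^ n).re) ∨ w = (fun n : ℤ => (ω ^ n).im))) →
      (∃ C : ℝ, ∀ n : ℤ, |w n| ≤ C) ∧ fAct f w = 0 := by
    rintro w ⟨ω, hroot, habs, hor⟩
    have hω0 : ω ≠ 0 := fun h => by rw [h] at habs; simp at habs
    have hsum : ∑ k ∈ Finset.range (m+1), a k * ω ^ k = 0 := by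
      rw [← aeval_eq]; exact hroot
    have habs' : ∀ n : ℤ, ‖ω ^ n‖ = 1 := by
      intro n; rw [norm_zpow, habs, _root_.one_zpow]
    constructor
    · refine ⟨1, fun n => ?_⟩
      rcases hor with h | h <;> rw [h]
      · exact le_trans (Complex.abs_re_le_norm _) (le_of_eq (habs' n))
      · exact le_trans (Complex.abs_im_le_norm _) (le_of_eq (habs' n))
    · funext n
      have hz := geom ω hω0 hsum n
      have hcast : ∀ k : ℕ, a k = (((f.coeff k : ℝ)) : ℂ) := fun k => by
        rw [ha]; push_cast; rfl
      rcases hor with h | h <;> subst h <;>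
        simp only [fAct, hdeg, Pi.zero_apply]
      · have : ∑ k ∈ Finset.range (m+1), (f.coeff k : ℝ) * (ω ^ (n + (k:ℤ))).re
            = (∑ k ∈ Finset.range (m+1), a k * ω ^ (n + (k:ℤ))).re := by
          rw [Complex.re_sum]
          exact Finset.sum_congr rfl fun k _ => by
            rw [hcast k, Complex.re_ofReal_mul]
        rw [this, hz, Complex.zero_re]
      · have : ∑ k ∈ Finset.range (m+1), (f.coeff k : ℝ) * (ω ^ (n + (k:ℤ))).im
            = (∑ k ∈ Finset.range (m+1), a k * ω ^ (n + (k:ℤ))).im := by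
          rw [Complex.im_sum]
          exact Finset.sum_congr rfl fun k _ => by
            rw [hcast k, Complex.im_ofReal_mul]
        rw [this, hz, Complex.zero_im]
  set S : Set (ℤ → ℝ) := {w : ℤ → ℝ | ∃ ω : ℂ, Polynomial.aeval ω f = 0 ∧
      ‖ω‖ = 1 ∧
      (w = (fun n : ℤ => (ω ^ n).re) ∨ w = (fun n : ℤ => (ω ^ n).im))} with hS
  have aevalF : ∀ z : ℂ, Polynomial.aeval z f = F.eval z := fun z => by
    rw [Polynomial.aeval_def, ← Polynomial.eval_map, hF, algebraMap_int_eq]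
  let Ksub : Submodule ℝ (ℤ → ℝ) :=
    { carrier := {w : ℤ → ℝ | (∃ C : ℝ, ∀ n : ℤ, |w n| ≤ C) ∧ fAct f w = 0}
      add_mem' := by
        rintro x y ⟨⟨Cx, hCx⟩, hx⟩ ⟨⟨Cy, hCy⟩, hy⟩
        exact ⟨⟨Cx + Cy, fun n => le_trans (abs_add_le _ _) (add_le_add (hCx n) (hCy n))⟩,
          by rw [fAct_add, hx, hy, add_zero]⟩
      zero_mem' := ⟨⟨0, fun n => by simp⟩, by funext n; simp [fAct]⟩
      smul_mem' := by
        rintro r x ⟨⟨Cx, hCx⟩, hx⟩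
        refine ⟨⟨|r| * Cx, fun n => ?_⟩, by rw [fAct_smul, hx, smul_zero]⟩
        rw [Pi.smul_apply, smul_eq_mul, abs_mul]
        exact mul_le_mul_of_nonneg_left (hCx n) (abs_nonneg r) }
  have span_le : (Submodule.span ℝ S : Set (ℤ → ℝ))
      ⊆ {w : ℤ → ℝ | (∃ C : ℝ, ∀ n : ℤ, |w n| ≤ C) ∧ fAct f w = 0} :=
    fun x hx => (Submodule.span_le (p := Ksub)).mpr (fun w hw => gen_mem w hw) hx
  have hard : {w : ℤ → ℝ | (∃ C : ℝ, ∀ n : ℤ, |w n| ≤ C) ∧ fAct f w = 0}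
      ⊆ (Submodule.span ℝ S : Set (ℤ → ℝ)) := by
    rintro w ⟨⟨C, hC⟩, hker⟩
    obtain ⟨ω, hinj, hroots⟩ := roots_setup f m hm hdeg hirr
    have hω0 : ∀ j, ω j ≠ 0 := fun j h => by
      have h2 := hroots j
      rw [Polynomial.IsRoot, h, ← Polynomial.coeff_zero_eq_eval_zero] at h2
      exact h0 (by rw [← hFcoeff 0]; exact h2)
    have hrootsum : ∀ j, ∑ k ∈ Finset.range (m+1), a k * ω j ^ k = 0 := fun j => by
      rw [← aeval_eq, aevalF]; exact hroots j
    set W : ℤ → ℂ := fun n => ((w n : ℝ) : ℂ) with hW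
    have hrec : ∀ n : ℤ, ∑ k ∈ Finset.range (m+1), a k * W (n + k) = 0 := fun n => by
      rw [← fAct_eq w n, congrFun hker n]
      simp
    obtain ⟨c, hc⟩ := exists_rep m a h0 hm' ω hinj hω0 hrootsum W hrec
    have hkill := bounded_kill m ω hinj hω0 c W hc C (fun n => by
      rw [hW]; simp only [Complex.norm_real, Real.norm_eq_abs]; exact hC n)
    have hpt : ∀ n : ℤ,
        w n = ∑ j, ((c j).re * ((ω j) ^ n).re - (c j).im * ((ω j) ^ n).im) := by
      intro n
      have h := congrArg Complex.re (hc n)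
      rw [Complex.re_sum] at h
      simpa [Complex.mul_re, hW] using h
    have weq : w = ∑ j, ((c j).re • (fun n : ℤ => ((ω j) ^ n).re)
        - (c j).im • (fun n : ℤ => ((ω j) ^ n).im)) := by
      funext n
      rw [Finset.sum_apply, hpt n]
      exact Finset.sum_congr rfl fun j _ => by
        simp [Pi.sub_apply, Pi.smul_apply, smul_eq_mul]
    rw [weq]
    refine SetLike.mem_coe.mpr (Submodule.sum_mem _ fun j _ => ?_)
    by_cases hcj : c j = 0
    · simp [hcj]
    · have habs := hkill j hcj
      have hu : (fun n : ℤ => ((ω j) ^ n).re) ∈ S :=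
        ⟨ω j, by rw [aevalF]; exact hroots j, habs, Or.inl rfl⟩
      have hv : (fun n : ℤ => ((ω j) ^ n).im) ∈ S :=
        ⟨ω j, by rw [aevalF]; exact hroots j, habs, Or.inr rfl⟩
      exact Submodule.sub_mem _ (Submodule.smul_mem _ _ (Submodule.subset_span hu))
        (Submodule.smul_mem _ _ (Submodule.subset_span hv))
  have part1 : {w : ℤ → ℝ | (∃ C : ℝ, ∀ n : ℤ, |w n| ≤ C) ∧ fAct f w = 0}
      = (Submodule.span ℝ S : Set (ℤ → ℝ)) := Set.Subset.antisymm hard span_le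
  refine ⟨part1, ?_, ?_⟩
  · intro hinjOn
    rintro ⟨ω, h1, h2⟩
    have hmem := gen_mem (fun n : ℤ => (ω ^ n).re) ⟨ω, h1, h2, Or.inl rfl⟩
    have h0mem : (0 : ℤ → ℝ) ∈ {w : ℤ → ℝ | ∃ C : ℝ, ∀ n : ℤ, |w n| ≤ C} :=
      ⟨0, fun n => by simp⟩
    have hz : fAct f (0 : ℤ → ℝ) = 0 := by funext n; simp [fAct]
    have heq : (fun n : ℤ => (ω ^ n).re) = (0 : ℤ → ℝ) :=
      hinjOn hmem.1 h0mem (by rw [hmem.2, hz])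
    have := congrFun heq 0
    simp at this
  · intro hno
    intro x hx y hy hxy
    have hmem : x - y ∈ {w : ℤ → ℝ | (∃ C : ℝ, ∀ n : ℤ, |w n| ≤ C) ∧ fAct f w = 0} := by
      obtain ⟨Cx, hCx⟩ := hx
      obtain ⟨Cy, hCy⟩ := hy
      refine ⟨⟨Cx + Cy, fun n => le_trans (abs_sub _ _) (add_le_add (hCx n) (hCy n))⟩, ?_⟩
      rw [fAct_sub, hxy, sub_self]
    have Sempty : S = ∅ := by
      ext w
      simp only [Set.mem_empty_iff_false, iff_false, hS]
      rintro ⟨ω, h1, h2, _⟩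
      exact hno ⟨ω, h1, h2⟩
    rw [part1, Sempty, Submodule.span_empty] at hmem
    have : x - y = 0 := by simpa using hmem
    exact sub_eq_zero.mp this
end

section
/- Let f ∈ R₁ be an irreducible polynomial with m > 0, f_m > 0, f₀ ≠ 0, which is nonhyperbolic (f has a root of absolute value 1) and not cyclotomic, and let α = α_{R₁/(f)} be the corresponding automorphism of X = X_{R₁/(f)}. If φ : ℓ^∞(ℤ,ℤ) → X is continuous (for the topology of coordinatewise convergence on ℓ^∞(ℤ,ℤ)) and satisfies φ ∘ σ̄ = α ∘ φ, then φ is constant, and its single value is a fixed point of α. -/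
open Filter Topology

/-- The group `X = X_{R₁/(f)} = ker f(τ) ⊆ 𝕋^ℤ`. -/
def XSet (f : Polynomial ℤ) : Set (ℤ → AddCircle (1 : ℝ)) :=
  {x | ∀ j : ℤ, ∑ k ∈ Finset.range (f.natDegree + 1), f.coeff k • x (j + (k : ℤ)) = 0}

/-- The set `ℓ^∞(ℤ,ℤ)` of bounded integer sequences (inside `ℤ^ℤ`, which carries the product
topology of coordinatewise convergence). -/
def BddZ : Set (ℤ → ℤ) := {v | ∃ C : ℤ, ∀ n : ℤ, |v n| ≤ C}

section Aux
open Polynomial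

lemma no_biasymptotic {M : ℕ} {V : Type} [AddCommGroup V] [Module ℝ V]
    (ι : V →ₗ[ℝ] (Fin M → ℝ)) (hι : LinearMap.ker ι = ⊥)
    (B D : V →ₗ[ℝ] V) (hBD : B ∘ₗ D = LinearMap.id) (hDB : D ∘ₗ B = LinearMap.id)
    (hB : ∀ w : V, Tendsto (fun n : ℕ => ι ((B ^ n) w)) atTop (𝓝 0))
    (hD : ∀ w : V, Tendsto (fun n : ℕ => ι ((D ^ n) w)) atTop (𝓝 0)) :
    Subsingleton V := by
  haveI : FiniteDimensional ℝ V := FiniteDimensional.of_injective ι (LinearMap.ker_eq_bot.mp hι)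
  by_contra hns
  haveI : Nontrivial V := not_subsingleton_iff_nontrivial.mp hns
  have hd : 0 < Module.finrank ℝ V := Module.finrank_pos
  set d := Module.finrank ℝ V with hdd
  haveI : Nonempty (Fin d) := ⟨⟨0, hd⟩⟩
  let b : Module.Basis (Fin d) ℝ V := Module.finBasis ℝ V
  obtain ⟨l, hl⟩ := ι.exists_leftInverse_of_injective hι
  have key : ∀ T : V →ₗ[ℝ] V, (∀ w : V, Tendsto (fun n : ℕ => ι ((T ^ n) w)) atTop (𝓝 0)) →
      |LinearMap.det T| < 1 := by
    intro T hT
    rw [← tendsto_pow_atTop_nhds_zero_iff]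
    have hmat : Tendsto (fun n : ℕ => LinearMap.toMatrix b b (T ^ n)) atTop
        (𝓝 (0 : Matrix (Fin d) (Fin d) ℝ)) := by
      refine tendsto_pi_nhds.mpr ?_
      intro i
      rw [tendsto_pi_nhds]
      intro j
      have hentry : ∀ n : ℕ, (LinearMap.toMatrix b b (T ^ n)) i j
          = ((Finsupp.lapply i ∘ₗ (b.repr : V →ₗ[ℝ] (Fin d →₀ ℝ))) ∘ₗ l) (ι ((T ^ n) (b j))) := by
        intro n
        have : l (ι ((T ^ n) (b j))) = (T ^ n) (b j) := by
          have := congrArg (fun g : V →ₗ[ℝ] V => g ((T ^ n) (b j))) hl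
          simpa using this
        simp [LinearMap.toMatrix_apply, this]
      simp only [hentry]
      have hcont : Continuous ((Finsupp.lapply i ∘ₗ (b.repr : V →ₗ[ℝ] (Fin d →₀ ℝ))) ∘ₗ l) :=
        LinearMap.continuous_of_finiteDimensional _
      have := (hcont.continuousAt (x := (0 : Fin M → ℝ))).tendsto.comp (hT (b j))
      simpa [Function.comp_def] using this
    have hdet : Tendsto (fun n : ℕ => (LinearMap.toMatrix b b (T ^ n)).det) atTop
        (𝓝 ((0 : Matrix (Fin d) (Fin d) ℝ).det)) :=
      ((Continuous.matrix_det continuous_id).continuousAt).tendsto.comp hmat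
    rw [Matrix.det_zero] at hdet
    have heq : ∀ n : ℕ, (LinearMap.toMatrix b b (T ^ n)).det = (LinearMap.det T) ^ n := by
      intro n
      rw [LinearMap.det_toMatrix, map_pow]
    simpa only [heq] using hdet
  have h1 := key B hB
  have h2 := key D hD
  have hprod : LinearMap.det B * LinearMap.det D = 1 := by
    rw [← LinearMap.det_comp, hBD, LinearMap.det_id]
  have := abs_mul (LinearMap.det B) (LinearMap.det D)
  rw [hprod, abs_one] at this
  nlinarith [abs_nonneg (LinearMap.det B), abs_nonneg (LinearMap.det D)]


lemma recur_decay_eq_zero (m : ℕ) (hm : 0 < m) (c : ℕ → ℤ) (hc0 : c 0 ≠ 0) (hcm : c m ≠ 0)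
    (r : ℤ → ℝ)
    (hrec : ∀ j : ℤ, ∑ k ∈ Finset.range (m + 1), (c k : ℝ) * r (j + (k : ℤ)) = 0)
    (hp : Tendsto r atTop (𝓝 0)) (hq : Tendsto r atBot (𝓝 0)) :
    r = 0 := by
  let P : (ℤ → ℝ) → Prop := fun x =>
    (∀ j : ℤ, ∑ k ∈ Finset.range (m + 1), (c k : ℝ) * x (j + (k : ℤ)) = 0) ∧
      Tendsto x atTop (𝓝 0) ∧ Tendsto x atBot (𝓝 0)
  let V : Submodule ℝ (ℤ → ℝ) :=
  { carrier := {x | P x}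
    add_mem' := by
      rintro x y ⟨hx1, hx2, hx3⟩ ⟨hy1, hy2, hy3⟩
      refine ⟨fun j => ?_, by have h := hx2.add hy2; rw [add_zero] at h; exact h, by have h := hx3.add hy3; rw [add_zero] at h; exact h⟩
      simp only [Pi.add_apply, mul_add, Finset.sum_add_distrib, hx1 j, hy1 j, add_zero]
    zero_mem' := ⟨fun j => by simp, tendsto_const_nhds, tendsto_const_nhds⟩
    smul_mem' := by
      rintro a x ⟨hx1, hx2, hx3⟩
      refine ⟨fun j => ?_, by have h := hx2.const_mul a; rw [mul_zero] at h; exact h, by have h := hx3.const_mul a; rw [mul_zero] at h; exact h⟩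
      simp only [Pi.smul_apply, smul_eq_mul]
      calc ∑ k ∈ Finset.range (m + 1), (c k : ℝ) * (a * x (j + (k : ℤ)))
          = a * ∑ k ∈ Finset.range (m + 1), (c k : ℝ) * x (j + (k : ℤ)) := by
            rw [Finset.mul_sum]; exact Finset.sum_congr rfl fun k _ => by ring
        _ = 0 := by rw [hx1 j, mul_zero] }
  -- shift maps on sequences
  let shiftF : (ℤ → ℝ) →ₗ[ℝ] (ℤ → ℝ) :=
    { toFun := fun x j => x (j + 1), map_add' := fun _ _ => rfl, map_smul' := fun _ _ => rfl }
  let backF : (ℤ → ℝ) →ₗ[ℝ] (ℤ → ℝ) :=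
    { toFun := fun x j => x (j - 1), map_add' := fun _ _ => rfl, map_smul' := fun _ _ => rfl }
  have hshift_mem : ∀ x ∈ V, shiftF x ∈ V := by
    rintro x ⟨hx1, hx2, hx3⟩
    refine ⟨fun j => ?_, ?_, ?_⟩
    · have := hx1 (j + 1)
      rw [← this]
      exact Finset.sum_congr rfl fun k _ => by rw [add_right_comm]; rfl
    · exact hx2.comp (tendsto_atTop_add_const_right atTop 1 tendsto_id)
    · exact hx3.comp (tendsto_atBot_add_const_right atBot 1 tendsto_id)
  have hback_mem : ∀ x ∈ V, backF x ∈ V := by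
    rintro x ⟨hx1, hx2, hx3⟩
    refine ⟨fun j => ?_, ?_, ?_⟩
    · have := hx1 (j - 1)
      rw [← this]
      exact Finset.sum_congr rfl fun k _ => by rw [sub_add_eq_add_sub]; rfl
    · exact hx2.comp (tendsto_atTop_add_const_right atTop (-1) tendsto_id)
    · exact hx3.comp (tendsto_atBot_add_const_right atBot (-1) tendsto_id)
  let B : V →ₗ[ℝ] V := shiftF.restrict hshift_mem
  let D : V →ₗ[ℝ] V := backF.restrict hback_mem
  have hBval : ∀ (w : V) (j : ℤ), ((B w : ℤ → ℝ)) j = (w : ℤ → ℝ) (j + 1) := fun _ _ => rfl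
  have hDval : ∀ (w : V) (j : ℤ), ((D w : ℤ → ℝ)) j = (w : ℤ → ℝ) (j - 1) := fun _ _ => rfl
  have hBpow : ∀ (n : ℕ) (w : V) (j : ℤ), (((B ^ n) w : ℤ → ℝ)) j = (w : ℤ → ℝ) (j + n) := by
    intro n
    induction n with
    | zero => intro w j; simp
    | succ n ih =>
      intro w j
      rw [pow_succ, Module.End.mul_apply, ih (B w) j, hBval]
      congr 1
      push_cast
      ring
  have hDpow : ∀ (n : ℕ) (w : V) (j : ℤ), (((D ^ n) w : ℤ → ℝ)) j = (w : ℤ → ℝ) (j - n) := by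
    intro n
    induction n with
    | zero => intro w j; simp
    | succ n ih =>
      intro w j
      rw [pow_succ, Module.End.mul_apply, ih (D w) j, hDval]
      congr 1
      push_cast
      ring
  have hBD : B ∘ₗ D = LinearMap.id := by
    apply LinearMap.ext; intro w; apply Subtype.ext; funext j
    show (w : ℤ → ℝ) (j + 1 - 1) = (w : ℤ → ℝ) j
    norm_num
  have hDB : D ∘ₗ B = LinearMap.id := by
    apply LinearMap.ext; intro w; apply Subtype.ext; funext j
    show (w : ℤ → ℝ) (j - 1 + 1) = (w : ℤ → ℝ) j
    norm_num
  let ι : V →ₗ[ℝ] (Fin m → ℝ) :=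
    { toFun := fun w k => (w : ℤ → ℝ) (k : ℤ), map_add' := fun _ _ => rfl,
      map_smul' := fun _ _ => rfl }
  have hι : LinearMap.ker ι = ⊥ := by
    rw [LinearMap.ker_eq_bot]
    intro w w' hww
    -- reduce to: if ι w = 0 then w = 0
    suffices hker : ∀ u : V, ι u = 0 → u = 0 by
      have h1 : ι (w - w') = 0 := by rw [map_sub, hww, sub_self]
      have := hker _ h1
      exact sub_eq_zero.mp this
    intro u hu
    have hcoords : ∀ k : Fin m, (u : ℤ → ℝ) (k : ℤ) = 0 := fun k => congrFun hu k
    have hzero : ∀ n : ℕ, ∀ j : ℤ, -(n : ℤ) ≤ j → j ≤ (m : ℤ) - 1 + n → (u : ℤ → ℝ) j = 0 := by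
      intro n
      induction n with
      | zero =>
        intro j h1 h2
        have h0 : 0 ≤ j := by omega
        have hlt : j.toNat < m := by omega
        have := hcoords ⟨j.toNat, hlt⟩
        simpa [Int.toNat_of_nonneg h0] using this
      | succ n ih =>
        intro j h1 h2
        by_cases hcase : -(n : ℤ) ≤ j ∧ j ≤ (m : ℤ) - 1 + n
        · exact ih j hcase.1 hcase.2
        · push_cast at h1 h2
          rcases (by omega : j = (m : ℤ) + n ∨ j = -((n : ℤ) + 1)) with hj | hj
          · -- use recurrence at n, peel top coefficient
            have hr := u.2.1 (n : ℤ)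
            rw [Finset.sum_range_succ] at hr
            have hmid : ∑ k ∈ Finset.range m, (c k : ℝ) * (u : ℤ → ℝ) ((n : ℤ) + k) = 0 := by
              apply Finset.sum_eq_zero
              intro k hk
              have hk' : k < m := Finset.mem_range.mp hk
              rw [ih ((n : ℤ) + k) (by omega) (by omega), mul_zero]
            rw [hmid, zero_add] at hr
            have hcm' : ((c m : ℝ)) ≠ 0 := Int.cast_ne_zero.mpr hcm
            have := (mul_eq_zero.mp hr).resolve_left hcm'
            rw [hj]
            rw [show (m : ℤ) + n = (n : ℤ) + m by ring]
            exact this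
          · -- use recurrence at j, peel bottom coefficient
            have hr := u.2.1 j
            rw [Finset.sum_range_succ'] at hr
            have hmid : ∑ k ∈ Finset.range m, (c (k + 1) : ℝ) * (u : ℤ → ℝ) (j + ((k : ℤ) + 1)) = 0 := by
              apply Finset.sum_eq_zero
              intro k hk
              have hk' : k < m := Finset.mem_range.mp hk
              rw [ih (j + ((k : ℤ) + 1)) (by omega) (by omega), mul_zero]
            have hcast : ∀ k : ℕ, ((k + 1 : ℕ) : ℤ) = (k : ℤ) + 1 := by intro k; push_cast; ring
            simp only [hcast] at hr
            rw [hmid, zero_add] at hr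
            have hc0' : ((c 0 : ℝ)) ≠ 0 := Int.cast_ne_zero.mpr hc0
            have := (mul_eq_zero.mp hr).resolve_left hc0'
            simpa using this
    refine Subtype.ext (funext fun j => ?_)
    have := hzero j.natAbs j (by omega) (by omega)
    simpa using this
  have hBtend : ∀ w : V, Tendsto (fun n : ℕ => ι ((B ^ n) w)) atTop (𝓝 0) := by
    intro w
    rw [tendsto_pi_nhds]
    intro k
    have : (fun n : ℕ => ι ((B ^ n) w) k) = fun n : ℕ => (w : ℤ → ℝ) ((k : ℤ) + n) := by
      funext n
      exact hBpow n w (k : ℤ)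
    rw [this]
    have htt : Tendsto (fun n : ℕ => (k : ℤ) + n) atTop atTop :=
      tendsto_atTop_add_const_left atTop (k : ℤ) tendsto_natCast_atTop_atTop
    exact (w.2.2.1).comp htt
  have hDtend : ∀ w : V, Tendsto (fun n : ℕ => ι ((D ^ n) w)) atTop (𝓝 0) := by
    intro w
    rw [tendsto_pi_nhds]
    intro k
    have : (fun n : ℕ => ι ((D ^ n) w) k) = fun n : ℕ => (w : ℤ → ℝ) ((k : ℤ) - n) := by
      funext n
      exact hDpow n w (k : ℤ)
    rw [this]
    have htt : Tendsto (fun n : ℕ => (k : ℤ) - n) atTop atBot := by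
      apply tendsto_atBot_add_const_left atTop (k : ℤ)
      exact tendsto_neg_atBot_iff.mpr tendsto_natCast_atTop_atTop
    exact (w.2.2.2).comp htt
  have hsub : Subsingleton V := no_biasymptotic ι hι B D hBD hDB hBtend hDtend
  have hrV : r ∈ V := ⟨hrec, hp, hq⟩
  have : (⟨r, hrV⟩ : V) = (0 : V) := Subsingleton.elim _ _
  exact congrArg Subtype.val this


lemma sdiff_sum_helper (s t : Finset ℤ) (f : ℤ → ℂ) :
    ∑ i ∈ s, f i - ∑ i ∈ t, f i = ∑ i ∈ s \ t, f i - ∑ i ∈ t \ s, f i := by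
  rw [← Finset.sum_inter_add_sum_sdiff s t f, ← Finset.sum_inter_add_sum_sdiff t s f,
    Finset.inter_comm]
  ring

lemma laurent_root_zero (m : ℕ) (c : ℕ → ℤ) (lam : ℂ)
    (hlm : ‖lam‖ = 1)
    (hroot : ∑ k ∈ Finset.range (m + 1), (c k : ℂ) * lam ^ k = 0)
    (y : ℤ → ℝ) (hy : ∀ ε : ℝ, 0 < ε → ∃ N₀ : ℕ, ∀ n : ℤ, (N₀ : ℤ) ≤ |n| → |y n| ≤ ε)
    (G : ℤ → ℤ)
    (hG : ∀ j : ℤ, (G j : ℝ) = ∑ k ∈ Finset.range (m + 1), (c k : ℝ) * y (j + (k : ℤ)))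
    (N : ℕ) (hGz : ∀ j : ℤ, (N : ℤ) < |j| → G j = 0) :
    ∑ j ∈ Finset.Icc (-(N : ℤ)) (N : ℤ), (G j : ℂ) * lam ^ (-j) = 0 := by
  have hlam0 : lam ≠ 0 := by
    intro h; rw [h] at hlm; simp at hlm
  set μ : ℂ := lam⁻¹ with hμ
  have hμ0 : μ ≠ 0 := inv_ne_zero hlam0
  have hμabs : ‖μ‖ = 1 := by rw [hμ, norm_inv, hlm]; norm_num
  have habs_zpow : ∀ i : ℤ, ‖μ ^ i‖ = 1 := fun i => by
    rw [norm_zpow, hμabs, one_zpow]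
  have htgt : ∀ j : ℤ, lam ^ (-j) = μ ^ j := fun j => by
    rw [hμ, inv_zpow, ← zpow_neg]
  set T : ℂ := ∑ j ∈ Finset.Icc (-(N : ℤ)) (N : ℤ), (G j : ℂ) * μ ^ j with hT
  have htgt2 : ∑ j ∈ Finset.Icc (-(N : ℤ)) (N : ℤ), (G j : ℂ) * lam ^ (-j) = T := by
    rw [hT]; exact Finset.sum_congr rfl fun j _ => by rw [htgt]
  rw [htgt2]
  have key : ∀ ε : ℝ, 0 < ε → ‖T‖ ≤ ε := by
    intro ε hε
    set C : ℝ := ∑ k ∈ Finset.range (m + 1), |(c k : ℝ)| with hC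
    have hC0 : 0 ≤ C := Finset.sum_nonneg fun k _ => abs_nonneg _
    set ε' : ℝ := ε / (2 * m * C + 1) with hε'
    have hden : (0 : ℝ) < 2 * m * C + 1 := by positivity
    have hε'0 : 0 < ε' := div_pos hε hden
    obtain ⟨N₀, hN₀⟩ := hy ε' hε'0
    set N' : ℕ := N + N₀ + m with hN'
    have hcastN' : (N' : ℤ) = (N : ℤ) + (N₀ : ℤ) + (m : ℤ) := by rw [hN']; push_cast; ring
    have hTlarge : T = ∑ j ∈ Finset.Icc (-(N' : ℤ)) (N' : ℤ), (G j : ℂ) * μ ^ j := by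
      apply Finset.sum_subset
      · intro j hj
        simp only [Finset.mem_Icc] at hj ⊢
        omega
      · intro j hj hj2
        simp only [Finset.mem_Icc] at hj hj2
        rw [hGz j (lt_abs.mpr (by omega)), Int.cast_zero, zero_mul]
    have hGC : ∀ j : ℤ, (G j : ℂ)
        = ∑ k ∈ Finset.range (m + 1), (c k : ℂ) * ((y (j + (k : ℤ)) : ℝ) : ℂ) := by
      intro j
      calc (G j : ℂ) = ((G j : ℝ) : ℂ) := by norm_cast
        _ = _ := by rw [hG j]; push_cast; ring
    set F : ℤ → ℂ := fun i => ((y i : ℝ) : ℂ) * μ ^ i with hF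
    set A : ℕ → ℂ := fun k => ∑ j ∈ Finset.Icc (-(N' : ℤ)) (N' : ℤ), F (j + (k : ℤ)) with hA
    have hterm : ∀ (k : ℕ) (j : ℤ),
        F (j + (k : ℤ)) * lam ^ k = ((y (j + (k : ℤ)) : ℝ) : ℂ) * μ ^ j := by
      intro k j
      have h1 : μ ^ (j + (k : ℤ)) = μ ^ j * μ ^ (k : ℤ) := zpow_add₀ hμ0 _ _
      have h2 : μ ^ (k : ℤ) * lam ^ k = 1 := by
        rw [zpow_natCast, hμ, inv_pow, inv_mul_cancel₀ (pow_ne_zero k hlam0)]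
      calc F (j + (k : ℤ)) * lam ^ k
          = ((y (j + (k : ℤ)) : ℝ) : ℂ) * μ ^ j * (μ ^ (k : ℤ) * lam ^ k) := by
            rw [hF]; simp only []; rw [h1]; ring
        _ = _ := by rw [h2, mul_one]
    have hswap : T = ∑ k ∈ Finset.range (m + 1), (c k : ℂ) * (A k * lam ^ k) := by
      rw [hTlarge]
      have e1 : ∀ j ∈ Finset.Icc (-(N' : ℤ)) (N' : ℤ), (G j : ℂ) * μ ^ j
          = ∑ k ∈ Finset.range (m + 1), (c k : ℂ) * (((y (j + (k : ℤ)) : ℝ) : ℂ) * μ ^ j) := by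
        intro j _
        rw [hGC j, Finset.sum_mul]
        exact Finset.sum_congr rfl fun k _ => by ring
      rw [Finset.sum_congr rfl e1, Finset.sum_comm]
      apply Finset.sum_congr rfl
      intro k _
      rw [hA]
      simp only []
      rw [Finset.sum_mul, Finset.mul_sum]
      apply Finset.sum_congr rfl
      intro j _
      rw [hterm k j]
    set S : ℂ := ∑ i ∈ Finset.Icc (-(N' : ℤ)) (N' : ℤ), F i with hS
    have hreindex : ∀ k : ℕ, A k = ∑ i ∈ Finset.Icc (-(N' : ℤ) + k) ((N' : ℤ) + k), F i := by
      intro k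
      rw [hA]
      simp only []
      rw [← Finset.map_add_right_Icc, Finset.sum_map]
      rfl
    -- bound on |A k - S|
    have hFsmall : ∀ i : ℤ, (N₀ : ℤ) ≤ |i| → ‖F i‖ ≤ ε' := by
      intro i hi
      rw [hF]
      simp only []
      rw [norm_mul, habs_zpow, mul_one, Complex.norm_real, Real.norm_eq_abs]
      exact hN₀ i hi
    have hbound : ∀ k ∈ Finset.range (m + 1), ‖A k - S‖ ≤ 2 * m * ε' := by
      intro k hk
      have hkm : k ≤ m := by
        have := Finset.mem_range.mp hk; omega
      rw [hreindex k, hS, sdiff_sum_helper]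
      set s : Finset ℤ := Finset.Icc (-(N' : ℤ) + k) ((N' : ℤ) + k) with hs
      set t : Finset ℤ := Finset.Icc (-(N' : ℤ)) (N' : ℤ) with ht
      have hsub1 : s \ t ⊆ Finset.Icc ((N' : ℤ) + 1) ((N' : ℤ) + k) := by
        intro i hi
        simp only [hs, ht, Finset.mem_sdiff, Finset.mem_Icc, not_and, not_le] at hi
        simp only [Finset.mem_Icc]
        omega
      have hsub2 : t \ s ⊆ Finset.Icc (-(N' : ℤ)) (-(N' : ℤ) + k - 1) := by
        intro i hi
        simp only [hs, ht, Finset.mem_sdiff, Finset.mem_Icc, not_and, not_le] at hi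
        simp only [Finset.mem_Icc]
        omega
      have hcard1 : (s \ t).card ≤ k := by
        refine le_trans (Finset.card_le_card hsub1) ?_
        rw [Int.card_Icc]
        omega
      have hcard2 : (t \ s).card ≤ k := by
        refine le_trans (Finset.card_le_card hsub2) ?_
        rw [Int.card_Icc]
        omega
      have hsmall1 : ∀ i ∈ s \ t, ‖F i‖ ≤ ε' := by
        intro i hi
        have := hsub1 hi
        simp only [Finset.mem_Icc] at this
        exact hFsmall i (le_abs.mpr (by omega))
      have hsmall2 : ∀ i ∈ t \ s, ‖F i‖ ≤ ε' := by
        intro i hi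
        have := hsub2 hi
        simp only [Finset.mem_Icc] at this
        exact hFsmall i (le_abs.mpr (by omega))
      have hsum1 : ‖∑ i ∈ s \ t, F i‖ ≤ (k : ℝ) * ε' := by
        refine le_trans (norm_sum_le _ _) ?_
        refine le_trans (Finset.sum_le_card_nsmul _ _ ε' hsmall1) ?_
        rw [nsmul_eq_mul]
        exact mul_le_mul_of_nonneg_right (by exact_mod_cast hcard1) (le_of_lt hε'0)
      have hsum2 : ‖∑ i ∈ t \ s, F i‖ ≤ (k : ℝ) * ε' := by
        refine le_trans (norm_sum_le _ _) ?_
        refine le_trans (Finset.sum_le_card_nsmul _ _ ε' hsmall2) ?_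
        rw [nsmul_eq_mul]
        exact mul_le_mul_of_nonneg_right (by exact_mod_cast hcard2) (le_of_lt hε'0)
      refine le_trans (norm_sub_le _ _) ?_
      have hkmr : (k : ℝ) ≤ (m : ℝ) := by exact_mod_cast hkm
      nlinarith [hε'0.le]
    -- split T
    have hsplit : T = ∑ k ∈ Finset.range (m + 1), (c k : ℂ) * ((A k - S) * lam ^ k) := by
      have : T = ∑ k ∈ Finset.range (m + 1),
          ((c k : ℂ) * ((A k - S) * lam ^ k) + (c k : ℂ) * (S * lam ^ k)) := by
        rw [hswap]
        exact Finset.sum_congr rfl fun k _ => by ring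
      rw [this, Finset.sum_add_distrib]
      have h2 : ∑ k ∈ Finset.range (m + 1), (c k : ℂ) * (S * lam ^ k)
          = S * ∑ k ∈ Finset.range (m + 1), (c k : ℂ) * lam ^ k := by
        rw [Finset.mul_sum]
        exact Finset.sum_congr rfl fun k _ => by ring
      rw [h2, hroot, mul_zero, add_zero]
    rw [hsplit]
    refine le_trans (norm_sum_le _ _) ?_
    have hterm_bd : ∀ k ∈ Finset.range (m + 1),
        ‖(c k : ℂ) * ((A k - S) * lam ^ k)‖ ≤ |(c k : ℝ)| * (2 * m * ε') := by
      intro k hk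
      rw [norm_mul, norm_mul, norm_pow, hlm, one_pow, mul_one]
      have h1 : ‖(c k : ℂ)‖ = |(c k : ℝ)| := by
        rw [Complex.norm_intCast]
      rw [h1]
      exact mul_le_mul_of_nonneg_left (hbound k hk) (abs_nonneg _)
    refine le_trans (Finset.sum_le_sum hterm_bd) ?_
    rw [← Finset.sum_mul]
    rw [← hC]
    have heq2 : C * (2 * m * ε') = (2 * m * C) * ε' := by ring
    rw [heq2, hε', ← mul_div_assoc, div_le_iff₀ hden]
    nlinarith [hε.le, hC0]
  have h0 : ‖T‖ = 0 := by
    by_contra h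
    have hpos : 0 < ‖T‖ := lt_of_le_of_ne (norm_nonneg _) (Ne.symm h)
    have := key (‖T‖ / 2) (by linarith)
    linarith
  exact norm_eq_zero.mp h0


lemma irreducible_isPrimitive (f : Polynomial ℤ) (hdeg : 0 < f.natDegree)
    (hirr : Irreducible f) : f.IsPrimitive := by
  intro c hc
  by_contra hcu
  obtain ⟨g, hg⟩ := hc
  rcases hirr.isUnit_or_isUnit hg with h | h
  · exact hcu (isUnit_C.mp h)
  · have : g.natDegree = 0 := natDegree_eq_zero_of_isUnit h
    have h2 : f.natDegree ≤ 0 := by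
      rw [hg]
      refine le_trans (natDegree_mul_le) ?_
      simp [this]
    omega

lemma int_dvd_of_root (f P : Polynomial ℤ) (hdeg : 0 < f.natDegree) (hirr : Irreducible f)
    (lam : ℂ) (hroot : Polynomial.aeval lam f = 0) (hProot : Polynomial.aeval lam P = 0) :
    f ∣ P := by
  by_cases hP0 : P = 0
  · exact hP0 ▸ dvd_zero f
  have hprim : f.IsPrimitive := irreducible_isPrimitive f hdeg hirr
  set fQ : Polynomial ℚ := f.map (Int.castRingHom ℚ) with hfQ
  have hfQirr : Irreducible fQ := (Polynomial.IsPrimitive.Int.irreducible_iff_irreducible_map_cast hprim).mp hirr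
  have hcast : ∀ p : Polynomial ℤ, Polynomial.aeval lam (p.map (Int.castRingHom ℚ))
      = Polynomial.aeval lam p := by
    intro p
    rw [show (Int.castRingHom ℚ) = algebraMap ℤ ℚ from rfl, aeval_map_algebraMap]
  have hfQroot : Polynomial.aeval lam fQ = 0 := by rw [hfQ, hcast]; exact hroot
  have hfQ0 : fQ ≠ 0 := by
    intro h
    have := hfQirr
    rw [h] at this
    exact this.ne_zero rfl
  have hint : IsIntegral ℚ lam := (IsAlgebraic.isIntegral ⟨fQ, hfQ0, hfQroot⟩)
  have hmin_f : minpoly ℚ lam ∣ fQ := minpoly.dvd ℚ lam hfQroot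
  have hassoc : Associated (minpoly ℚ lam) fQ :=
    (minpoly.irreducible hint).associated_of_dvd hfQirr hmin_f
  have hmin_P : minpoly ℚ lam ∣ P.map (Int.castRingHom ℚ) :=
    minpoly.dvd ℚ lam (by rw [hcast]; exact hProot)
  have hfQ_dvd : fQ ∣ P.map (Int.castRingHom ℚ) := hassoc.symm.dvd.trans hmin_P
  -- pass to primitive part of P
  have hPP : P = Polynomial.C P.content * P.primPart := P.eq_C_content_mul_primPart
  have hcont0 : (P.content : ℚ) ≠ 0 := by
    simp only [ne_eq, Int.cast_eq_zero]
    exact fun h => hP0 (content_eq_zero_iff.mp h)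
  have hfQ_dvd_prim : fQ ∣ (P.primPart).map (Int.castRingHom ℚ) := by
    have hmap : P.map (Int.castRingHom ℚ)
        = Polynomial.C (P.content : ℚ) * (P.primPart).map (Int.castRingHom ℚ) := by
      conv_lhs => rw [hPP]
      rw [Polynomial.map_mul, map_C]
      rfl
    have hunit : IsUnit (Polynomial.C (P.content : ℚ)) := isUnit_C.mpr (isUnit_iff_ne_zero.mpr hcont0)
    rw [hmap] at hfQ_dvd
    exact hunit.dvd_mul_left.mp hfQ_dvd
  have : f ∣ P.primPart := by
    rw [Polynomial.IsPrimitive.Int.dvd_iff_map_cast_dvd_map_cast f P.primPart hprim]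
    exact hfQ_dvd_prim
  exact this.trans P.primPart_dvd


lemma homoclinic_trivial (f : Polynomial ℤ) (m : ℕ) (hm : 0 < m) (hdeg : f.natDegree = m)
    (hconst : f.coeff 0 ≠ 0) (hleadne : f.coeff m ≠ 0) (hirr : Irreducible f)
    (lam : ℂ) (hroot : Polynomial.aeval lam f = 0) (hlm : ‖lam‖ = 1)
    (y : ℤ → AddCircle (1 : ℝ))
    (hyX : ∀ j : ℤ, ∑ k ∈ Finset.range (m + 1), f.coeff k • y (j + (k : ℤ)) = 0)
    (htop : Tendsto y atTop (𝓝 0)) (hbot : Tendsto y atBot (𝓝 0)) :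
    ∀ n : ℤ, y n = 0 := by
  haveI : Fact ((0 : ℝ) < 1) := ⟨one_pos⟩
  have hlam0 : lam ≠ 0 := by intro h; rw [h] at hlm; simp at hlm
  set e := AddCircle.equivIco (1 : ℝ) (-(1/2)) with he
  set yt : ℤ → ℝ := fun n => (e (y n) : ℝ) with hyt
  have hcoe : ∀ x : AddCircle (1 : ℝ), ((e x : ℝ) : AddCircle (1 : ℝ)) = x := by
    intro x
    exact e.symm_apply_apply x
  -- value of the section at 0
  have hmem0 : (0 : ℝ) ∈ Set.Ico (-(1/2) : ℝ) (-(1/2) + 1) := by constructor <;> norm_num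
  have he0 : ((e 0 : ℝ)) = 0 := by
    have h1 : ((e 0 : ℝ) : AddCircle (1 : ℝ)) = ((0 : ℝ) : AddCircle (1 : ℝ)) := by
      rw [hcoe]
      norm_cast
    exact (AddCircle.coe_eq_coe_iff_of_mem_Ico (e 0).2 hmem0).mp h1
  have hne : (0 : AddCircle (1 : ℝ)) ≠ ((-(1/2) : ℝ) : AddCircle (1 : ℝ)) := by
    intro h
    rw [eq_comm, AddCircle.coe_eq_zero_iff] at h
    obtain ⟨n, hn⟩ := h
    rw [zsmul_eq_mul, mul_one] at hn
    have h2 : (2 * n : ℤ) = (-1 : ℤ) := by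
      have hr : (2 * (n : ℝ)) = -1 := by rw [hn]; norm_num
      exact_mod_cast hr
    omega
  have hct : ContinuousAt (⇑e) 0 := AddCircle.continuousAt_equivIco (1 : ℝ) (-(1/2)) hne
  have hytt : Tendsto yt atTop (𝓝 0) := by
    have h1 : Tendsto (fun n : ℤ => e (y n)) atTop (𝓝 (e 0)) := hct.tendsto.comp htop
    have h2 : Tendsto yt atTop (𝓝 ((e 0 : ℝ))) :=
      ((continuous_subtype_val.tendsto _)).comp h1
    rwa [he0] at h2
  have hybt : Tendsto yt atBot (𝓝 0) := by
    have h1 : Tendsto (fun n : ℤ => e (y n)) atBot (𝓝 (e 0)) := hct.tendsto.comp hbot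
    have h2 : Tendsto yt atBot (𝓝 ((e 0 : ℝ))) :=
      ((continuous_subtype_val.tendsto _)).comp h1
    rwa [he0] at h2
  -- ε–N form of decay
  have hsmall : ∀ ε : ℝ, 0 < ε → ∃ N₀ : ℕ, ∀ n : ℤ, (N₀ : ℤ) ≤ |n| → |yt n| ≤ ε := by
    intro ε hε
    have h1 := (Metric.tendsto_nhds.mp hytt) ε hε
    have h2 := (Metric.tendsto_nhds.mp hybt) ε hε
    rw [eventually_atTop] at h1
    rw [eventually_atBot] at h2
    obtain ⟨a, ha⟩ := h1
    obtain ⟨b, hb⟩ := h2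
    refine ⟨(max a (-b)).toNat, ?_⟩
    intro n hn
    have hta : a ≤ (((max a (-b)).toNat : ℤ)) := le_trans (le_max_left _ _) (Int.self_le_toNat _)
    have htb : -b ≤ (((max a (-b)).toNat : ℤ)) := le_trans (le_max_right _ _) (Int.self_le_toNat _)
    rcases le_abs.mp hn with h | h
    · have := ha n (by omega)
      rw [Real.dist_eq, sub_zero] at this
      exact this.le
    · have := hb n (by omega)
      rw [Real.dist_eq, sub_zero] at this
      exact this.le
  -- the integer-valued sequence G
  set g : ℤ → ℝ := fun j => ∑ k ∈ Finset.range (m + 1), (f.coeff k : ℝ) * yt (j + (k : ℤ))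
    with hgdef
  have coesum : ∀ j : ℤ, ((g j : ℝ) : AddCircle (1 : ℝ))
      = ∑ k ∈ Finset.range (m + 1), f.coeff k • y (j + (k : ℤ)) := by
    intro j
    set cHom : ℝ →+ AddCircle (1 : ℝ) :=
      QuotientAddGroup.mk' (AddSubgroup.zmultiples (1 : ℝ)) with hcHom
    have hch : ∀ x : ℝ, (x : AddCircle (1 : ℝ)) = cHom x := fun _ => rfl
    rw [hch, hgdef]
    rw [map_sum]
    apply Finset.sum_congr rfl
    intro k _
    rw [← zsmul_eq_mul, map_zsmul]
    congr 1
    rw [← hch]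
    exact hcoe (y (j + (k : ℤ)))
  have hgzero : ∀ j : ℤ, ((g j : ℝ) : AddCircle (1 : ℝ)) = 0 := fun j => by
    rw [coesum j]; exact hyX j
  have hGex : ∀ j : ℤ, ∃ n : ℤ, (n : ℝ) = g j := by
    intro j
    obtain ⟨n, hn⟩ := (AddCircle.coe_eq_zero_iff (1 : ℝ)).mp (hgzero j)
    exact ⟨n, by rw [zsmul_eq_mul, mul_one] at hn; exact hn⟩
  choose G hGspec using hGex
  -- G has finite support
  set C : ℝ := ∑ k ∈ Finset.range (m + 1), |(f.coeff k : ℝ)| with hCdef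
  have hC0 : 0 ≤ C := Finset.sum_nonneg fun k _ => abs_nonneg _
  have hε₁ : (0 : ℝ) < 1 / (2 * (C + 1)) := by positivity
  obtain ⟨N₁, hN₁⟩ := hsmall (1 / (2 * (C + 1))) hε₁
  set N : ℕ := N₁ + m with hNdef
  have hNcast : (N : ℤ) = (N₁ : ℤ) + (m : ℤ) := by rw [hNdef]; push_cast; ring
  have hGz : ∀ j : ℤ, (N : ℤ) < |j| → G j = 0 := by
    intro j hj
    have habs : ∀ k ∈ Finset.range (m + 1), |yt (j + (k : ℤ))| ≤ 1 / (2 * (C + 1)) := by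
      intro k hk
      have hkm : (k : ℤ) ≤ (m : ℤ) := by
        have := Finset.mem_range.mp hk
        omega
      rcases lt_abs.mp hj with h | h
      · exact hN₁ _ (le_abs.mpr (Or.inl (by omega)))
      · exact hN₁ _ (le_abs.mpr (Or.inr (by omega)))
    have hb : |g j| ≤ C * (1 / (2 * (C + 1))) := by
      rw [hgdef]
      refine le_trans (Finset.abs_sum_le_sum_abs _ _) ?_
      rw [hCdef, Finset.sum_mul]
      apply Finset.sum_le_sum
      intro k hk
      rw [abs_mul]
      exact mul_le_mul_of_nonneg_left (habs k hk) (abs_nonneg _)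
    have hlt : |(G j : ℝ)| < 1 := by
      rw [hGspec j]
      have : C * (1 / (2 * (C + 1))) < 1 := by
        rw [mul_one_div, div_lt_one (by positivity)]
        linarith
      linarith [abs_nonneg (g j)]
    have h3 : |G j| < 1 := by exact_mod_cast hlt
    have h4 := abs_lt.mp h3
    omega
  -- apply the Fourier-type vanishing
  have hrootsum : ∑ k ∈ Finset.range (m + 1), (f.coeff k : ℂ) * lam ^ k = 0 := by
    have h := Polynomial.aeval_eq_sum_range (R := ℤ) (S := ℂ) (x := lam) (p := f)
    rw [hdeg] at h
    rw [← hroot, h]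
    apply Finset.sum_congr rfl
    intro k _
    rw [zsmul_eq_mul]
  have hT := laurent_root_zero m f.coeff lam hlm hrootsum yt hsmall G
    (fun j => (hGspec j).trans (by rw [hgdef])) N hGz
  -- the polynomial P and divisibility
  set P : Polynomial ℤ :=
    ∑ j ∈ Finset.Icc (-(N : ℤ)) (N : ℤ), Polynomial.C (G j) * Polynomial.X ^ ((N : ℤ) - j).toNat
    with hPdef
  have hPaeval : Polynomial.aeval lam P = 0 := by
    rw [hPdef, map_sum]
    have hterm : ∀ j ∈ Finset.Icc (-(N : ℤ)) (N : ℤ),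
        Polynomial.aeval lam (Polynomial.C (G j) * Polynomial.X ^ ((N : ℤ) - j).toNat)
        = (G j : ℂ) * (lam ^ ((N : ℤ)) * lam ^ (-j)) := by
      intro j hj
      simp only [map_mul, aeval_C, map_pow, aeval_X]
      have hj' : (0 : ℤ) ≤ (N : ℤ) - j := by
        simp only [Finset.mem_Icc] at hj
        omega
      have h1 : lam ^ (((N : ℤ) - j).toNat) = lam ^ ((N : ℤ) - j) := by
        rw [← zpow_natCast, Int.toNat_of_nonneg hj']
      rw [h1, sub_eq_add_neg, zpow_add₀ hlam0]
      norm_cast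
    rw [Finset.sum_congr rfl hterm]
    have h2 : ∑ j ∈ Finset.Icc (-(N : ℤ)) (N : ℤ), (G j : ℂ) * (lam ^ ((N : ℤ)) * lam ^ (-j))
        = lam ^ ((N : ℤ)) * ∑ j ∈ Finset.Icc (-(N : ℤ)) (N : ℤ), (G j : ℂ) * lam ^ (-j) := by
      rw [Finset.mul_sum]
      exact Finset.sum_congr rfl fun j _ => by ring
    rw [h2, hT, mul_zero]
  obtain ⟨Q, hQ⟩ := int_dvd_of_root f P (by omega) hirr lam hroot hPaeval
  -- extended coefficients of Q
  set Qe : ℤ → ℤ := fun t => if 0 ≤ t then Q.coeff t.toNat else 0 with hQedef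
  have hQe_neg : ∀ t : ℤ, t < 0 → Qe t = 0 := by
    intro t ht
    rw [hQedef]
    simp only []
    rw [if_neg (by omega)]
  have hQe_big : ∀ t : ℤ, (Q.natDegree : ℤ) < t → Qe t = 0 := by
    intro t ht
    rw [hQedef]
    simp only []
    by_cases h : 0 ≤ t
    · rw [if_pos h]
      apply Polynomial.coeff_eq_zero_of_natDegree_lt
      omega
    · rw [if_neg h]
  -- coefficients of P
  have hPcoeff : ∀ n : ℕ, P.coeff n = G ((N : ℤ) - n) := by
    intro n
    rw [hPdef, Polynomial.finset_sum_coeff]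
    by_cases hn : (n : ℤ) ≤ 2 * N
    · rw [Finset.sum_eq_single ((N : ℤ) - n)]
      · rw [Polynomial.coeff_C_mul, Polynomial.coeff_X_pow]
        rw [if_pos (by omega), mul_one]
      · intro j hj hnej
        rw [Polynomial.coeff_C_mul, Polynomial.coeff_X_pow]
        simp only [Finset.mem_Icc] at hj
        rw [if_neg (by omega), mul_zero]
      · intro hnotmem
        exfalso
        apply hnotmem
        simp only [Finset.mem_Icc]
        omega
    · rw [Finset.sum_eq_zero, eq_comm]
      · exact hGz _ (lt_abs.mpr (Or.inr (by omega)))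
      · intro j hj
        rw [Polynomial.coeff_C_mul, Polynomial.coeff_X_pow]
        simp only [Finset.mem_Icc] at hj
        rw [if_neg (by omega), mul_zero]
  -- the convolution identity
  have hconv : ∀ j : ℤ, ∑ k ∈ Finset.range (m + 1), f.coeff k * Qe ((N : ℤ) - j - k) = G j := by
    intro j
    by_cases hj : j ≤ (N : ℤ)
    · set n : ℕ := ((N : ℤ) - j).toNat with hn
      have hnz : (n : ℤ) = (N : ℤ) - j := by omega
      have h1 : P.coeff n = ∑ k ∈ Finset.range (n + 1), f.coeff k * Q.coeff (n - k) := by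
        rw [hQ, Polynomial.coeff_mul, Finset.Nat.sum_antidiagonal_eq_sum_range_succ_mk]
      have hUQ : ∀ k : ℕ, k ≤ n → Q.coeff (n - k) = Qe ((n : ℤ) - k) := by
        intro k hk
        rw [hQedef]
        simp only []
        rw [if_pos (by omega)]
        congr 1
        omega
      have h2 : ∑ k ∈ Finset.range (n + 1), f.coeff k * Q.coeff (n - k)
          = ∑ k ∈ Finset.range (m + n + 1), f.coeff k * Qe ((n : ℤ) - k) := by
        rw [Finset.sum_congr rfl (fun k hk => by
          rw [hUQ k (by have := Finset.mem_range.mp hk; omega)])]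
        apply Finset.sum_subset
        · intro k hk
          simp only [Finset.mem_range] at hk ⊢
          omega
        · intro k _ hk2
          simp only [Finset.mem_range] at hk2
          rw [hQe_neg _ (by omega), mul_zero]
      have h3 : ∑ k ∈ Finset.range (m + 1), f.coeff k * Qe ((n : ℤ) - k)
          = ∑ k ∈ Finset.range (m + n + 1), f.coeff k * Qe ((n : ℤ) - k) := by
        apply Finset.sum_subset
        · intro k hk
          simp only [Finset.mem_range] at hk ⊢
          omega
        · intro k _ hk2
          simp only [Finset.mem_range] at hk2
          rw [Polynomial.coeff_eq_zero_of_natDegree_lt (by omega : f.natDegree < k), zero_mul]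
      have h4 : ∑ k ∈ Finset.range (m + 1), f.coeff k * Qe ((N : ℤ) - j - k)
          = ∑ k ∈ Finset.range (m + 1), f.coeff k * Qe ((n : ℤ) - k) := by
        apply Finset.sum_congr rfl
        intro k _
        congr 2
        omega
      rw [h4, h3, ← h2, ← h1, hPcoeff n, hnz]
      congr 1
      omega
    · rw [Finset.sum_eq_zero, eq_comm]
      · exact hGz _ (lt_abs.mpr (Or.inl (by omega)))
      · intro k hk
        have : (k : ℤ) ≥ 0 := Int.ofNat_nonneg k
        rw [hQe_neg _ (by omega), mul_zero]
  -- the real sequence r and its decay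
  set W : ℤ → ℝ := fun i => (Qe ((N : ℤ) - i) : ℝ) with hWdef
  set r : ℤ → ℝ := fun i => yt i - W i with hrdef
  have hWsum : ∀ j : ℤ, ∑ k ∈ Finset.range (m + 1), (f.coeff k : ℝ) * W (j + (k : ℤ))
      = (G j : ℝ) := by
    intro j
    have := hconv j
    have hcast := congrArg (fun t : ℤ => (t : ℝ)) this
    push_cast at hcast
    rw [← hcast]
    apply Finset.sum_congr rfl
    intro k _
    have harg : (N : ℤ) - (j + (k : ℤ)) = (N : ℤ) - j - (k : ℤ) := by ring
    show (f.coeff k : ℝ) * (Qe ((N : ℤ) - (j + (k : ℤ))) : ℝ)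
        = (f.coeff k : ℝ) * (Qe ((N : ℤ) - j - (k : ℤ)) : ℝ)
    rw [harg]
  have hrrec : ∀ j : ℤ, ∑ k ∈ Finset.range (m + 1), (f.coeff k : ℝ) * r (j + (k : ℤ)) = 0 := by
    intro j
    rw [hrdef]
    simp only [mul_sub]
    rw [Finset.sum_sub_distrib]
    rw [hWsum j]
    have : ∑ k ∈ Finset.range (m + 1), (f.coeff k : ℝ) * yt (j + (k : ℤ)) = g j := by
      rw [hgdef]
    rw [this, ← hGspec j, sub_self]
  have hWtop : ∀ᶠ i : ℤ in atTop, W i = 0 := by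
    rw [eventually_atTop]
    refine ⟨(N : ℤ) + 1, fun i hi => ?_⟩
    rw [hWdef]
    simp only []
    rw [hQe_neg _ (by omega), Int.cast_zero]
  have hWbot : ∀ᶠ i : ℤ in atBot, W i = 0 := by
    rw [eventually_atBot]
    refine ⟨(N : ℤ) - (Q.natDegree : ℤ) - 1, fun i hi => ?_⟩
    rw [hWdef]
    simp only []
    rw [hQe_big _ (by omega), Int.cast_zero]
  have hrtop : Tendsto r atTop (𝓝 0) := by
    have : Tendsto W atTop (𝓝 0) :=
      Tendsto.congr' (by filter_upwards [hWtop] with i hi using hi.symm) tendsto_const_nhds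
    have h2 := hytt.sub this
    rw [sub_zero] at h2
    exact h2
  have hrbot : Tendsto r atBot (𝓝 0) := by
    have : Tendsto W atBot (𝓝 0) :=
      Tendsto.congr' (by filter_upwards [hWbot] with i hi using hi.symm) tendsto_const_nhds
    have h2 := hybt.sub this
    rw [sub_zero] at h2
    exact h2
  have hr0 : r = 0 := recur_decay_eq_zero m hm f.coeff hconst hleadne r hrrec hrtop hrbot
  -- conclude
  intro n
  have hytW : yt n = W n := by
    have := congrFun hr0 n
    simp only [hrdef, Pi.zero_apply] at this
    linarith
  have : y n = ((yt n : ℝ) : AddCircle (1 : ℝ)) := (hcoe (y n)).symm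
  rw [this, hytW, hWdef]
  rw [AddCircle.coe_eq_zero_iff]
  exact ⟨Qe ((N : ℤ) - n), by rw [zsmul_eq_mul, mul_one]⟩


end Aux

/-- In the nonhyperbolic noncyclotomic case, any map `φ : ℓ^∞(ℤ,ℤ) → X` which is
continuous for the topology of coordinatewise convergence and intertwines the shift `σ̄` with
`α` (the shift `τ` restricted to `X`) is constant, with value a fixed point of `α`. -/
theorem no_equivariant_map_from_linfty
    (f : Polynomial ℤ) (m : ℕ) (hm : 0 < m) (hdeg : f.natDegree = m)
    (hlead : 0 < f.leadingCoeff) (hconst : f.coeff 0 ≠ 0) (hirr : Irreducible f)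
    (hnonhyp : ∃ z : ℂ, Polynomial.aeval z f = 0 ∧ ‖z‖ = 1)
    (hnoncyc : ¬ ∃ z : ℂ, Polynomial.aeval z f = 0 ∧ ∃ n : ℕ, 0 < n ∧ z ^ n = 1)
    (φ : (ℤ → ℤ) → (ℤ → AddCircle (1 : ℝ)))
    (hmem : ∀ v ∈ BddZ, φ v ∈ XSet f)
    (hcont : ContinuousOn φ BddZ)
    (hequiv : ∀ v ∈ BddZ, φ (fun n => v (n + 1)) = fun j => φ v (j + 1)) :
    ∃ xbar ∈ XSet f, (∀ j : ℤ, xbar (j + 1) = xbar j) ∧ ∀ v ∈ BddZ, φ v = xbar := by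
  obtain ⟨lam, hroot, hlm⟩ := hnonhyp
  have hleadne : f.coeff m ≠ 0 := by
    rw [← hdeg]
    exact ne_of_gt hlead
  set z : ℤ → ℤ := fun _ => 0 with hz
  have h0mem : z ∈ BddZ := ⟨0, fun n => by simp [hz]⟩
  -- shifts stay bounded
  have hshift_mem : ∀ v ∈ BddZ, ∀ a : ℤ, (fun i => v (i + a)) ∈ BddZ := by
    rintro v ⟨C, hC⟩ a
    exact ⟨C, fun n => hC (n + a)⟩
  -- forward equivariance iterated
  have hfwd : ∀ v ∈ BddZ, ∀ n : ℕ,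
      φ (fun i => v (i + (n : ℤ))) = fun j => φ v (j + (n : ℤ)) := by
    intro v hv n
    induction n with
    | zero => simp
    | succ n ih =>
      have hw := hshift_mem v hv (n : ℤ)
      calc φ (fun i => v (i + ((n + 1 : ℕ) : ℤ)))
          = φ (fun i => (fun t => v (t + (n : ℤ))) (i + 1)) := by
            have harg : (fun i : ℤ => v (i + ((n + 1 : ℕ) : ℤ)))
                = (fun i : ℤ => (fun t => v (t + (n : ℤ))) (i + 1)) := by
              funext i
              show v (i + ((n + 1 : ℕ) : ℤ)) = v (i + 1 + (n : ℤ))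
              congr 1
              push_cast
              ring
            rw [harg]
        _ = fun j => φ (fun t => v (t + (n : ℤ))) (j + 1) := hequiv _ hw
        _ = fun j => φ v (j + 1 + (n : ℤ)) := by simp only [ih]
        _ = fun j => φ v (j + ((n + 1 : ℕ) : ℤ)) := by
            funext j
            congr 1
            push_cast
            ring
  -- equivariance for arbitrary integer shifts
  have hall : ∀ v ∈ BddZ, ∀ a : ℤ, φ (fun i => v (i + a)) = fun j => φ v (j + a) := by
    intro v hv a
    rcases le_or_gt 0 a with ha | ha
    · have := hfwd v hv a.toNat
      rwa [Int.toNat_of_nonneg ha] at this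
    · -- backward: apply forward to the shifted sequence
      set b : ℕ := (-a).toNat with hb
      have hbz : (b : ℤ) = -a := by rw [hb]; omega
      set v' : ℤ → ℤ := fun i => v (i + a) with hv'
      have hv'mem : v' ∈ BddZ := hshift_mem v hv a
      have h1 := hfwd v' hv'mem b
      have h2 : (fun i => v' (i + (b : ℤ))) = v := by
        funext i
        show v (i + (b : ℤ) + a) = v i
        congr 1
        omega
      rw [h2] at h1
      funext j
      have h4 := congrFun h1 (j + a)
      have h5 : j + a + (b : ℤ) = j := by omega
      rw [h5] at h4
      exact h4.symm
  -- φ z is a fixed sequence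
  have hzfix : ∀ j : ℤ, φ z (j + 1) = φ z j := by
    intro j
    have h1 := hequiv z h0mem
    have h2 : (fun n => z (n + 1)) = z := rfl
    rw [h2] at h1
    exact (congrFun h1 j).symm
  have hzconst : ∀ j : ℤ, φ z j = φ z 0 := by
    intro j
    induction j using Int.induction_on with
    | zero => rfl
    | succ k ih => rw [hzfix k, ih]
    | pred k ih =>
      have := hzfix (-(k : ℤ) - 1)
      rw [show -(k : ℤ) - 1 + 1 = -(k : ℤ) by ring] at this
      exact this.symm.trans ih
  -- key step : φ w = φ z for finitely supported w
  have hfin : ∀ w ∈ BddZ, ∀ K : ℕ, (∀ i : ℤ, (K : ℤ) < |i| → w i = 0) → φ w = φ z := by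
    intro w hw K hK
    set y : ℤ → AddCircle (1 : ℝ) := fun n => φ w n - φ z n with hy
    -- y satisfies the recurrence
    have hyX : ∀ j : ℤ, ∑ k ∈ Finset.range (m + 1), f.coeff k • y (j + (k : ℤ)) = 0 := by
      intro j
      have h1 := hmem w hw j
      have h2 := hmem z h0mem j
      rw [hdeg] at h1 h2
      rw [hy]
      simp only [smul_sub]
      rw [Finset.sum_sub_distrib, h1, h2, sub_zero]
    -- convergence of shifted evaluations
    have hshift_eval : ∀ a : ℤ, φ w a = φ (fun i => w (i + a)) 0 := by
      intro a
      have := congrFun (hall w hw a) 0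
      rw [this]
      congr 1
      ring
    have hcw : ContinuousWithinAt φ BddZ z := hcont z h0mem
    have hmain : ∀ (l : Filter ℤ), l.NeBot → (∀ i : ℤ, ∀ᶠ a : ℤ in l, w (i + a) = 0) →
        Tendsto (fun a : ℤ => φ w a) l (𝓝 (φ z 0)) := by
      intro l _ hl
      have hto : Tendsto (fun a : ℤ => (fun i => w (i + a))) l (𝓝[BddZ] z) := by
        rw [tendsto_nhdsWithin_iff]
        constructor
        · rw [tendsto_pi_nhds]
          intro i
          rw [show (𝓝 (z i)) = pure (z i) from congrFun (nhds_discrete ℤ) (z i), tendsto_pure]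
          exact hl i
        · exact Eventually.of_forall fun a => hshift_mem w hw a
      have h1 : Tendsto (fun a : ℤ => φ (fun i => w (i + a))) l (𝓝 (φ z)) := hcw.tendsto.comp hto
      have h2 : Tendsto (fun a : ℤ => φ (fun i => w (i + a)) 0) l (𝓝 (φ z 0)) :=
        ((continuous_apply (0 : ℤ)).tendsto (φ z)).comp h1
      refine h2.congr fun a => (hshift_eval a).symm
    have hwtop : ∀ i : ℤ, ∀ᶠ a : ℤ in atTop, w (i + a) = 0 := by
      intro i
      rw [eventually_atTop]
      exact ⟨(K : ℤ) + 1 - i, fun a ha => hK _ (lt_abs.mpr (Or.inl (by omega)))⟩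
    have hwbot : ∀ i : ℤ, ∀ᶠ a : ℤ in atBot, w (i + a) = 0 := by
      intro i
      rw [eventually_atBot]
      exact ⟨-(K : ℤ) - 1 - i, fun a ha => hK _ (lt_abs.mpr (Or.inr (by omega)))⟩
    have htop : Tendsto y atTop (𝓝 0) := by
      have h1 := hmain atTop inferInstance hwtop
      have h2 : Tendsto (fun a : ℤ => φ z a) atTop (𝓝 (φ z 0)) := by
        refine tendsto_const_nhds.congr fun a => (hzconst a).symm
      have := h1.sub h2
      rw [sub_self] at this
      exact this
    have hbot : Tendsto y atBot (𝓝 0) := by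
      have h1 := hmain atBot inferInstance hwbot
      have h2 : Tendsto (fun a : ℤ => φ z a) atBot (𝓝 (φ z 0)) := by
        refine tendsto_const_nhds.congr fun a => (hzconst a).symm
      have := h1.sub h2
      rw [sub_self] at this
      exact this
    have hy0 := homoclinic_trivial f m hm hdeg hconst hleadne hirr lam hroot hlm y hyX htop hbot
    funext n
    have := hy0 n
    rw [hy] at this
    simpa [sub_eq_zero] using this
  -- conclusion by density of finitely supported sequences
  have hconst_all : ∀ v ∈ BddZ, φ v = φ z := by
    intro v hv
    obtain ⟨C, hC⟩ := hv
    set wN : ℕ → (ℤ → ℤ) := fun N i => if |i| ≤ (N : ℤ) then v i else 0 with hwN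
    have hwNmem : ∀ N : ℕ, wN N ∈ BddZ := by
      intro N
      refine ⟨C, fun n => ?_⟩
      simp only [hwN]
      by_cases h : |n| ≤ (N : ℤ)
      · simp only [if_pos h]
        exact hC n
      · simp only [if_neg h]
        simp only [abs_zero]
        exact le_trans (abs_nonneg (v n)) (hC n)
    have hwNsupp : ∀ N : ℕ, ∀ i : ℤ, (N : ℤ) < |i| → wN N i = 0 := by
      intro N i hi
      simp only [hwN, if_neg (not_le.mpr hi)]
    have hwNconst : ∀ N : ℕ, φ (wN N) = φ z := fun N => hfin (wN N) (hwNmem N) N (hwNsupp N)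
    have hto : Tendsto wN atTop (𝓝[BddZ] v) := by
      rw [tendsto_nhdsWithin_iff]
      constructor
      · rw [tendsto_pi_nhds]
        intro i
        rw [show (𝓝 (v i)) = pure (v i) from congrFun (nhds_discrete ℤ) (v i), tendsto_pure]
        rw [eventually_atTop]
        refine ⟨i.natAbs, fun N hN => ?_⟩
        simp only [hwN, if_pos (show |i| ≤ (N : ℤ) by rw [Int.abs_eq_natAbs]; omega)]
      · exact Eventually.of_forall hwNmem
    have h1 : Tendsto (fun N => φ (wN N)) atTop (𝓝 (φ v)) := (hcont v ⟨C, hC⟩).tendsto.comp hto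
    have h2 : Tendsto (fun N => φ (wN N)) atTop (𝓝 (φ z)) := by
      refine tendsto_const_nhds.congr fun N => (hwNconst N).symm
    exact tendsto_nhds_unique h1 h2
  exact ⟨φ z, hmem z h0mem, hzfix, hconst_all⟩
end

section
/- Let m ≥ 1 and let 𝕊^m = {γ ∈ ℂ^m : |γ_i| = 1 for i = 1,…,m}. Let G = ℂ^m ⋊ 𝕊^m be the semidirect product with group operation (z, γ)·(z', γ') = (z + M_γ z', γγ'), where M_γ z' = (γ₁ z'₁, …, γ_m z'_m) is coordinatewise multiplication. Then every compact subgroup K ⊆ G has the form K = {(M_γ t − t, γ) : γ ∈ Γ₀} for some compact subgroup Γ₀ ⊆ 𝕊^m and some t ∈ ℂ^m. -/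
open Filter Topology

/-- Every compact subgroup `K` of `G = ℂ^m ⋊ 𝕊^m` (with operation
`(z,γ)·(z',γ') = (z + γ·z', γγ')`, where `γ·z'` is coordinatewise multiplication) has the form
`K = {(γ·t − t, γ) : γ ∈ Γ₀}` for a compact subgroup `Γ₀ ⊆ 𝕊^m` and some `t ∈ ℂ^m`. -/
theorem compact_subgroup_of_semidirect_product
    (m : ℕ) (hm : 1 ≤ m)
    (K : Set ((Fin m → ℂ) × (Fin m → ℂ)))
    (hsphere : ∀ p ∈ K, ∀ i : Fin m, ‖p.2 i‖ = 1)
    (hone : ((0 : Fin m → ℂ), (1 : Fin m → ℂ)) ∈ K)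
    (hmul : ∀ p ∈ K, ∀ q ∈ K, (p.1 + p.2 * q.1, p.2 * q.2) ∈ K)
    (hinv : ∀ p ∈ K, (-(p.2⁻¹ * p.1), p.2⁻¹) ∈ K)
    (hcomp : IsCompact K) :
    ∃ (Γ₀ : Set (Fin m → ℂ)) (t : Fin m → ℂ),
      (∀ γ ∈ Γ₀, ∀ i : Fin m, ‖γ i‖ = 1) ∧
      (1 : Fin m → ℂ) ∈ Γ₀ ∧
      (∀ γ ∈ Γ₀, ∀ γ' ∈ Γ₀, γ * γ' ∈ Γ₀) ∧
      (∀ γ ∈ Γ₀, γ⁻¹ ∈ Γ₀) ∧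
      IsCompact Γ₀ ∧
      K = {p | ∃ γ ∈ Γ₀, p = (γ * t - t, γ)} := by
  classical
  -- K is bounded
  obtain ⟨C, hC⟩ := hcomp.isBounded.exists_norm_le
  have hbound : ∀ p ∈ K, ∀ i : Fin m, ‖p.1 i‖ ≤ C := by
    intro p hp i
    have h1 : ‖p.1 i‖ ≤ ‖p.1‖ := norm_le_pi_norm p.1 i
    have h2 : ‖p.1‖ ≤ ‖p‖ := norm_fst_le p
    have h3 := hC p hp
    calc ‖p.1 i‖ = ‖p.1 i‖ := rfl
      _ ≤ C := by linarith
  -- entries of the second coordinate are nonzero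
  have hnz : ∀ p ∈ K, ∀ i : Fin m, p.2 i ≠ 0 := by
    intro p hp i h
    have := hsphere p hp i
    rw [h] at this
    simp at this
  have hinvmul : ∀ p ∈ K, p.2⁻¹ * p.2 = 1 := by
    intro p hp
    funext i
    exact inv_mul_cancel₀ (hnz p hp i)
  -- key boundedness fact: a coordinate where the rotation part is 1 must vanish
  have hzero : ∀ p ∈ K, ∀ i : Fin m, p.2 i = 1 → p.1 i = 0 := by
    intro p hp i hγ
    have hiter : ∀ n : ℕ, ∃ q ∈ K, q.1 i = (n : ℂ) * p.1 i := by
      intro n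
      induction n with
      | zero => exact ⟨_, hone, by simp⟩
      | succ n ih =>
        obtain ⟨q, hq, hqi⟩ := ih
        refine ⟨_, hmul p hp q hq, ?_⟩
        simp only [Pi.add_apply, Pi.mul_apply, hγ, one_mul, hqi]
        push_cast
        ring
    by_contra h
    have habs : 0 < ‖p.1 i‖ := by
      simpa [AbsoluteValue.pos_iff] using (norm_pos_iff.mpr h)
    obtain ⟨n, hn⟩ := exists_nat_gt (C / ‖p.1 i‖)
    obtain ⟨q, hq, hqi⟩ := hiter n
    have hb := hbound q hq i
    rw [hqi] at hb
    have : ‖(n : ℂ) * p.1 i‖ = (n : ℝ) * ‖p.1 i‖ := by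
      rw [norm_mul]
      simp
    rw [this] at hb
    have : C / ‖p.1 i‖ < (n : ℝ) := hn
    have hgt : C < (n : ℝ) * ‖p.1 i‖ := by
      rw [div_lt_iff₀ habs] at this
      linarith
    linarith
  -- the first coordinate is a function of the second
  have hB : ∀ p ∈ K, ∀ q ∈ K, p.2 = q.2 → p.1 = q.1 := by
    intro p hp q hq h2
    have h1 := hinv p hp
    have h3 := hmul _ h1 _ hq
    simp only at h3
    rw [← h2, hinvmul p hp] at h3
    have h4 := hzero _ h3
    funext i
    have hi := h4 i rfl
    simp only [Pi.add_apply, Pi.neg_apply, Pi.mul_apply, Pi.inv_apply] at hi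
    have hne : (p.2 i)⁻¹ ≠ 0 := inv_ne_zero (hnz p hp i)
    have : (p.2 i)⁻¹ * (q.1 i - p.1 i) = 0 := by ring_nf; linear_combination hi
    rcases mul_eq_zero.1 this with h | h
    · exact absurd h hne
    · exact (sub_eq_zero.1 h).symm
  -- define t coordinatewise
  set t : Fin m → ℂ := fun i =>
    if h : ∃ p ∈ K, p.2 i ≠ 1 then h.choose.1 i / (h.choose.2 i - 1) else 0 with ht
  -- key identity
  have hD : ∀ p ∈ K, ∀ i : Fin m, p.1 i = p.2 i * t i - t i := by
    intro p hp i
    by_cases hγ : p.2 i = 1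
    · rw [hγ, one_mul, sub_self]
      exact hzero p hp i hγ
    · have hex : ∃ q ∈ K, q.2 i ≠ 1 := ⟨p, hp, hγ⟩
      have htt : t i = hex.choose.1 i / (hex.choose.2 i - 1) := by
        rw [ht]; exact dif_pos hex
      obtain ⟨hqK, hqne⟩ := hex.choose_spec
      set q := hex.choose
      have h1 := hmul p hp q hqK
      have h2 := hmul q hqK p hp
      have heq : p.1 + p.2 * q.1 = q.1 + q.2 * p.1 :=
        hB _ h1 _ h2 (mul_comm _ _)
      have hi := congrFun heq i
      simp only [Pi.add_apply, Pi.mul_apply] at hi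
      have hq1 : q.2 i - 1 ≠ 0 := sub_ne_zero.2 hqne
      rw [htt]
      field_simp
      ring_nf
      linear_combination -hi
  refine ⟨Prod.snd '' K, t, ?_, ⟨_, hone, rfl⟩, ?_, ?_, hcomp.image continuous_snd, ?_⟩
  · rintro γ ⟨p, hp, rfl⟩ i
    exact hsphere p hp i
  · rintro γ ⟨p, hp, rfl⟩ γ' ⟨q, hq, rfl⟩
    exact ⟨_, hmul p hp q hq, rfl⟩
  · rintro γ ⟨p, hp, rfl⟩
    exact ⟨_, hinv p hp, rfl⟩
  · ext p
    constructor
    · intro hp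
      refine ⟨p.2, ⟨p, hp, rfl⟩, ?_⟩
      have h1 : p.1 = p.2 * t - t := by
        funext i
        simpa using hD p hp i
      exact Prod.ext h1 rfl
    · rintro ⟨γ, ⟨q, hq, rfl⟩, rfl⟩
      have h1 : q.1 = q.2 * t - t := by
        funext i
        simpa using hD q hq i
      rw [← h1]
      exact hq
end

section
/- Let β > 1 and let V_β ⊆ {0,…,⌈β−1⌉}^ℤ be the two-sided beta-shift space. If v, w ∈ V_β satisfy w⁺ ≺ v⁺ in the lexicographic order (where v⁺ = (v₁, v₂, …)), then the point v' defined by v'_n = v_n for n ≤ 0 and v'_n = w_n for n > 0 also lies in V_β. -/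
open Filter Topology

/-- The beta-transformation `T_β x = βx (mod 1)`. -/
noncomputable def Tbeta (β : ℝ) : ℝ → ℝ := fun x => Int.fract (β * x)

/-- The beta-expansion of `x ∈ [0,1)`: the digit of index `n+1` is
`e_β(x)_{n+1} = β T_β^n x − T_β^{n+1} x = ⌊β T_β^n x⌋`. -/
noncomputable def ebeta (β : ℝ) (x : ℝ) : ℕ → ℤ := fun n => ⌊β * (Tbeta β)^[n] x⌋

-- auxiliary lemmas
section aux

variable {β : ℝ}

lemma Tbeta_iter_mem {x : ℝ} (hx : 0 ≤ x ∧ x < 1) (k : ℕ) :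
    0 ≤ (Tbeta β)^[k] x ∧ (Tbeta β)^[k] x < 1 := by
  cases k with
  | zero => exact hx
  | succ k =>
    rw [Function.iterate_succ_apply']
    exact ⟨Int.fract_nonneg _, Int.fract_lt_one _⟩

lemma ebeta_step (β : ℝ) (x : ℝ) (k : ℕ) :
    β * (Tbeta β)^[k] x = (ebeta β x k : ℝ) + (Tbeta β)^[k+1] x := by
  rw [Function.iterate_succ_apply']
  show β * (Tbeta β)^[k] x = _ + Int.fract (β * (Tbeta β)^[k] x)
  rw [Int.fract]
  show _ = (⌊β * (Tbeta β)^[k] x⌋ : ℝ) + _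
  ring

lemma ebeta_nonneg (hβ : 1 < β) {x : ℝ} (hx : 0 ≤ x ∧ x < 1) (k : ℕ) :
    0 ≤ ebeta β x k := by
  have h := (Tbeta_iter_mem (β := β) hx k).1
  have hβ0 : (0:ℝ) < β := lt_trans one_pos hβ
  exact Int.floor_nonneg.mpr (by positivity)

lemma ebeta_shift (β : ℝ) (x : ℝ) (ℓ j : ℕ) :
    ebeta β ((Tbeta β)^[ℓ] x) j = ebeta β x (j + ℓ) := by
  simp [ebeta, Function.iterate_add_apply]

lemma partial_sum (hβ : 1 < β) (x : ℝ) (k : ℕ) :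
    x = (∑ j ∈ Finset.range k, (ebeta β x j : ℝ) / β ^ (j+1)) + (Tbeta β)^[k] x / β ^ k := by
  have hβ0 : (0:ℝ) < β := lt_trans one_pos hβ
  induction k with
  | zero => simp
  | succ k ih =>
    rw [Finset.sum_range_succ]
    have h := ebeta_step β x k
    have heq : (Tbeta β)^[k] x / β ^ k = (ebeta β x k : ℝ) / β ^ (k+1) + (Tbeta β)^[k+1] x / β ^ (k+1) := by
      rw [← add_div, ← h, pow_succ]
      field_simp
    nth_rewrite 1 [ih]
    rw [heq]
    ring

lemma lt_of_digit_lt (hβ : 1 < β) {y t : ℝ} (hy : 0 ≤ y ∧ y < 1) (ht : 0 ≤ t ∧ t < 1)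
    (N : ℕ) (hje : ∀ j < N, ebeta β y j = ebeta β t j) (hN : ebeta β y N < ebeta β t N) :
    y < t := by
  have hβ0 : (0:ℝ) < β := lt_trans one_pos hβ
  have h1 := partial_sum hβ t (N+1)
  have h2 := partial_sum hβ y (N+1)
  have hsum : (∑ j ∈ Finset.range (N+1), (ebeta β t j : ℝ) / β ^ (j+1))
      - (∑ j ∈ Finset.range (N+1), (ebeta β y j : ℝ) / β ^ (j+1))
      = ((ebeta β t N : ℝ) - (ebeta β y N : ℝ)) / β ^ (N+1) := by
    rw [← Finset.sum_sub_distrib, Finset.sum_range_succ]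
    rw [Finset.sum_eq_zero, zero_add, div_sub_div_same]
    intro j hj
    rw [hje j (Finset.mem_range.mp hj)]
    ring
  have hd : (1:ℝ) ≤ (ebeta β t N : ℝ) - (ebeta β y N : ℝ) := by
    have h : ebeta β y N + 1 ≤ ebeta β t N := hN
    have := (Int.cast_le (R := ℝ)).mpr h
    push_cast at this; linarith
  have hTy : (Tbeta β)^[N+1] y < 1 := (Tbeta_iter_mem hy (N+1)).2
  have hTt : 0 ≤ (Tbeta β)^[N+1] t := (Tbeta_iter_mem ht (N+1)).1
  have hpow : (0:ℝ) < β ^ (N+1) := by positivity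
  have key : t - y = ((ebeta β t N : ℝ) - (ebeta β y N : ℝ)) / β ^ (N+1)
      + ((Tbeta β)^[N+1] t - (Tbeta β)^[N+1] y) / β ^ (N+1) := by
    rw [← hsum]; nth_rewrite 1 [h1]; nth_rewrite 1 [h2]; ring
  have hA : (1:ℝ) / β ^ (N+1) ≤ ((ebeta β t N : ℝ) - (ebeta β y N : ℝ)) / β ^ (N+1) := by
    gcongr
  have hB : -((1:ℝ) / β ^ (N+1)) < ((Tbeta β)^[N+1] t - (Tbeta β)^[N+1] y) / β ^ (N+1) := by
    rw [← neg_div]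
    exact (div_lt_div_iff_of_pos_right hpow).mpr (by linarith)
  linarith


lemma iter_pow_le (hβ : 1 < β) {x : ℝ} (hx : 0 ≤ x ∧ x < 1) (i d : ℕ) :
    (Tbeta β)^[i + d] x ≤ β ^ d * (Tbeta β)^[i] x := by
  have hβ0 : (0:ℝ) < β := lt_trans one_pos hβ
  induction d with
  | zero => simp
  | succ d ih =>
    have h1 : (Tbeta β)^[i + d + 1] x ≤ β * (Tbeta β)^[i + d] x := by
      have hs := ebeta_step β x (i + d)
      have hnn := ebeta_nonneg hβ hx (i + d)
      have : (0:ℝ) ≤ (ebeta β x (i + d) : ℝ) := by exact_mod_cast hnn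
      linarith
    calc (Tbeta β)^[i + (d+1)] x = (Tbeta β)^[i + d + 1] x := by ring_nf
      _ ≤ β * (Tbeta β)^[i + d] x := h1
      _ ≤ β * (β ^ d * (Tbeta β)^[i] x) := by
          exact mul_le_mul_of_nonneg_left ih (le_of_lt hβ0)
      _ = β ^ (d+1) * (Tbeta β)^[i] x := by ring

lemma splice (hβ : 1 < β) {x y : ℝ} (hx : 0 ≤ x ∧ x < 1) (hy : 0 ≤ y ∧ y < 1)
    (ℓ : ℕ) (hyt : y ≤ (Tbeta β)^[ℓ] x) :
    ∃ z : ℝ, (0 ≤ z ∧ z < 1) ∧ (∀ j < ℓ, ebeta β z j = ebeta β x j) ∧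
      ∀ j : ℕ, ebeta β z (ℓ + j) = ebeta β y j := by
  have hβ0 : (0:ℝ) < β := lt_trans one_pos hβ
  set t := (Tbeta β)^[ℓ] x with ht_def
  have ht : 0 ≤ t ∧ t < 1 := Tbeta_iter_mem hx ℓ
  set z := x + (y - t) / β ^ ℓ with hz_def
  have hpowℓ : (0:ℝ) < β ^ ℓ := by positivity
  have key : ∀ j, j ≤ ℓ →
      ((Tbeta β)^[j] z = (Tbeta β)^[j] x + (y - t) * β ^ j / β ^ ℓ ∧
        ∀ i < j, ebeta β z i = ebeta β x i) := by
    intro j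
    induction j with
    | zero =>
      intro _
      constructor
      · simp [hz_def]
      · intro i hi; omega
    | succ j ih =>
      intro hj1
      have hjℓ : j < ℓ := hj1
      obtain ⟨hTz, hdig⟩ := ih (le_of_lt hjℓ)
      have hA : (0:ℝ) < β ^ (j+1) / β ^ ℓ := by positivity
      -- lower bound on T^[j+1] x
      have hle : t ≤ β ^ (ℓ - (j+1)) * (Tbeta β)^[j+1] x := by
        have h := iter_pow_le hβ hx (j+1) (ℓ - (j+1))
        have he : (j+1) + (ℓ - (j+1)) = ℓ := by omega
        rw [he] at h
        exact h
      have hTlow : t * (β ^ (j+1) / β ^ ℓ) ≤ (Tbeta β)^[j+1] x := by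
        have hpe : β ^ (ℓ - (j+1)) * β ^ (j+1) = β ^ ℓ := by
          rw [← pow_add]; congr 1; omega
        have hpp : (0:ℝ) < β ^ (ℓ - (j+1)) := by positivity
        rw [div_eq_mul_inv, ← mul_assoc]
        rw [mul_inv_le_iff₀ hpowℓ]
        calc t * β ^ (j+1) ≤ (β ^ (ℓ - (j+1)) * (Tbeta β)^[j+1] x) * β ^ (j+1) := by
              exact mul_le_mul_of_nonneg_right hle (by positivity)
          _ = (Tbeta β)^[j+1] x * β ^ ℓ := by rw [← hpe]; ring
      have hTx1 : (Tbeta β)^[j+1] x < 1 := (Tbeta_iter_mem hx (j+1)).2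
      have hr_lo : 0 ≤ (Tbeta β)^[j+1] x + (y - t) * β ^ (j+1) / β ^ ℓ := by
        have : (y - t) * β ^ (j+1) / β ^ ℓ = y * (β ^ (j+1) / β ^ ℓ) - t * (β ^ (j+1) / β ^ ℓ) := by
          ring
        rw [this]
        have hy0 : 0 ≤ y * (β ^ (j+1) / β ^ ℓ) := mul_nonneg hy.1 (le_of_lt hA)
        linarith
      have hr_hi : (Tbeta β)^[j+1] x + (y - t) * β ^ (j+1) / β ^ ℓ < 1 := by
        have hneg : (y - t) * β ^ (j+1) / β ^ ℓ ≤ 0 := by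
          apply div_nonpos_of_nonpos_of_nonneg
          · exact mul_nonpos_of_nonpos_of_nonneg (by linarith) (by positivity)
          · positivity
        linarith
      have hbz : β * (Tbeta β)^[j] z
          = (ebeta β x j : ℝ) + ((Tbeta β)^[j+1] x + (y - t) * β ^ (j+1) / β ^ ℓ) := by
        rw [hTz, mul_add, ebeta_step β x j]
        ring
      have hdigj : ebeta β z j = ebeta β x j := by
        show ⌊β * (Tbeta β)^[j] z⌋ = _
        rw [Int.floor_eq_iff]
        constructor
        · rw [hbz]; linarith
        · rw [hbz]; push_cast; linarith
      constructor
      · rw [Function.iterate_succ_apply']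
        show Int.fract (β * (Tbeta β)^[j] z) = _
        rw [Int.fract]
        have : ⌊β * (Tbeta β)^[j] z⌋ = ebeta β x j := hdigj
        rw [this, hbz, Function.iterate_succ_apply']
        push_cast
        ring
      · intro i hi
        rcases Nat.lt_succ_iff_lt_or_eq.mp hi with h | h
        · exact hdig i h
        · rw [h]; exact hdigj
  obtain ⟨hTℓ, hdig⟩ := key ℓ le_rfl
  have hTz : (Tbeta β)^[ℓ] z = y := by
    rw [hTℓ, ← ht_def]
    field_simp
    ring
  have hz0 : 0 ≤ z := by
    have hps := partial_sum hβ x ℓ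
    have hsum_nn : 0 ≤ ∑ j ∈ Finset.range ℓ, (ebeta β x j : ℝ) / β ^ (j+1) := by
      apply Finset.sum_nonneg
      intro j _
      have := ebeta_nonneg hβ hx j
      have h0 : (0:ℝ) ≤ (ebeta β x j : ℝ) := by exact_mod_cast this
      exact div_nonneg h0 (by positivity)
    have : z = (∑ j ∈ Finset.range ℓ, (ebeta β x j : ℝ) / β ^ (j+1)) + y / β ^ ℓ := by
      rw [hz_def]
      nth_rewrite 1 [hps]
      rw [← ht_def]
      ring
    rw [this]
    have : 0 ≤ y / β ^ ℓ := div_nonneg hy.1 (le_of_lt hpowℓ)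
    linarith
  have hz1 : z < 1 := by
    have : (y - t) / β ^ ℓ ≤ 0 :=
      div_nonpos_of_nonpos_of_nonneg (by linarith) (le_of_lt hpowℓ)
    have := hx.2
    rw [hz_def]; linarith
  refine ⟨z, ⟨hz0, hz1⟩, hdig, ?_⟩
  intro j
  have := ebeta_shift β z ℓ j
  rw [hTz] at this
  rw [add_comm ℓ j, ← this]
end aux

/-- The one-sided beta-shift space: the closure (in the product topology) of the set of
beta-expansions of points of `[0,1)`. -/
def VbetaPlus (β : ℝ) : Set (ℕ → ℤ) :=
  closure {e | ∃ x : ℝ, 0 ≤ x ∧ x < 1 ∧ e = ebeta β x}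

section aux2
variable {β : ℝ}
lemma mem_VbetaPlus_iff (β : ℝ) (e : ℕ → ℤ) :
    e ∈ VbetaPlus β ↔ ∀ m : ℕ, ∃ x : ℝ, 0 ≤ x ∧ x < 1 ∧ ∀ j < m, ebeta β x j = e j := by
  constructor
  · intro he m
    have hU : {q : ℕ → ℤ | ∀ j < m, q j = e j} ∈ nhds e := by
      have : {q : ℕ → ℤ | ∀ j < m, q j = e j}
          = ⋂ j ∈ Finset.range m, (fun q : ℕ → ℤ => q j) ⁻¹' {e j} := by
        ext q; simp [Finset.mem_range]
      rw [this]
      apply (Filter.biInter_finset_mem _).mpr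
      intro j _
      exact ContinuousAt.preimage_mem_nhds (continuous_apply j).continuousAt
        ((isOpen_discrete _).mem_nhds rfl)
    obtain ⟨q, hq1, hq2⟩ := mem_closure_iff_nhds.mp he _ hU
    obtain ⟨x, hx0, hx1, rfl⟩ := hq2
    exact ⟨x, hx0, hx1, hq1⟩
  · intro h
    choose xf h0 h1 hagree using h
    apply mem_closure_of_tendsto (f := fun m => ebeta β (xf m)) (b := Filter.atTop)
    · rw [tendsto_pi_nhds]
      intro j
      apply Filter.Tendsto.congr' (f₁ := fun _ => e j)
      · filter_upwards [Filter.eventually_ge_atTop (j+1)] with m hm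
        exact (hagree m j (by omega)).symm
      · exact tendsto_const_nhds
    · filter_upwards with m
      exact ⟨xf m, h0 m, h1 m, rfl⟩

end aux2

/-- For `v ∈ ℤ^ℤ`, the one-sided sequence `v⁺ = (v₁, v₂, …)`. -/
def plusPart (v : ℤ → ℤ) : ℕ → ℤ := fun n => v ((n : ℤ) + 1)

/-- The two-sided beta-shift space
`V_β = {v : (σ̄ⁿ v)⁺ ∈ V_β⁺ for every n ∈ ℤ}`. -/
def Vbeta (β : ℝ) : Set (ℤ → ℤ) :=
  {v | ∀ n : ℤ, (fun k : ℕ => v (n + (k : ℤ) + 1)) ∈ VbetaPlus β}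

/-- Strict lexicographic order on one-sided integer sequences. -/
def lexLt (w v : ℕ → ℤ) : Prop :=
  ∃ N : ℕ, (∀ k < N, w k = v k) ∧ w N < v N

/-- if `v, w ∈ V_β` and `w⁺ ≺ v⁺` lexicographically, then the splicing
`v' = (..., v_{-1}, v₀, w₁, w₂, ...)` lies in `V_β`. -/
theorem beta_shift_splicing
    (β : ℝ) (hβ : 1 < β) (v w : ℤ → ℤ)
    (hv : v ∈ Vbeta β) (hw : w ∈ Vbeta β)
    (hlt : lexLt (plusPart w) (plusPart v)) :
    (fun n : ℤ => if n ≤ 0 then v n else w n) ∈ Vbeta β := by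
  intro n
  by_cases hn : 0 ≤ n
  · have hfun : (fun k : ℕ => (fun n : ℤ => if n ≤ 0 then v n else w n) (n + (k : ℤ) + 1))
        = fun k : ℕ => w (n + (k : ℤ) + 1) := by
      funext k
      simp only
      rw [if_neg (by omega)]
    rw [hfun]
    exact hw n
  · push_neg at hn
    set ℓ : ℕ := (-n).toNat with hℓ_def
    have hnℓ : n = -(ℓ : ℤ) := by omega
    obtain ⟨N, hNe, hNlt⟩ := hlt
    rw [mem_VbetaPlus_iff]
    intro m
    set M : ℕ := ℓ + m + N + 1 with hM_def
    obtain ⟨x, hx0, hx1, hxd⟩ := (mem_VbetaPlus_iff β _).mp (hv n) M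
    obtain ⟨y, hy0, hy1, hyd⟩ := (mem_VbetaPlus_iff β _).mp (hw 0) M
    set t := (Tbeta β)^[ℓ] x with ht_def
    have ht : 0 ≤ t ∧ t < 1 := Tbeta_iter_mem ⟨hx0, hx1⟩ ℓ
    have htd : ∀ j, j + ℓ < M → ebeta β t j = v ((j : ℤ) + 1) := by
      intro j hj
      rw [ht_def, ebeta_shift β x ℓ j, hxd _ hj]
      congr 1
      push_cast
      omega
    have hyd' : ∀ j, j < M → ebeta β y j = w ((j : ℤ) + 1) := by
      intro j hj
      rw [hyd j hj]
      congr 1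
      omega
    have hylt : y < t := by
      apply lt_of_digit_lt hβ ⟨hy0, hy1⟩ ht N
      · intro j hj
        rw [hyd' j (by omega), htd j (by omega)]
        exact hNe j hj
      · rw [hyd' N (by omega), htd N (by omega)]
        exact hNlt
    obtain ⟨z, hz01, hzx, hzy⟩ := splice hβ ⟨hx0, hx1⟩ ⟨hy0, hy1⟩ ℓ (le_of_lt hylt)
    refine ⟨z, hz01.1, hz01.2, ?_⟩
    intro j hj
    simp only
    by_cases hjℓ : j < ℓ
    · rw [if_pos (by omega), hzx j hjℓ, hxd j (by omega)]
    · push_neg at hjℓ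
      rw [if_neg (by omega)]
      have hdecomp : j = ℓ + (j - ℓ) := by omega
      rw [hdecomp, hzy (j - ℓ), hyd' (j - ℓ) (by omega)]
      congr 1
      omega
end
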